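/- arXiv:2604.11366 — 6 statements merged into one kernel-verified Lean document; each statement's English description precedes it below -/
import Mathlib

section
/- Let t be a positive integer and let G be a graph on n vertices containing no subgraph isomorphic to B_t. Then Σ_{S ⊆ V(G), |S| = t, S good} d(S)·(d(S) − 1) ≥ Σ_{u ∈ V(G)} d(u)² − 2(4t−1)·e(G) − (t−1)·n². -/
open SimpleGraph

/-- `F` is contained in `G` as a subgraph: there is an injective map preserving adjacency. -/
def ContainsCopy {α β : Type*} (F : SimpleGraph α) (G : SimpleGraph β) : Prop :=
  ∃ f : α → β, Function.Injective f ∧ ∀ ⦃a b : α⦄, F.Adj a b → G.Adj (f a) (f b)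

/-- `Bgraph t = K₂ □ S_t`, the Cartesian product of an edge and a star with `t` edges. -/
def Bgraph (t : ℕ) : SimpleGraph (Fin 2 × (Fin 1 ⊕ Fin t)) :=
  (⊤ : SimpleGraph (Fin 2)).boxProd (completeBipartiteGraph (Fin 1) (Fin t))

/-- The codegree of a set `S`: the number of common neighbors of all vertices of `S`. -/
noncomputable def codeg {V : Type*} (G : SimpleGraph V) (S : Finset V) : ℕ :=
  {v : V | ∀ u ∈ S, G.Adj u v}.ncard

section Helpers
variable {n : ℕ} (G : SimpleGraph (Fin n)) [DecidableRel G.Adj]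

def Zf (S : Finset (Fin n)) : Finset (Fin n) :=
  Finset.univ.filter (fun v => ∀ s ∈ S, G.Adj s v)

def Wf (x y : Fin n) : Finset (Fin n) :=
  Finset.univ.filter (fun v => G.Adj x v ∧ G.Adj y v)

variable {G}

lemma mem_Zf {S : Finset (Fin n)} {v : Fin n} : v ∈ Zf G S ↔ ∀ s ∈ S, G.Adj s v := by
  simp [Zf]

lemma mem_Wf {x y v : Fin n} : v ∈ Wf G x y ↔ G.Adj x v ∧ G.Adj y v := by
  simp [Wf]

lemma codeg_eq_Zf (S : Finset (Fin n)) : codeg G S = (Zf G S).card := by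
  have h : {v : Fin n | ∀ u ∈ S, G.Adj u v} = ↑(Zf G S) := by
    ext v; simp [mem_Zf]
  rw [codeg, h, Set.ncard_coe_finset]

lemma subset_Wf_iff {S : Finset (Fin n)} {x y : Fin n} :
    S ⊆ Wf G x y ↔ x ∈ Zf G S ∧ y ∈ Zf G S := by
  constructor
  · intro h
    exact ⟨mem_Zf.2 fun s hs => ((mem_Wf.1 (h hs)).1).symm,
           mem_Zf.2 fun s hs => ((mem_Wf.1 (h hs)).2).symm⟩
  · rintro ⟨h1, h2⟩ s hs
    exact mem_Wf.2 ⟨(mem_Zf.1 h1 s hs).symm, (mem_Zf.1 h2 s hs).symm⟩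

set_option linter.unusedSectionVars false in
lemma buildCopy {t : ℕ} {x u : Fin n} (hxu : G.Adj x u) (a b : Fin t → Fin n)
    (ha : Function.Injective a) (hb : Function.Injective b)
    (hab : ∀ i j, a i ≠ b j)
    (hax : ∀ j, a j ≠ x) (hau : ∀ j, a j ≠ u) (hbx : ∀ j, b j ≠ x) (hbu : ∀ j, b j ≠ u)
    (hxa : ∀ j, G.Adj x (a j)) (hub : ∀ j, G.Adj u (b j)) (hadjab : ∀ j, G.Adj (a j) (b j)) :
    ContainsCopy (Bgraph t) G := by
  have hne : x ≠ u := hxu.ne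
  have hne' : u ≠ x := hxu.ne'
  have hax' : ∀ j, x ≠ a j := fun j => (hax j).symm
  have hau' : ∀ j, u ≠ a j := fun j => (hau j).symm
  have hbx' : ∀ j, x ≠ b j := fun j => (hbx j).symm
  have hbu' : ∀ j, u ≠ b j := fun j => (hbu j).symm
  have hab' : ∀ i j, b j ≠ a i := fun i j => (hab i j).symm
  have haeq : ∀ i j, a i = a j ↔ i = j := fun i j => ha.eq_iff
  have hbeq : ∀ i j, b i = b j ↔ i = j := fun i j => hb.eq_iff
  have hxa' : ∀ j, G.Adj (a j) x := fun j => (hxa j).symm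
  have hub' : ∀ j, G.Adj (b j) u := fun j => (hub j).symm
  have hadjab' : ∀ j, G.Adj (b j) (a j) := fun j => (hadjab j).symm
  have hxu' : G.Adj u x := hxu.symm
  refine ⟨fun p => match p with
    | (i, Sum.inl _) => if i = 0 then x else u
    | (i, Sum.inr j) => if i = 0 then a j else b j, ?_, ?_⟩
  · rintro ⟨i, w | w⟩ ⟨i', w' | w'⟩ h <;>
      fin_cases i <;> fin_cases i' <;>
      simp_all [Prod.ext_iff, eq_iff_true_of_subsingleton]
  · rintro ⟨i, w | w⟩ ⟨i', w' | w'⟩ h <;>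
      rw [Bgraph, boxProd_adj] at h <;>
      fin_cases i <;> fin_cases i' <;>
      simp_all [eq_iff_true_of_subsingleton]

lemma lemE {t : ℕ} (hfree : ¬ ContainsCopy (Bgraph t) G) {x u : Fin n} (hxu : G.Adj x u) :
    (Finset.univ.filter (fun y => y ≠ x ∧ ∃ S : Finset (Fin n),
        S.card = t ∧ u ∈ S ∧ S ⊆ Wf G x y ∧ (Zf G S).card ≤ t)).card ≤ 3 * t - 3 := by
  classical
  set Y := (Finset.univ.filter (fun y => y ≠ x ∧ ∃ S : Finset (Fin n),
      S.card = t ∧ u ∈ S ∧ S ⊆ Wf G x y ∧ (Zf G S).card ≤ t)) with hYdef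
  by_contra hcon
  push_neg at hcon
  have hYne : Y.Nonempty := Finset.card_pos.1 (by omega)
  have hmemY : ∀ y ∈ Y, y ≠ x ∧ ∃ S : Finset (Fin n),
      S.card = t ∧ u ∈ S ∧ S ⊆ Wf G x y ∧ (Zf G S).card ≤ t := by
    intro y hy
    exact (Finset.mem_filter.1 hy).2
  have ht2 : 2 ≤ t := by
    obtain ⟨y, hy⟩ := hYne
    obtain ⟨hyx, S, hScard, huS, hSW, hSbad⟩ := hmemY y hy
    obtain ⟨hxZ, hyZ⟩ := subset_Wf_iff.1 hSW
    have : ({x, y} : Finset (Fin n)) ⊆ Zf G S := by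
      intro v hv
      rcases Finset.mem_insert.1 hv with rfl | hv
      · exact hxZ
      · rwa [Finset.mem_singleton.1 hv]
    have h2 : 2 ≤ (Zf G S).card := by
      calc 2 = ({x, y} : Finset (Fin n)).card := (Finset.card_pair hyx.symm).symm
        _ ≤ (Zf G S).card := Finset.card_le_card this
    omega
  -- choose a bad set for each y ∈ Y
  have hch : ∀ y : Fin n, ∃ S : Finset (Fin n), y ∈ Y →
      S.card = t ∧ u ∈ S ∧ S ⊆ Wf G x y ∧ (Zf G S).card ≤ t := by
    intro y
    by_cases hy : y ∈ Y
    · obtain ⟨-, S, hS⟩ := hmemY y hy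
      exact ⟨S, fun _ => hS⟩
    · exact ⟨∅, fun h => absurd h hy⟩
  choose Sf hSf using hch
  -- clean systems of pairs
  let Clean : Finset (Fin n × Fin n) → Prop := fun P =>
    (∀ p ∈ P, p.2 ∈ Y ∧ p.1 ∈ (Sf p.2).erase u) ∧
    (∀ p ∈ P, ∀ q ∈ P, p ≠ q → p.1 ≠ q.1 ∧ p.2 ≠ q.2) ∧
    (∀ p ∈ P, ∀ q ∈ P, p.1 ≠ q.2)
  -- a clean system of size t yields a copy of Bgraph t
  have hcopy : ∀ Q : Finset (Fin n × Fin n), Clean Q → Q.card = t → False := by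
    intro Q hQ hQcard
    obtain ⟨hQ1, hQ2, hQ3⟩ := hQ
    let σ : Fin t → Fin n × Fin n := fun j => (Q.equivFin.symm (Fin.cast hQcard.symm j)).1
    have hσQ : ∀ j, σ j ∈ Q := fun j => (Q.equivFin.symm _).2
    have hσinj : Function.Injective σ :=
      Subtype.val_injective.comp ((Q.equivFin.symm.injective).comp (Fin.cast_injective _))
    set a : Fin t → Fin n := fun j => (σ j).1 with hadef
    set b : Fin t → Fin n := fun j => (σ j).2 with hbdef
    have hbY : ∀ j, b j ∈ Y := fun j => (hQ1 _ (hσQ j)).1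
    have haS : ∀ j, a j ∈ (Sf (b j)).erase u := fun j => (hQ1 _ (hσQ j)).2
    have hSfb : ∀ j, (Sf (b j)).card = t ∧ u ∈ Sf (b j) ∧ Sf (b j) ⊆ Wf G x (b j) ∧
        (Zf G (Sf (b j))).card ≤ t := fun j => hSf _ (hbY j)
    have haW : ∀ j, a j ∈ Wf G x (b j) := fun j => (hSfb j).2.2.1 (Finset.mem_of_mem_erase (haS j))
    have huW : ∀ j, u ∈ Wf G x (b j) := fun j => (hSfb j).2.2.1 (hSfb j).2.1
    refine hfree (buildCopy hxu a b ?_ ?_ ?_ ?_ ?_ ?_ ?_ ?_ ?_ ?_)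
    · intro i j h
      by_contra hne
      exact (hQ2 _ (hσQ i) _ (hσQ j) (hσinj.ne hne)).1 h
    · intro i j h
      by_contra hne
      exact (hQ2 _ (hσQ i) _ (hσQ j) (hσinj.ne hne)).2 h
    · exact fun i j => hQ3 _ (hσQ i) _ (hσQ j)
    · exact fun j => ((mem_Wf.1 (haW j)).1).ne'
    · exact fun j => Finset.ne_of_mem_erase (haS j)
    · exact fun j => (hmemY _ (hbY j)).1
    · exact fun j => ((mem_Wf.1 (huW j)).2).ne
    · exact fun j => (mem_Wf.1 (haW j)).1
    · exact fun j => ((mem_Wf.1 (huW j)).2).symm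
    · exact fun j => ((mem_Wf.1 (haW j)).2).symm
  -- take a maximum clean system
  obtain ⟨P, hPmem, hPmax⟩ := Finset.exists_max_image
    ((Finset.univ : Finset (Finset (Fin n × Fin n))).filter Clean) Finset.card
    ⟨∅, Finset.mem_filter.2 ⟨Finset.mem_univ _, by
      refine ⟨?_, ?_, ?_⟩ <;> simp⟩⟩
  have hPClean : Clean P := (Finset.mem_filter.1 hPmem).2
  rcases le_or_gt t P.card with hPc | hPc
  · -- extract a clean subsystem of size t
    obtain ⟨Q, hQP, hQcard⟩ := Finset.exists_subset_card_eq hPc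
    exact hcopy Q ⟨fun p hp => hPClean.1 p (hQP hp),
      fun p hp q hq => hPClean.2.1 p (hQP hp) q (hQP hq),
      fun p hp q hq => hPClean.2.2 p (hQP hp) q (hQP hq)⟩ hQcard
  · -- maximality: unmatched y have their bad set inside U
    set U := P.image Prod.fst ∪ P.image Prod.snd with hUdef
    have hUcard : U.card ≤ 2 * P.card := by
      calc U.card ≤ (P.image Prod.fst).card + (P.image Prod.snd).card := Finset.card_union_le _ _
        _ ≤ P.card + P.card := Nat.add_le_add (Finset.card_image_le) (Finset.card_image_le)
        _ = 2 * P.card := (Nat.two_mul _).symm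
    have hmax : ∀ y ∈ Y, y ∉ U → (Sf y).erase u ⊆ U := by
      intro y hy hyU s hs
      by_contra hsU
      have hSfy := hSf y hy
      have hsy : s ≠ y := by
        have : s ∈ Wf G x y := hSfy.2.2.1 (Finset.mem_of_mem_erase hs)
        exact ((mem_Wf.1 this).2).ne'
      have hnotP : (s, y) ∉ P := by
        intro hmem
        exact hyU (Finset.mem_union.2 (Or.inr (Finset.mem_image.2 ⟨_, hmem, rfl⟩)))
      have hclean' : Clean (insert (s, y) P) := by
        have hfstU : ∀ p ∈ P, p.1 ∈ U := fun p hp =>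
          Finset.mem_union.2 (Or.inl (Finset.mem_image.2 ⟨_, hp, rfl⟩))
        have hsndU : ∀ p ∈ P, p.2 ∈ U := fun p hp =>
          Finset.mem_union.2 (Or.inr (Finset.mem_image.2 ⟨_, hp, rfl⟩))
        refine ⟨?_, ?_, ?_⟩
        · intro p hp
          rcases Finset.mem_insert.1 hp with rfl | hp
          · exact ⟨hy, hs⟩
          · exact hPClean.1 p hp
        · intro p hp q hq hpq
          rcases Finset.mem_insert.1 hp with rfl | hp <;>
            rcases Finset.mem_insert.1 hq with rfl | hq
          · exact absurd rfl hpq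
          · exact ⟨fun h => hsU ((show s = q.1 from h) ▸ hfstU q hq),
              fun h => hyU ((show y = q.2 from h) ▸ hsndU q hq)⟩
          · exact ⟨fun h => hsU ((show s = p.1 from h.symm) ▸ hfstU p hp),
              fun h => hyU ((show y = p.2 from h.symm) ▸ hsndU p hp)⟩
          · exact hPClean.2.1 p hp q hq hpq
        · intro p hp q hq
          rcases Finset.mem_insert.1 hp with rfl | hp <;>
            rcases Finset.mem_insert.1 hq with rfl | hq
          · exact hsy
          · exact fun h => hsU ((show s = q.2 from h) ▸ hsndU q hq)
          · exact fun h => hyU ((show p.1 = y from h) ▸ hfstU p hp)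
          · exact hPClean.2.2 p hp q hq
      have hle := hPmax _ (Finset.mem_filter.2 ⟨Finset.mem_univ _, hclean'⟩)
      rw [Finset.card_insert_of_notMem hnotP] at hle
      omega
    -- the unmatched part of Y is large
    have hY0 : t ≤ (Y \ U).card := by
      have h1 := Finset.le_card_sdiff U Y
      omega
    obtain ⟨Y₁, hY₁sub, hY₁card⟩ := Finset.exists_subset_card_eq hY0
    have hY₁Y : ∀ y ∈ Y₁, y ∈ Y := fun y hy => (Finset.mem_sdiff.1 (hY₁sub hy)).1
    have hY₁U : ∀ y ∈ Y₁, y ∉ U := fun y hy => (Finset.mem_sdiff.1 (hY₁sub hy)).2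
    -- Hall's condition for the system y ↦ (Sf y).erase u
    let A : {y // y ∈ Y₁} → Finset (Fin n) := fun y => (Sf y.1).erase u
    have hAcard : ∀ y : {y // y ∈ Y₁}, (A y).card = t - 1 := by
      intro y
      have := hSf y.1 (hY₁Y y.1 y.2)
      rw [Finset.card_erase_of_mem this.2.1, this.1]
    have hAU : ∀ y : {y // y ∈ Y₁}, A y ⊆ U := fun y => hmax y.1 (hY₁Y y.1 y.2) (hY₁U y.1 y.2)
    have hall : ∀ I : Finset {y // y ∈ Y₁}, I.card ≤ (I.biUnion A).card := by
      intro I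
      by_cases hI : ∀ p ∈ I, ∀ q ∈ I, A p = A q
      · rcases I.eq_empty_or_nonempty with rfl | ⟨p₀, hp₀⟩
        · simp
        · have hbi : I.biUnion A = A p₀ := by
            apply Finset.Subset.antisymm
            · exact Finset.biUnion_subset.2 fun q hq => (hI q hq p₀ hp₀) ▸ Finset.Subset.refl _
            · exact Finset.subset_biUnion_of_mem A hp₀
          have hSeq : ∀ q ∈ I, Sf q.1 = Sf p₀.1 := by
            intro q hq
            have h1 : (Sf q.1).erase u = (Sf p₀.1).erase u := hI q hq p₀ hp₀
            have h2 := (hSf q.1 (hY₁Y _ q.2)).2.1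
            have h3 := (hSf p₀.1 (hY₁Y _ p₀.2)).2.1
            rw [← Finset.insert_erase h2, h1, Finset.insert_erase h3]
          set S := Sf p₀.1 with hSdef
          have hmapZ : ∀ q ∈ I, q.1 ∈ (Zf G S).erase x := by
            intro q hq
            have hq' := hSf q.1 (hY₁Y _ q.2)
            have := (subset_Wf_iff.1 hq'.2.2.1).2
            rw [hSeq q hq] at this
            exact Finset.mem_erase.2 ⟨(hmemY _ (hY₁Y _ q.2)).1, this⟩
          have hinj : Function.Injective (fun q : { y // y ∈ Y₁ } => q.1) := by
            intro q q' h
            exact Subtype.ext h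
          have hcard1 : I.card ≤ ((Zf G S).erase x).card := by
            rw [← Finset.card_image_of_injective I hinj]
            apply Finset.card_le_card
            intro v hv
            obtain ⟨q, hq, rfl⟩ := Finset.mem_image.1 hv
            exact hmapZ q hq
          have hxZ : x ∈ Zf G S := (subset_Wf_iff.1 (hSf p₀.1 (hY₁Y _ p₀.2)).2.2.1).1
          have hZt : (Zf G S).card ≤ t := (hSf p₀.1 (hY₁Y _ p₀.2)).2.2.2
          rw [Finset.card_erase_of_mem hxZ] at hcard1
          rw [hbi, hAcard p₀]
          omega
      · push_neg at hI
        obtain ⟨p, hp, q, hq, hpq⟩ := hI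
        have hsub : ¬ (A q ⊆ A p) := by
          intro hsub
          exact hpq (Finset.eq_of_subset_of_card_le hsub (by rw [hAcard, hAcard])).symm
        obtain ⟨z, hzq, hzp⟩ := Finset.not_subset.1 hsub
        have hins : insert z (A p) ⊆ I.biUnion A := by
          intro v hv
          rcases Finset.mem_insert.1 hv with rfl | hv
          · exact Finset.mem_biUnion.2 ⟨q, hq, hzq⟩
          · exact Finset.mem_biUnion.2 ⟨p, hp, hv⟩
        have h1 : t ≤ (I.biUnion A).card := by
          have := Finset.card_le_card hins
          rw [Finset.card_insert_of_notMem hzp, hAcard] at this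
          omega
        have h2 : I.card ≤ t := by
          have := Finset.card_le_univ I
          rwa [Fintype.card_coe, hY₁card] at this
        omega
    rw [Finset.all_card_le_biUnion_card_iff_exists_injective] at hall
    obtain ⟨f, hfinj, hfA⟩ := hall
    -- build the clean system of size t
    set Q := Finset.univ.image (fun y : {y // y ∈ Y₁} => (f y, y.1)) with hQdef
    have hinjQ : Function.Injective (fun y : {y // y ∈ Y₁} => (f y, y.1)) := by
      intro y y' h
      exact hfinj (congrArg Prod.fst h)
    have hQcard : Q.card = t := by
      rw [hQdef, Finset.card_image_of_injective _ hinjQ, Finset.card_univ, Fintype.card_coe,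
        hY₁card]
    have hmemQ : ∀ p ∈ Q, ∃ y : {y // y ∈ Y₁}, p = (f y, y.1) := by
      intro p hp
      obtain ⟨y, -, rfl⟩ := Finset.mem_image.1 hp
      exact ⟨y, rfl⟩
    refine hcopy Q ⟨?_, ?_, ?_⟩ hQcard
    · intro p hp
      obtain ⟨y, rfl⟩ := hmemQ p hp
      exact ⟨hY₁Y _ y.2, hfA y⟩
    · intro p hp q hq hpq
      obtain ⟨y, rfl⟩ := hmemQ p hp
      obtain ⟨y', rfl⟩ := hmemQ q hq
      have hyy : y ≠ y' := fun h => hpq (by rw [h])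
      exact ⟨fun h => hyy (hfinj h), fun h => hyy (Subtype.ext h)⟩
    · intro p hp q hq
      obtain ⟨y, rfl⟩ := hmemQ p hp
      obtain ⟨y', rfl⟩ := hmemQ q hq
      intro h
      exact hY₁U _ y'.2 ((show (y' : Fin n) = f y from h.symm) ▸ hAU y (hfA y))

lemma claim1 {t : ℕ} (ht : 1 ≤ t) (x y : Fin n) :
    (Wf G x y).card ≤
      (((Wf G x y).powersetCard t).filter (fun S => t + 1 ≤ (Zf G S).card)).card + (t - 1)
      + (Finset.univ.filter (fun u : Fin n => ∃ S : Finset (Fin n),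
          S.card = t ∧ u ∈ S ∧ S ⊆ Wf G x y ∧ (Zf G S).card ≤ t)).card := by
  classical
  set Vb := (Finset.univ.filter (fun u : Fin n => ∃ S : Finset (Fin n),
      S.card = t ∧ u ∈ S ∧ S ⊆ Wf G x y ∧ (Zf G S).card ≤ t)) with hVb
  have h1 : (Wf G x y).card ≤ (Wf G x y \ Vb).card + Vb.card :=
    Finset.card_le_card_sdiff_add_card
  by_cases hsmall : (Wf G x y \ Vb).card ≤ t - 1
  · omega
  · push_neg at hsmall
    obtain ⟨T₀, hT₀sub, hT₀card⟩ := Finset.exists_subset_card_eq (le_of_lt hsmall)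
    have hinj : Set.InjOn (fun u => insert u T₀) ↑((Wf G x y \ Vb) \ T₀) := by
      intro a ha b hb hab
      have ha' : a ∉ T₀ := (Finset.mem_sdiff.1 ha).2
      have h2 : a ∈ insert b T₀ := by
        rw [← (show insert a T₀ = insert b T₀ from hab)]
        exact Finset.mem_insert_self _ _
      rcases Finset.mem_insert.1 h2 with h | h
      · exact h
      · exact absurd h ha'
    have hmaps : ∀ u ∈ (Wf G x y \ Vb) \ T₀, insert u T₀ ∈
        ((Wf G x y).powersetCard t).filter (fun S => t + 1 ≤ (Zf G S).card) := by
      intro u hu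
      have huWg : u ∈ Wf G x y \ Vb := (Finset.mem_sdiff.1 hu).1
      have huT : u ∉ T₀ := (Finset.mem_sdiff.1 hu).2
      have huW : u ∈ Wf G x y := (Finset.mem_sdiff.1 huWg).1
      have hsub : insert u T₀ ⊆ Wf G x y := by
        intro v hv
        rcases Finset.mem_insert.1 hv with rfl | hv
        · exact huW
        · exact (Finset.mem_sdiff.1 (hT₀sub hv)).1
      have hcard : (insert u T₀).card = t := by
        rw [Finset.card_insert_of_notMem huT, hT₀card]
        omega
      refine Finset.mem_filter.2 ⟨Finset.mem_powersetCard.2 ⟨hsub, hcard⟩, ?_⟩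
      by_contra hbad
      push_neg at hbad
      have : u ∈ Vb := Finset.mem_filter.2 ⟨Finset.mem_univ _,
        ⟨insert u T₀, hcard, Finset.mem_insert_self _ _, hsub, by omega⟩⟩
      exact (Finset.mem_sdiff.1 huWg).2 this
    have h2 : ((Wf G x y \ Vb) \ T₀).card ≤
        (((Wf G x y).powersetCard t).filter (fun S => t + 1 ≤ (Zf G S).card)).card :=
      Finset.card_le_card_of_injOn _ hmaps hinj
    have h3 : (Wf G x y \ Vb).card = ((Wf G x y \ Vb) \ T₀).card + T₀.card :=
      (Finset.card_sdiff_add_card_eq_card hT₀sub).symm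
    omega

lemma stepA : ∑ p ∈ Finset.univ ×ˢ Finset.univ, (Wf G p.1 p.2).card
    = ∑ v : Fin n, G.degree v * G.degree v := by
  classical
  have h1 : ∀ p : Fin n × Fin n, (Wf G p.1 p.2).card
      = ∑ v : Fin n, if G.Adj p.1 v ∧ G.Adj p.2 v then 1 else 0 := by
    intro p; rw [Wf, Finset.card_filter]
  have hfil : ∀ v : Fin n, (Finset.univ.filter (fun a => G.Adj a v)) = G.neighborFinset v := by
    intro v
    ext a
    simp [SimpleGraph.mem_neighborFinset, G.adj_comm]
  calc ∑ p ∈ Finset.univ ×ˢ Finset.univ, (Wf G p.1 p.2).card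
      = ∑ p ∈ Finset.univ ×ˢ Finset.univ, ∑ v : Fin n,
          if G.Adj p.1 v ∧ G.Adj p.2 v then 1 else 0 := Finset.sum_congr rfl (fun p _ => h1 p)
    _ = ∑ v : Fin n, ∑ p ∈ Finset.univ ×ˢ Finset.univ,
          if G.Adj p.1 v ∧ G.Adj p.2 v then 1 else 0 := Finset.sum_comm
    _ = ∑ v : Fin n, G.degree v * G.degree v := by
        refine Finset.sum_congr rfl (fun v _ => ?_)
        rw [← Finset.card_filter]
        have hp : (Finset.univ ×ˢ Finset.univ).filter
            (fun i : Fin n × Fin n => G.Adj i.1 v ∧ G.Adj i.2 v)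
            = (Finset.univ.filter (fun a => G.Adj a v)) ×ˢ
              (Finset.univ.filter (fun a => G.Adj a v)) := by
          ext ⟨a, b⟩
          simp [Finset.mem_filter, Finset.mem_product]
        rw [hp, Finset.card_product, hfil v]
        rfl

lemma stepD {t : ℕ} : ∑ p ∈ (Finset.univ : Finset (Fin n)).offDiag, 
    (((Wf G p.1 p.2).powersetCard t).filter (fun S => t + 1 ≤ (Zf G S).card)).card
    = ∑ S ∈ ((Finset.univ : Finset (Fin n)).powersetCard t).filter
        (fun S => t + 1 ≤ (Zf G S).card), (Zf G S).card * ((Zf G S).card - 1) := by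
  classical
  set goodAll := ((Finset.univ : Finset (Fin n)).powersetCard t).filter
    (fun S => t + 1 ≤ (Zf G S).card) with hgoodAll
  have h1 : ∀ p : Fin n × Fin n, ((Wf G p.1 p.2).powersetCard t).filter
      (fun S => t + 1 ≤ (Zf G S).card) = goodAll.filter (fun S => S ⊆ Wf G p.1 p.2) := by
    intro p
    ext S
    simp only [hgoodAll, Finset.mem_filter, Finset.mem_powersetCard]
    constructor
    · rintro ⟨⟨hsub, hcard⟩, hgood⟩
      exact ⟨⟨⟨Finset.subset_univ _, hcard⟩, hgood⟩, hsub⟩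
    · rintro ⟨⟨⟨-, hcard⟩, hgood⟩, hsub⟩
      exact ⟨⟨hsub, hcard⟩, hgood⟩
  calc ∑ p ∈ (Finset.univ : Finset (Fin n)).offDiag,
        (((Wf G p.1 p.2).powersetCard t).filter (fun S => t + 1 ≤ (Zf G S).card)).card
      = ∑ p ∈ (Finset.univ : Finset (Fin n)).offDiag, ∑ S ∈ goodAll,
          if S ⊆ Wf G p.1 p.2 then 1 else 0 := by
        refine Finset.sum_congr rfl (fun p _ => ?_)
        rw [h1 p, Finset.card_filter]
    _ = ∑ S ∈ goodAll, ∑ p ∈ (Finset.univ : Finset (Fin n)).offDiag,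
          if S ⊆ Wf G p.1 p.2 then 1 else 0 := Finset.sum_comm
    _ = ∑ S ∈ goodAll, (Zf G S).card * ((Zf G S).card - 1) := by
        refine Finset.sum_congr rfl (fun S _ => ?_)
        rw [← Finset.card_filter]
        have h2 : (Finset.univ : Finset (Fin n)).offDiag.filter (fun p => S ⊆ Wf G p.1 p.2)
            = (Zf G S).offDiag := by
          ext ⟨a, b⟩
          simp only [Finset.mem_filter, Finset.mem_offDiag, Finset.mem_univ, true_and,
            subset_Wf_iff]
          tauto
        rw [h2, Finset.offDiag_card, Nat.mul_sub, Nat.mul_one]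

lemma stepDiag : ∑ p ∈ (Finset.univ : Finset (Fin n)).diag, (Wf G p.1 p.2).card
    = 2 * G.edgeFinset.card := by
  classical
  have hdiag : (Finset.univ : Finset (Fin n)).diag
      = Finset.univ.image (fun a => (a, a)) := by
    ext ⟨a, b⟩
    simp only [Finset.mem_diag, Finset.mem_image, Finset.mem_univ, true_and]
    constructor
    · rintro rfl; exact ⟨a, rfl⟩
    · rintro ⟨c, hc⟩
      cases hc
      rfl
  rw [hdiag, Finset.sum_image (by intro a _ b _ h; exact (Prod.mk.injEq _ _ _ _ ▸ h : _).1)]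
  have h1 : ∀ a : Fin n, (Wf G a a).card = G.degree a := by
    intro a
    have : Wf G a a = G.neighborFinset a := by
      ext v
      simp [mem_Wf, SimpleGraph.mem_neighborFinset]
    rw [this]
    rfl
  rw [Finset.sum_congr rfl (fun a _ => h1 a)]
  exact G.sum_degrees_eq_twice_card_edges

lemma stepE {t : ℕ} (hfree : ¬ ContainsCopy (Bgraph t) G) :
    ∑ p ∈ (Finset.univ : Finset (Fin n)).offDiag,
      (Finset.univ.filter (fun u : Fin n => ∃ S : Finset (Fin n),
        S.card = t ∧ u ∈ S ∧ S ⊆ Wf G p.1 p.2 ∧ (Zf G S).card ≤ t)).card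
    ≤ (6 * t - 6) * G.edgeFinset.card := by
  classical
  have hterm : ∀ p : Fin n × Fin n, p ∈ (Finset.univ : Finset (Fin n)).offDiag →
      (Finset.univ.filter (fun u : Fin n => ∃ S : Finset (Fin n),
        S.card = t ∧ u ∈ S ∧ S ⊆ Wf G p.1 p.2 ∧ (Zf G S).card ≤ t)).card
      = ∑ u : Fin n, if (p.2 ≠ p.1 ∧ ∃ S : Finset (Fin n),
          S.card = t ∧ u ∈ S ∧ S ⊆ Wf G p.1 p.2 ∧ (Zf G S).card ≤ t) then 1 else 0 := by
    intro p hp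
    have hne : p.2 ≠ p.1 := (Finset.mem_offDiag.1 hp).2.2.symm
    rw [Finset.card_filter]
    exact Finset.sum_congr rfl (fun u _ => by simp [hne])
  rw [Finset.sum_congr rfl hterm]
  have hsub : (Finset.univ : Finset (Fin n)).offDiag ⊆ Finset.univ ×ˢ Finset.univ := by
    intro p hp
    exact Finset.mem_product.2 ⟨Finset.mem_univ _, Finset.mem_univ _⟩
  calc ∑ p ∈ (Finset.univ : Finset (Fin n)).offDiag, ∑ u : Fin n,
        (if (p.2 ≠ p.1 ∧ ∃ S : Finset (Fin n),
          S.card = t ∧ u ∈ S ∧ S ⊆ Wf G p.1 p.2 ∧ (Zf G S).card ≤ t) then 1 else 0)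
      ≤ ∑ p ∈ Finset.univ ×ˢ Finset.univ, ∑ u : Fin n,
        (if (p.2 ≠ p.1 ∧ ∃ S : Finset (Fin n),
          S.card = t ∧ u ∈ S ∧ S ⊆ Wf G p.1 p.2 ∧ (Zf G S).card ≤ t) then 1 else 0) := by
        apply Finset.sum_le_sum_of_subset hsub
    _ = ∑ x : Fin n, ∑ u : Fin n, ∑ y : Fin n,
        (if (y ≠ x ∧ ∃ S : Finset (Fin n),
          S.card = t ∧ u ∈ S ∧ S ⊆ Wf G x y ∧ (Zf G S).card ≤ t) then 1 else 0) := by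
        rw [Finset.sum_product]
        exact Finset.sum_congr rfl (fun x _ => Finset.sum_comm)
    _ ≤ ∑ x : Fin n, ∑ u : Fin n, (if G.Adj x u then 3 * t - 3 else 0) := by
        refine Finset.sum_le_sum (fun x _ => Finset.sum_le_sum (fun u _ => ?_))
        rw [← Finset.card_filter]
        by_cases hadj : G.Adj x u
        · rw [if_pos hadj]
          exact lemE hfree hadj
        · rw [if_neg hadj]
          have : (Finset.univ.filter (fun y => y ≠ x ∧ ∃ S : Finset (Fin n),
              S.card = t ∧ u ∈ S ∧ S ⊆ Wf G x y ∧ (Zf G S).card ≤ t)) = ∅ := by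
            rw [Finset.filter_eq_empty_iff]
            rintro y - ⟨-, S, -, huS, hSW, -⟩
            exact hadj (mem_Wf.1 (hSW huS)).1
          rw [this]
          simp
    _ = (6 * t - 6) * G.edgeFinset.card := by
        have h1 : ∀ x : Fin n, ∑ u : Fin n, (if G.Adj x u then 3 * t - 3 else 0)
            = (3 * t - 3) * G.degree x := by
          intro x
          rw [Finset.sum_ite, Finset.sum_const, Finset.sum_const_zero, add_zero]
          have : (Finset.univ.filter (fun u => G.Adj x u)) = G.neighborFinset x := by
            ext v; simp [SimpleGraph.mem_neighborFinset]
          rw [this, smul_eq_mul, mul_comm]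
          rfl
        rw [Finset.sum_congr rfl (fun x _ => h1 x), ← Finset.mul_sum,
          G.sum_degrees_eq_twice_card_edges, ← mul_assoc]
        have : (3 * t - 3) * 2 = 6 * t - 6 := by omega
        rw [this]

lemma master {t : ℕ} (ht : 1 ≤ t) (hfree : ¬ ContainsCopy (Bgraph t) G) :
    ∑ v : Fin n, G.degree v * G.degree v ≤
      (∑ S ∈ ((Finset.univ : Finset (Fin n)).powersetCard t).filter
        (fun S => t + 1 ≤ (Zf G S).card), (Zf G S).card * ((Zf G S).card - 1))
      + (t - 1) * (n * n) + (8 * t - 2) * G.edgeFinset.card := by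
  classical
  have hsplit : ∑ p ∈ Finset.univ ×ˢ Finset.univ, (Wf G p.1 p.2).card
      = ∑ p ∈ (Finset.univ : Finset (Fin n)).diag, (Wf G p.1 p.2).card
        + ∑ p ∈ (Finset.univ : Finset (Fin n)).offDiag, (Wf G p.1 p.2).card := by
    rw [← Finset.sum_union (Finset.disjoint_diag_offDiag _), Finset.diag_union_offDiag]
  have hoff : ∑ p ∈ (Finset.univ : Finset (Fin n)).offDiag, (Wf G p.1 p.2).card
      ≤ ∑ p ∈ (Finset.univ : Finset (Fin n)).offDiag,
          ((((Wf G p.1 p.2).powersetCard t).filter (fun S => t + 1 ≤ (Zf G S).card)).card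
            + (t - 1)
            + (Finset.univ.filter (fun u : Fin n => ∃ S : Finset (Fin n),
                S.card = t ∧ u ∈ S ∧ S ⊆ Wf G p.1 p.2 ∧ (Zf G S).card ≤ t)).card) :=
    Finset.sum_le_sum (fun p _ => claim1 ht p.1 p.2)
  rw [Finset.sum_add_distrib, Finset.sum_add_distrib, Finset.sum_const, stepD] at hoff
  have hcardoff : ((Finset.univ : Finset (Fin n)).offDiag.card) • (t-1) ≤ (t - 1) * (n * n) := by
    rw [Finset.offDiag_card, smul_eq_mul, Finset.card_univ, Fintype.card_fin, mul_comm]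
    exact Nat.mul_le_mul_left _ (Nat.sub_le _ _)
  have hE := stepE (G := G) hfree
  have h2e : 2 * G.edgeFinset.card + (6 * t - 6) * G.edgeFinset.card
      ≤ (8 * t - 2) * G.edgeFinset.card := by
    rw [← Nat.add_mul]
    exact Nat.mul_le_mul_right _ (by omega)
  have h5 := le_trans hoff (add_le_add (add_le_add le_rfl hcardoff) hE)
  have h6 : ∑ v : Fin n, G.degree v * G.degree v = 2 * G.edgeFinset.card
      + ∑ p ∈ (Finset.univ : Finset (Fin n)).offDiag, (Wf G p.1 p.2).card := by
    rw [← stepA, hsplit, stepDiag]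
  calc ∑ v : Fin n, G.degree v * G.degree v
      = 2 * G.edgeFinset.card
        + ∑ p ∈ (Finset.univ : Finset (Fin n)).offDiag, (Wf G p.1 p.2).card := h6
    _ ≤ 2 * G.edgeFinset.card
        + (((∑ S ∈ ((Finset.univ : Finset (Fin n)).powersetCard t).filter
            (fun S => t + 1 ≤ (Zf G S).card), (Zf G S).card * ((Zf G S).card - 1))
          + (t - 1) * (n * n)) + (6 * t - 6) * G.edgeFinset.card) :=
        Nat.add_le_add_left h5 _
    _ = ((∑ S ∈ ((Finset.univ : Finset (Fin n)).powersetCard t).filter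
            (fun S => t + 1 ≤ (Zf G S).card), (Zf G S).card * ((Zf G S).card - 1))
          + (t - 1) * (n * n))
        + (2 * G.edgeFinset.card + (6 * t - 6) * G.edgeFinset.card) := by ring
    _ ≤ ((∑ S ∈ ((Finset.univ : Finset (Fin n)).powersetCard t).filter
            (fun S => t + 1 ≤ (Zf G S).card), (Zf G S).card * ((Zf G S).card - 1))
          + (t - 1) * (n * n)) + (8 * t - 2) * G.edgeFinset.card :=
        Nat.add_le_add_left h2e _

end Helpers

theorem good_codeg_sum_lower (t n : ℕ) (ht : 1 ≤ t) (G : SimpleGraph (Fin n))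
    (hfree : ¬ ContainsCopy (Bgraph t) G) :
    (∑ u : Fin n, ((G.neighborSet u).ncard : ℝ) ^ 2)
        - 2 * (4 * (t : ℝ) - 1) * (G.edgeSet.ncard : ℝ) - ((t : ℝ) - 1) * (n : ℝ) ^ 2
      ≤ ∑ S ∈ Finset.univ.filter
            (fun S : Finset (Fin n) => S.card = t ∧ S.card + 1 ≤ codeg G S),
          (codeg G S : ℝ) * ((codeg G S : ℝ) - 1) := by
  classical
  have hdeg : ∀ u : Fin n, (G.neighborSet u).ncard = G.degree u := by
    intro u
    rw [Set.ncard_eq_toFinset_card', Set.toFinset_card]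
    exact G.card_neighborSet_eq_degree u
  have hedge : G.edgeSet.ncard = G.edgeFinset.card := by
    simp [Set.ncard_eq_toFinset_card', Set.toFinset_card, SimpleGraph.edgeFinset_card]
  have hfilter : Finset.univ.filter
        (fun S : Finset (Fin n) => S.card = t ∧ S.card + 1 ≤ codeg G S)
      = ((Finset.univ : Finset (Fin n)).powersetCard t).filter
        (fun S => t + 1 ≤ (Zf G S).card) := by
    ext S
    simp only [Finset.mem_filter, Finset.mem_univ, true_and, Finset.mem_powersetCard_univ,
      codeg_eq_Zf]
    constructor
    · rintro ⟨h1, h2⟩; exact ⟨h1, h1 ▸ h2⟩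
    · rintro ⟨h1, h2⟩; exact ⟨h1, h1 ▸ h2⟩
  have hM := master (G := G) ht hfree
  -- cast everything to ℝ
  have hsum1 : (∑ u : Fin n, ((G.neighborSet u).ncard : ℝ) ^ 2)
      = ((∑ v : Fin n, G.degree v * G.degree v : ℕ) : ℝ) := by
    push_cast
    refine Finset.sum_congr rfl (fun u _ => ?_)
    rw [hdeg u, sq]
  have hsum2 : ∑ S ∈ Finset.univ.filter
        (fun S : Finset (Fin n) => S.card = t ∧ S.card + 1 ≤ codeg G S),
          (codeg G S : ℝ) * ((codeg G S : ℝ) - 1)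
      = ((∑ S ∈ ((Finset.univ : Finset (Fin n)).powersetCard t).filter
        (fun S => t + 1 ≤ (Zf G S).card), (Zf G S).card * ((Zf G S).card - 1) : ℕ) : ℝ) := by
    rw [hfilter, Nat.cast_sum]
    refine Finset.sum_congr rfl (fun S hS => ?_)
    have h1 : 1 ≤ (Zf G S).card := by
      have := (Finset.mem_filter.1 hS).2
      omega
    rw [codeg_eq_Zf, Nat.cast_mul, Nat.cast_sub h1]
    push_cast
    ring
  rw [hsum1, hsum2, hedge]
  have hcast : ((∑ v : Fin n, G.degree v * G.degree v : ℕ) : ℝ)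
      ≤ ((∑ S ∈ ((Finset.univ : Finset (Fin n)).powersetCard t).filter
        (fun S => t + 1 ≤ (Zf G S).card), (Zf G S).card * ((Zf G S).card - 1) : ℕ) : ℝ)
        + ((t : ℝ) - 1) * (n * n) + (8 * (t:ℝ) - 2) * (G.edgeFinset.card : ℝ) := by
    have := hM
    have hc : (((∑ S ∈ ((Finset.univ : Finset (Fin n)).powersetCard t).filter
        (fun S => t + 1 ≤ (Zf G S).card), (Zf G S).card * ((Zf G S).card - 1))
      + (t - 1) * (n * n) + (8 * t - 2) * G.edgeFinset.card : ℕ) : ℝ)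
        = ((∑ S ∈ ((Finset.univ : Finset (Fin n)).powersetCard t).filter
        (fun S => t + 1 ≤ (Zf G S).card), (Zf G S).card * ((Zf G S).card - 1) : ℕ) : ℝ)
        + ((t:ℝ) - 1) * (n * n) + (8 * (t:ℝ) - 2) * (G.edgeFinset.card : ℝ) := by
      push_cast [Nat.cast_sub (by omega : 1 ≤ t), Nat.cast_sub (by omega : 2 ≤ 8 * t)]
      ring
    calc ((∑ v : Fin n, G.degree v * G.degree v : ℕ) : ℝ) ≤ _ := Nat.cast_le.2 hM
      _ = _ := hc
  have hn : ((n : ℝ) ^ 2) = (n : ℝ) * n := by ring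
  rw [hn]
  linarith [hcast]
end

section
/- Let t be a positive integer and let G be a bipartite graph with parts V_1 and V_2 of sizes n_1 and n_2, containing no subgraph isomorphic to B_t. Then for {i, j} = {1, 2}, N_i(C_4, G) ≥ (1/2)·C(t,2)·( Σ_{u ∈ V_i} d(u)² − (2t−1)·e(G) − (t−1)·n_j² ), where C(t,2) is the binomial coefficient t choose 2. -/
open SimpleGraph

open Finset

attribute [local instance] Classical.propDecidable

namespace BtAux

variable {n : ℕ}

noncomputable def Nbr (G : SimpleGraph (Fin n)) (u : Fin n) : Finset (Fin n) :=
  univ.filter (fun v => G.Adj u v)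

lemma mem_Nbr {G : SimpleGraph (Fin n)} {u v : Fin n} : v ∈ Nbr G u ↔ G.Adj u v := by
  simp [Nbr]

noncomputable def codegF (G : SimpleGraph (Fin n)) (S : Finset (Fin n)) : ℕ :=
  (univ.filter (fun v => ∀ u ∈ S, G.Adj u v)).card

def GoodPair (t : ℕ) (G : SimpleGraph (Fin n)) (q : Finset (Fin n)) : Prop :=
  ∃ S : Finset (Fin n), S.card = t ∧ S.card + 1 ≤ codegF G S ∧ q ⊆ S

noncomputable def CN (G : SimpleGraph (Fin n)) (c d : Fin n) : Finset (Fin n) :=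
  Nbr G c ∩ Nbr G d

noncomputable def G2 (t : ℕ) (G : SimpleGraph (Fin n)) (c d : Fin n) : ℕ :=
  (((CN G c d).powersetCard 2).filter (GoodPair t G)).card

def Pred (t : ℕ) (G : SimpleGraph (Fin n)) (V1 V2 : Finset (Fin n))
    (p : Finset (Fin n) × Finset (Fin n)) : Prop :=
  p.1 ⊆ V1 ∧ p.2 ⊆ V2 ∧ p.1.card = 2 ∧ p.2.card = 2 ∧
    (∀ u ∈ p.1, ∀ v ∈ p.2, G.Adj u v) ∧
    ∃ S : Finset (Fin n), S.card = t ∧ S.card + 1 ≤ codegF G S ∧ (p.1 ∪ p.2) ∩ V1 ⊆ S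

noncomputable def NC (t : ℕ) (G : SimpleGraph (Fin n)) (V1 V2 : Finset (Fin n)) : ℕ :=
  ((univ : Finset (Finset (Fin n) × Finset (Fin n))).filter (Pred t G V1 V2)).card

/-- remove all edges at `c` -/
def rmv (G : SimpleGraph (Fin n)) (c : Fin n) : SimpleGraph (Fin n) where
  Adj a b := G.Adj a b ∧ a ≠ c ∧ b ≠ c
  symm := by constructor; rintro a b ⟨h1, h2, h3⟩; exact ⟨h1.symm, h3, h2⟩
  loopless := by constructor; rintro a ⟨h, _, _⟩; exact G.irrefl h

lemma rmv_adj {G : SimpleGraph (Fin n)} {c a b : Fin n} :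
    (rmv G c).Adj a b ↔ G.Adj a b ∧ a ≠ c ∧ b ≠ c := Iff.rfl

lemma rmv_le {G : SimpleGraph (Fin n)} {c a b : Fin n} (h : (rmv G c).Adj a b) :
    G.Adj a b := h.1

lemma Nbr_rmv {G : SimpleGraph (Fin n)} {c u : Fin n} (hu : u ≠ c) :
    Nbr (rmv G c) u = (Nbr G u).erase c := by
  ext v
  simp only [mem_Nbr, Finset.mem_erase, rmv_adj]
  constructor
  · rintro ⟨h1, _, h3⟩; exact ⟨h3, h1⟩
  · rintro ⟨h1, h2⟩; exact ⟨h2, hu, h1⟩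

lemma Nbr_rmv_self {G : SimpleGraph (Fin n)} {c : Fin n} : Nbr (rmv G c) c = ∅ := by
  ext v
  simp [mem_Nbr, rmv_adj]

lemma codegF_rmv_le {G : SimpleGraph (Fin n)} {c : Fin n} (S : Finset (Fin n)) :
    codegF (rmv G c) S ≤ codegF G S := by
  apply Finset.card_le_card
  intro v hv
  rw [Finset.mem_filter] at hv ⊢
  exact ⟨hv.1, fun u hu => (hv.2 u hu).1⟩

lemma koenig (G : SimpleGraph (Fin n)) (X Y : Finset (Fin n)) (k : ℕ)
    (hno : ∀ M : Finset (Fin n × Fin n),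
      (∀ p ∈ M, p.1 ∈ X ∧ p.2 ∈ Y ∧ G.Adj p.1 p.2) →
      (∀ p ∈ M, ∀ q ∈ M, p ≠ q → p.1 ≠ q.1 ∧ p.2 ≠ q.2) → M.card < k) :
    ∃ B C : Finset (Fin n), B ⊆ X ∧ C ⊆ Y ∧ B.card + C.card + 1 ≤ k ∧
      ∀ x ∈ X, ∀ y ∈ Y, G.Adj x y → x ∈ B ∨ y ∈ C := by
  rcases Nat.eq_zero_or_pos k with rfl | hk
  · exact absurd (hno ∅ (by simp) (by simp)) (by simp)
  by_cases hX : X.card < k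
  · exact ⟨X, ∅, Finset.Subset.rfl, Finset.empty_subset _, by simp only [Finset.card_empty]; omega,
      fun x hx _ _ _ => Or.inl hx⟩

  push_neg at hX
  set d := X.card - k with hd
  set fam : {x // x ∈ X} → Finset (Fin n ⊕ Fin d) :=
    fun x => ((Y.filter (fun y => G.Adj x.1 y)).image Sum.inl) ∪
      ((univ : Finset (Fin d)).image Sum.inr) with hfam
  by_cases hall : ∀ s : Finset {x // x ∈ X}, s.card ≤ (s.biUnion fam).card
  · exfalso
    obtain ⟨f, hfinj, hf⟩ := (Finset.all_card_le_biUnion_card_iff_exists_injective fam).mp hall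
    set g : {x // x ∈ X} → Fin n := fun x => (f x).elim id (fun _ => x.1) with hg
    set s₀ : Finset {x // x ∈ X} := univ.filter (fun x => (f x).isLeft) with hs₀
    have hleft : ∀ x ∈ s₀, f x = Sum.inl (g x) := by
      intro x hx
      rw [hs₀, mem_filter] at hx
      rcases hy : f x with y | j
      · simp [hg, hy]
      · rw [hy] at hx; simp at hx
    have hmem : ∀ x ∈ s₀, g x ∈ Y ∧ G.Adj x.1 (g x) := by
      intro x hx
      have h1 := hf x
      rw [hleft x hx] at h1
      rw [hfam] at h1
      simp only [Finset.mem_union, Finset.mem_image] at h1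
      rcases h1 with ⟨y, hy, hyeq⟩ | ⟨j, _, hj⟩
      · rw [Finset.mem_filter] at hy
        cases Sum.inl_injective hyeq
        exact ⟨hy.1, hy.2⟩
      · exact absurd hj (by simp)
    have hcompl : (univ.filter (fun x : {x // x ∈ X} => ¬ (f x).isLeft)).card ≤ d := by
      have himg : (univ.filter (fun x : {x // x ∈ X} => ¬ (f x).isLeft)).image f ⊆
          (univ : Finset (Fin d)).image Sum.inr := by
        intro w hw
        simp only [Finset.mem_image] at hw ⊢
        obtain ⟨x, hx, rfl⟩ := hw
        rw [mem_filter] at hx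
        rcases hy : f x with y | j
        · rw [hy] at hx; simp at hx
        · exact ⟨j, Finset.mem_univ _, rfl⟩
      calc (univ.filter (fun x : {x // x ∈ X} => ¬ (f x).isLeft)).card
          = ((univ.filter (fun x : {x // x ∈ X} => ¬ (f x).isLeft)).image f).card :=
            (Finset.card_image_of_injective _ hfinj).symm
        _ ≤ ((univ : Finset (Fin d)).image Sum.inr).card := Finset.card_le_card himg
        _ ≤ d := by
            refine le_trans (Finset.card_image_le) (by simp)
    have hs₀card : k ≤ s₀.card := by
      have := Finset.card_filter_add_card_filter_not
        (s := (univ : Finset {x // x ∈ X})) (p := fun x => (f x).isLeft)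
      have huniv : (univ : Finset {x // x ∈ X}).card = X.card := by
        rw [Finset.card_univ, Fintype.card_coe]
      rw [hs₀]
      omega
    set M₀ : Finset (Fin n × Fin n) := s₀.image (fun x => (x.1, g x)) with hM₀
    have hM₀inj : Set.InjOn (fun x : {x // x ∈ X} => (x.1, g x)) s₀ := by
      intro a _ b _ hab
      exact Subtype.ext (congrArg Prod.fst hab)
    have hM₀card : M₀.card = s₀.card := Finset.card_image_of_injOn hM₀inj
    obtain ⟨M, hMsub, hMcard⟩ := Finset.exists_subset_card_eq (s := M₀) (n := k) (by omega)
    have hM1 : ∀ p ∈ M, p.1 ∈ X ∧ p.2 ∈ Y ∧ G.Adj p.1 p.2 := by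
      intro p hp
      obtain ⟨x, hx, rfl⟩ := Finset.mem_image.mp (hMsub hp)
      exact ⟨x.2, (hmem x hx).1, (hmem x hx).2⟩
    have hM2 : ∀ p ∈ M, ∀ q ∈ M, p ≠ q → p.1 ≠ q.1 ∧ p.2 ≠ q.2 := by
      intro p hp q hq hpq
      obtain ⟨x, hx, rfl⟩ := Finset.mem_image.mp (hMsub hp)
      obtain ⟨y, hy, rfl⟩ := Finset.mem_image.mp (hMsub hq)
      have hxy : x ≠ y := fun h => hpq (by rw [h])
      constructor
      · intro h; exact hxy (Subtype.ext h)
      · intro h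
        dsimp only at h
        apply hxy
        apply hfinj
        rw [hleft x hx, hleft y hy, h]
    exact absurd (hno M hM1 hM2) (by omega)
  · push_neg at hall
    obtain ⟨s, hs⟩ := hall
    have hsne : s.Nonempty := by
      rw [← Finset.card_pos]
      by_contra h
      push_neg at h
      interval_cases hsc : s.card
      · simp [Finset.card_eq_zero.mp hsc] at hs
    set NS : Finset (Fin n) := s.biUnion (fun x => Y.filter (fun y => G.Adj x.1 y)) with hNS
    have hsub : NS.image Sum.inl ∪ (univ : Finset (Fin d)).image Sum.inr ⊆
        s.biUnion fam := by
      intro w hw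
      rw [Finset.mem_union] at hw
      rcases hw with hw | hw
      · simp only [Finset.mem_image] at hw
        obtain ⟨y, hy, rfl⟩ := hw
        rw [hNS, Finset.mem_biUnion] at hy
        obtain ⟨x, hx, hy⟩ := hy
        exact Finset.mem_biUnion.mpr ⟨x, hx, by
          rw [hfam]; exact Finset.mem_union_left _ (Finset.mem_image_of_mem _ hy)⟩
      · obtain ⟨x, hx⟩ := hsne
        exact Finset.mem_biUnion.mpr ⟨x, hx, by
          rw [hfam]; exact Finset.mem_union_right _ hw⟩
    have hcard2 : NS.card + d ≤ (s.biUnion fam).card := by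
      have hdisj : Disjoint (NS.image Sum.inl)
          ((univ : Finset (Fin d)).image (Sum.inr : Fin d → Fin n ⊕ Fin d)) := by
        rw [Finset.disjoint_left]
        intro w hw hw'
        simp only [Finset.mem_image] at hw hw'
        obtain ⟨y, _, rfl⟩ := hw
        obtain ⟨j, _, hj⟩ := hw'
        exact absurd hj (by simp)
      calc NS.card + d
          = (NS.image Sum.inl).card +
            ((univ : Finset (Fin d)).image (Sum.inr : Fin d → Fin n ⊕ Fin d)).card := by
            rw [Finset.card_image_of_injective _ Sum.inl_injective,
              Finset.card_image_of_injective _ Sum.inr_injective]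
            simp
        _ = (NS.image Sum.inl ∪ (univ : Finset (Fin d)).image Sum.inr).card :=
            (Finset.card_union_of_disjoint hdisj).symm
        _ ≤ _ := Finset.card_le_card hsub
    have hNScard : NS.card + d < s.card := by omega
    have hscard : s.card ≤ X.card := by
      calc s.card ≤ (univ : Finset {x // x ∈ X}).card := Finset.card_le_card (Finset.subset_univ s)
        _ = X.card := by rw [Finset.card_univ, Fintype.card_coe]
    refine ⟨X \ s.image (fun x => x.1), NS, Finset.sdiff_subset, ?_, ?_, ?_⟩
    · intro y hy
      rw [hNS, Finset.mem_biUnion] at hy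
      obtain ⟨x, _, hy⟩ := hy
      exact (Finset.mem_filter.mp hy).1
    · have himgsub : s.image (fun x : {x // x ∈ X} => x.1) ⊆ X := by
        intro x hx
        obtain ⟨x', _, rfl⟩ := Finset.mem_image.mp hx
        exact x'.2
      have himgcard : (s.image (fun x : {x // x ∈ X} => x.1)).card = s.card :=
        Finset.card_image_of_injective _ Subtype.val_injective
      have := Finset.card_sdiff_of_subset himgsub
      omega
    · intro x hx y hy hadj
      by_cases hxs : x ∈ s.image (fun x : {x // x ∈ X} => x.1)
      · right
        obtain ⟨x', hx', rfl⟩ := Finset.mem_image.mp hxs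
        exact Finset.mem_biUnion.mpr ⟨x', hx', Finset.mem_filter.mpr ⟨hy, hadj⟩⟩
      · left
        exact Finset.mem_sdiff.mpr ⟨hx, hxs⟩


lemma matching_small (t : ℕ) (G : SimpleGraph (Fin n)) (V1 V2 : Finset (Fin n))
    (hdisj : Disjoint V1 V2)
    (hbip : ∀ ⦃u v : Fin n⦄, G.Adj u v → (u ∈ V1 ∧ v ∈ V2) ∨ (u ∈ V2 ∧ v ∈ V1))
    (hfree : ¬ ContainsCopy (Bgraph t) G) {u c : Fin n} (hu : u ∈ V1) (hc : c ∈ V2)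
    (huc : G.Adj u c) :
    ∀ M : Finset (Fin n × Fin n),
      (∀ p ∈ M, p.1 ∈ (Nbr G u).erase c ∧ p.2 ∈ (Nbr G c).erase u ∧ G.Adj p.1 p.2) →
      (∀ p ∈ M, ∀ q ∈ M, p ≠ q → p.1 ≠ q.1 ∧ p.2 ≠ q.2) → M.card < t := by
  intro M hM1 hM2
  by_contra hcard
  push_neg at hcard
  obtain ⟨M', hM'sub, hM'card⟩ := Finset.exists_subset_card_eq hcard
  have e : Fin t ≃ {p // p ∈ M'} :=
    (finCongr hM'card.symm).trans M'.equivFin.symm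
  set x : Fin t → Fin n := fun j => ((e j : Fin n × Fin n)).1 with hx
  set y : Fin t → Fin n := fun j => ((e j : Fin n × Fin n)).2 with hy
  have hmemM : ∀ j, ((e j : Fin n × Fin n)) ∈ M := fun j => hM'sub (e j).2
  have hfacts : ∀ j, (x j ∈ Nbr G u ∧ x j ≠ c) ∧ (y j ∈ Nbr G c ∧ y j ≠ u) ∧
      G.Adj (x j) (y j) := by
    intro j
    obtain ⟨h1, h2, h3⟩ := hM1 _ (hmemM j)
    rw [Finset.mem_erase] at h1 h2
    exact ⟨⟨h1.2, h1.1⟩, ⟨h2.2, h2.1⟩, h3⟩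
  have hadjux : ∀ j, G.Adj u (x j) := fun j => mem_Nbr.mp (hfacts j).1.1
  have hadjcy : ∀ j, G.Adj c (y j) := fun j => mem_Nbr.mp (hfacts j).2.1.1
  have hadjxy : ∀ j, G.Adj (x j) (y j) := fun j => (hfacts j).2.2
  have hxc : ∀ j, x j ≠ c := fun j => (hfacts j).1.2
  have hyu : ∀ j, y j ≠ u := fun j => (hfacts j).2.1.2
  have hnot12 : ∀ {a : Fin n}, a ∈ V1 → a ∈ V2 → False := fun ha hb =>
    (Finset.disjoint_left.mp hdisj ha) hb
  have hxV2 : ∀ j, x j ∈ V2 := by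
    intro j
    rcases hbip (hadjux j) with ⟨_, h⟩ | ⟨h, _⟩
    · exact h
    · exact absurd h (fun h => hnot12 hu h)
  have hyV1 : ∀ j, y j ∈ V1 := by
    intro j
    rcases hbip (hadjcy j) with ⟨h, _⟩ | ⟨_, h⟩
    · exact absurd h (fun h => hnot12 h hc)
    · exact h
  have hxinj : ∀ {j j' : Fin t}, x j = x j' → j = j' := by
    intro j j' hjj
    by_contra hne
    have hene : ((e j : Fin n × Fin n)) ≠ ((e j' : Fin n × Fin n)) := by
      intro hh
      exact hne (e.injective (Subtype.ext hh))
    exact (hM2 _ (hmemM j) _ (hmemM j') hene).1 hjj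
  have hyinj : ∀ {j j' : Fin t}, y j = y j' → j = j' := by
    intro j j' hjj
    by_contra hne
    have hene : ((e j : Fin n × Fin n)) ≠ ((e j' : Fin n × Fin n)) := by
      intro hh
      exact hne (e.injective (Subtype.ext hh))
    exact (hM2 _ (hmemM j) _ (hmemM j') hene).2 hjj
  have huc' : u ≠ c := huc.ne
  have hux : ∀ j, u ≠ x j := fun j hh => hnot12 hu (by rw [hh]; exact hxV2 j)
  have hcy : ∀ j, c ≠ y j := fun j hh => hnot12 (by rw [hh]; exact hyV1 j) hc
  have hxy' : ∀ j j', x j ≠ y j' :=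
    fun j j' hh => hnot12 (hyV1 j') (by rw [← hh]; exact hxV2 j)
  have fin2 : ∀ a : Fin 2, a = 0 ∨ a = 1 := by decide
  apply hfree
  refine ⟨fun p => Sum.elim (fun _ => if p.1 = 0 then u else c)
    (fun j => if p.1 = 0 then x j else y j) p.2, ?_, ?_⟩
  · rintro ⟨i, z⟩ ⟨i', z'⟩ h
    rcases fin2 i with rfl | rfl <;> rcases fin2 i' with rfl | rfl <;>
      rcases z with z | j <;> rcases z' with z' | j' <;>
      simp only [Sum.elim_inl, Sum.elim_inr, Fin.isValue, reduceIte] at h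
    · rw [Subsingleton.elim z z']
    · exact absurd h (hux j')
    · exact absurd h.symm (hux j)
    · rw [hxinj h]
    · exact absurd h huc'
    · exact absurd h.symm (hyu j')
    · exact absurd h (hxc j)
    · exact absurd h (hxy' j j')
    · exact absurd h.symm huc'
    · exact absurd h.symm (hxc j')
    · exact absurd h (hyu j)
    · exact absurd h.symm (hxy' j' j)
    · rw [Subsingleton.elim z z']
    · exact absurd h (hcy j')
    · exact absurd h (hcy j).symm
    · rw [hyinj h]
  · rintro ⟨i, z⟩ ⟨i', z'⟩ hadj
    rw [Bgraph, boxProd_adj] at hadj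
    rcases hadj with ⟨hii, hzz⟩ | ⟨hzz, hii⟩
    · rw [top_adj] at hii
      subst hzz
      rcases fin2 i with rfl | rfl <;> rcases fin2 i' with rfl | rfl
      · exact absurd rfl hii
      · rcases z with z | j <;>
          simp only [Sum.elim_inl, Sum.elim_inr, Fin.isValue, reduceIte]
        · exact huc
        · exact hadjxy j
      · rcases z with z | j <;>
          simp only [Sum.elim_inl, Sum.elim_inr, Fin.isValue, reduceIte]
        · exact huc.symm
        · exact (hadjxy j).symm
      · exact absurd rfl hii
    · subst hii
      rcases z with z | j <;> rcases z' with z' | j'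
      · simp at hzz
      · rcases fin2 i with rfl | rfl <;>
          simp only [Sum.elim_inl, Sum.elim_inr, Fin.isValue, reduceIte]
        · exact hadjux j'
        · exact hadjcy j'
      · rcases fin2 i with rfl | rfl <;>
          simp only [Sum.elim_inl, Sum.elim_inr, Fin.isValue, reduceIte]
        · exact (hadjux j).symm
        · exact (hadjcy j).symm
      · simp at hzz


section Counting

variable {t : ℕ} {G : SimpleGraph (Fin n)} {V1 V2 : Finset (Fin n)} {c : Fin n}

/-- S3 : NC' + NCc ≤ NC -/
lemma count_split (hdisj : Disjoint V1 V2) (hc : c ∈ V2) :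
    NC t (rmv G c) (insert c V1) (V2.erase c) +
      ((univ : Finset (Finset (Fin n) × Finset (Fin n))).filter
        (fun p => Pred t G V1 V2 p ∧ c ∈ p.2)).card ≤ NC t G V1 V2 := by
  set F' := (univ : Finset (Finset (Fin n) × Finset (Fin n))).filter
    (Pred t (rmv G c) (insert c V1) (V2.erase c)) with hF'
  set Fc := (univ : Finset (Finset (Fin n) × Finset (Fin n))).filter
    (fun p => Pred t G V1 V2 p ∧ c ∈ p.2) with hFc
  have hsub : F' ∪ Fc ⊆ (univ : Finset (Finset (Fin n) × Finset (Fin n))).filter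
      (Pred t G V1 V2) := by
    intro p hp
    rw [Finset.mem_union] at hp
    rcases hp with hp | hp
    · rw [Finset.mem_filter] at hp ⊢
      obtain ⟨_, h1, h2, h3, h4, h5, S, hS1, hS2, hS3⟩ := hp
      have hcp1 : c ∉ p.1 := by
        intro hcp
        obtain ⟨v, hv⟩ := Finset.card_pos.mp (by rw [h4]; omega)
        exact absurd rfl ((h5 c hcp v hv).2.1)
      refine ⟨Finset.mem_univ _, ?_, ?_, h3, h4, ?_, S, hS1, ?_, ?_⟩
      · intro x hx
        rcases Finset.mem_insert.mp (h1 hx) with rfl | hxV1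
        · exact absurd hx hcp1
        · exact hxV1
      · exact fun x hx => Finset.mem_of_mem_erase (h2 hx)
      · exact fun u hu v hv => rmv_le (h5 u hu v hv)
      · exact hS2.trans (codegF_rmv_le S)
      · intro x hx
        rw [Finset.mem_inter] at hx
        exact hS3 (Finset.mem_inter.mpr ⟨hx.1,
          Finset.mem_insert.mpr (Or.inr hx.2)⟩)
    · rw [Finset.mem_filter] at hp ⊢
      exact ⟨Finset.mem_univ _, (hp.2).1⟩
  have hdisjF : Disjoint F' Fc := by
    rw [Finset.disjoint_left]
    intro p hp hp'
    rw [hF', Finset.mem_filter] at hp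
    rw [hFc, Finset.mem_filter] at hp'
    exact (Finset.mem_erase.mp (hp.2.2.1 hp'.2.2)).1 rfl
  calc F'.card + Fc.card = (F' ∪ Fc).card := (Finset.card_union_of_disjoint hdisjF).symm
    _ ≤ _ := Finset.card_le_card hsub

/-- S4 : Σ_d G2 ≤ NCc -/
lemma count_G2 (hdisj : Disjoint V1 V2)
    (hbip : ∀ ⦃u v : Fin n⦄, G.Adj u v → (u ∈ V1 ∧ v ∈ V2) ∨ (u ∈ V2 ∧ v ∈ V1))
    (hc : c ∈ V2) :
    ∑ d ∈ V2.erase c, G2 t G c d ≤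
      ((univ : Finset (Finset (Fin n) × Finset (Fin n))).filter
        (fun p => Pred t G V1 V2 p ∧ c ∈ p.2)).card := by
  have hnot12 : ∀ {a : Fin n}, a ∈ V1 → a ∈ V2 → False := fun ha hb =>
    (Finset.disjoint_left.mp hdisj ha) hb
  have hNbrV1 : ∀ {u : Fin n}, u ∈ Nbr G c → u ∈ V1 := by
    intro u hu
    rcases hbip (mem_Nbr.mp hu) with ⟨h1, _⟩ | ⟨_, h2⟩
    · exact absurd h1 (fun h => hnot12 h hc)
    · exact h2
  set T := (V2.erase c).biUnion (fun d =>
    (((CN G c d).powersetCard 2).filter (GoodPair t G)).image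
      (fun q => (q, ({c, d} : Finset (Fin n))))) with hT
  have hTsub : T ⊆ (univ : Finset (Finset (Fin n) × Finset (Fin n))).filter
      (fun p => Pred t G V1 V2 p ∧ c ∈ p.2) := by
    intro p hp
    rw [hT, Finset.mem_biUnion] at hp
    obtain ⟨d, hd, hp⟩ := hp
    obtain ⟨q, hq, rfl⟩ := Finset.mem_image.mp hp
    rw [Finset.mem_filter] at hq
    obtain ⟨hqP, S, hS1, hS2, hS3⟩ := hq
    have hqsub : q ⊆ CN G c d := (Finset.mem_powersetCard.mp hqP).1
    have hqcard : q.card = 2 := (Finset.mem_powersetCard.mp hqP).2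
    have hdc : d ≠ c := (Finset.mem_erase.mp hd).1
    have hdV2 : d ∈ V2 := (Finset.mem_erase.mp hd).2
    rw [Finset.mem_filter]
    refine ⟨Finset.mem_univ _, ⟨?_, ?_, hqcard, ?_, ?_, S, hS1, hS2, ?_⟩, ?_⟩
    · exact fun x hx => hNbrV1 (Finset.mem_of_mem_inter_left (hqsub hx))
    · intro x hx
      rcases Finset.mem_insert.mp hx with rfl | hx
      · exact hc
      · rw [Finset.mem_singleton.mp hx]; exact hdV2
    · show ({c, d} : Finset (Fin n)).card = 2
      rw [Finset.card_insert_of_notMem (by simp [hdc.symm]), Finset.card_singleton]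
    · intro u hu v hv
      rcases Finset.mem_insert.mp hv with rfl | hv
      · exact (mem_Nbr.mp (Finset.mem_of_mem_inter_left (hqsub hu))).symm
      · rw [Finset.mem_singleton.mp hv]
        exact (mem_Nbr.mp (Finset.mem_of_mem_inter_right (hqsub hu))).symm
    · intro x hx
      rw [Finset.mem_inter, Finset.mem_union] at hx
      rcases hx.1 with hxq | hxcd
      · exact hS3 hxq
      · exfalso
        rcases Finset.mem_insert.mp hxcd with rfl | hxd
        · exact hnot12 hx.2 hc
        · rw [Finset.mem_singleton.mp hxd] at hx
          exact hnot12 hx.2 hdV2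
    · exact Finset.mem_insert_self c {d}
  have hTcard : T.card = ∑ d ∈ V2.erase c, G2 t G c d := by
    rw [hT]
    rw [Finset.card_biUnion]
    · apply Finset.sum_congr rfl
      intro d _
      rw [G2]
      apply Finset.card_image_of_injOn
      intro q1 _ q2 _ h
      exact congrArg Prod.fst h
    · intro d1 h1 d2 h2 hne
      simp only [Function.onFun]
      rw [Finset.disjoint_left]
      intro p hp1 hp2
      obtain ⟨q1, _, rfl⟩ := Finset.mem_image.mp hp1
      obtain ⟨q2, _, heq⟩ := Finset.mem_image.mp hp2
      apply hne
      have hsetseq : ({c, d2} : Finset (Fin n)) = {c, d1} := congrArg Prod.snd heq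
      have hd2 : d2 ∈ ({c, d1} : Finset (Fin n)) := by
        rw [← hsetseq]; simp
      rcases Finset.mem_insert.mp hd2 with rfl | hd2
      · exact absurd rfl (Finset.mem_erase.mp h2).1
      · exact ((Finset.mem_singleton.mp hd2)).symm
  rw [← hTcard]
  exact Finset.card_le_card hTsub

/-- S1 -/
lemma sum_sq_rmv (hdisj : Disjoint V1 V2)
    (hbip : ∀ ⦃u v : Fin n⦄, G.Adj u v → (u ∈ V1 ∧ v ∈ V2) ∨ (u ∈ V2 ∧ v ∈ V1))
    (hc : c ∈ V2) :
    ∑ u ∈ insert c V1, ((Nbr (rmv G c) u).card : ℤ)^2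
      = ∑ u ∈ V1, ((Nbr G u).card : ℤ)^2
        + (((Nbr G c).card : ℤ) - 2 * ∑ u ∈ Nbr G c, ((Nbr G u).card : ℤ)) := by
  have hnot12 : ∀ {a : Fin n}, a ∈ V1 → a ∈ V2 → False := fun ha hb =>
    (Finset.disjoint_left.mp hdisj ha) hb
  have hcV1 : c ∉ V1 := fun h => hnot12 h hc
  have hNbrV1 : Nbr G c ⊆ V1 := by
    intro u hu
    rcases hbip (mem_Nbr.mp hu) with ⟨h1, _⟩ | ⟨_, h2⟩
    · exact absurd h1 (fun h => hnot12 h hc)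
    · exact h2
  rw [Finset.sum_insert hcV1, Nbr_rmv_self]
  have hzero : ∀ u ∈ V1, u ∉ Nbr G c →
      ((Nbr (rmv G c) u).card : ℤ)^2 - ((Nbr G u).card : ℤ)^2 = 0 := by
    intro u hu hnu
    have huc : u ≠ c := fun h => hcV1 (h ▸ hu)
    have hcN : c ∉ Nbr G u := by
      rw [mem_Nbr]
      intro hadj
      exact hnu (mem_Nbr.mpr hadj.symm)
    rw [Nbr_rmv huc, Finset.erase_eq_of_notMem hcN]
    ring
  have hdiff : ∑ u ∈ V1, (((Nbr (rmv G c) u).card : ℤ)^2 - ((Nbr G u).card : ℤ)^2)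
      = ∑ u ∈ Nbr G c, (1 - 2 * ((Nbr G u).card : ℤ)) := by
    rw [← Finset.sum_subset hNbrV1 hzero]
    apply Finset.sum_congr rfl
    intro u hu
    have huV1 : u ∈ V1 := hNbrV1 hu
    have huc : u ≠ c := fun h => hcV1 (h ▸ huV1)
    have hcN : c ∈ Nbr G u := mem_Nbr.mpr (mem_Nbr.mp hu).symm
    have hpos : 1 ≤ (Nbr G u).card := Finset.card_pos.mpr ⟨c, hcN⟩
    rw [Nbr_rmv huc, Finset.card_erase_of_mem hcN, Nat.cast_sub hpos]
    push_cast
    ring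
  have hsplit : ∑ u ∈ V1, ((Nbr (rmv G c) u).card : ℤ)^2
      = ∑ u ∈ V1, ((Nbr G u).card : ℤ)^2
        + ∑ u ∈ V1, (((Nbr (rmv G c) u).card : ℤ)^2 - ((Nbr G u).card : ℤ)^2) := by
    rw [← Finset.sum_add_distrib]
    apply Finset.sum_congr rfl
    intro u _
    ring
  rw [hsplit, hdiff, Finset.sum_sub_distrib, Finset.sum_const, ← Finset.mul_sum]
  simp only [Finset.card_empty, Nat.cast_zero, smul_eq_mul, mul_one, nsmul_eq_mul]
  push_cast
  ring

/-- S2 -/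
lemma sum_deg_rmv :
    ∑ u : Fin n, ((Nbr (rmv G c) u).card : ℤ)
      = ∑ u : Fin n, ((Nbr G u).card : ℤ) - 2 * ((Nbr G c).card : ℤ) := by
  have hcN : c ∉ Nbr G c := by
    rw [mem_Nbr]
    exact G.irrefl
  have hzero : ∀ u ∈ (univ : Finset (Fin n)), u ∉ insert c (Nbr G c) →
      ((Nbr G u).card : ℤ) - ((Nbr (rmv G c) u).card : ℤ) = 0 := by
    intro u _ hu
    rw [Finset.mem_insert] at hu
    push_neg at hu
    have hcNu : c ∉ Nbr G u := by
      rw [mem_Nbr]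
      intro hadj
      exact hu.2 (mem_Nbr.mpr hadj.symm)
    rw [Nbr_rmv hu.1, Finset.erase_eq_of_notMem hcNu]
    ring
  have hdiff : ∑ u : Fin n, (((Nbr G u).card : ℤ) - ((Nbr (rmv G c) u).card : ℤ))
      = 2 * ((Nbr G c).card : ℤ) := by
    rw [← Finset.sum_subset (Finset.subset_univ (insert c (Nbr G c))) hzero,
      Finset.sum_insert hcN, Nbr_rmv_self]
    have hterm : ∀ u ∈ Nbr G c,
        ((Nbr G u).card : ℤ) - ((Nbr (rmv G c) u).card : ℤ) = 1 := by
      intro u hu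
      have huc : u ≠ c := fun h => hcN (h ▸ hu)
      have hcNu : c ∈ Nbr G u := mem_Nbr.mpr (mem_Nbr.mp hu).symm
      have hpos : 1 ≤ (Nbr G u).card := Finset.card_pos.mpr ⟨c, hcNu⟩
      rw [Nbr_rmv huc, Finset.card_erase_of_mem hcNu, Nat.cast_sub hpos]
      push_cast
      ring
    rw [Finset.sum_congr rfl hterm, Finset.sum_const, Finset.card_empty]
    push_cast
    ring
  have := Finset.sum_sub_distrib (s := (univ : Finset (Fin n)))
    (f := fun u => ((Nbr G u).card : ℤ)) (g := fun u => ((Nbr (rmv G c) u).card : ℤ))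
  rw [this] at hdiff
  linarith

/-- L5 -/
lemma sum_CN (hdisj : Disjoint V1 V2)
    (hbip : ∀ ⦃u v : Fin n⦄, G.Adj u v → (u ∈ V1 ∧ v ∈ V2) ∨ (u ∈ V2 ∧ v ∈ V1))
    (hc : c ∈ V2) (hcover : V1 ∪ V2 = univ) :
    ∑ d ∈ V2.erase c, ((CN G c d).card : ℤ)
      = ∑ u ∈ Nbr G c, ((Nbr G u).card : ℤ) - ((Nbr G c).card : ℤ) := by
  have hnot12 : ∀ {a : Fin n}, a ∈ V1 → a ∈ V2 → False := fun ha hb =>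
    (Finset.disjoint_left.mp hdisj ha) hb
  have hNbrV1 : ∀ {u : Fin n}, u ∈ Nbr G c → u ∈ V1 := by
    intro u hu
    rcases hbip (mem_Nbr.mp hu) with ⟨h1, _⟩ | ⟨_, h2⟩
    · exact absurd h1 (fun h => hnot12 h hc)
    · exact h2
  have hCNfilter : ∀ d, CN G c d = (Nbr G c).filter (fun u => G.Adj d u) := by
    intro d
    ext u
    simp only [CN, Finset.mem_inter, Finset.mem_filter, mem_Nbr]
  have step1 : ∀ d, ((CN G c d).card : ℤ)
      = ∑ u ∈ Nbr G c, (if G.Adj d u then (1 : ℤ) else 0) := by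
    intro d
    rw [hCNfilter d, ← Finset.sum_filter]
    push_cast
    simp
  calc ∑ d ∈ V2.erase c, ((CN G c d).card : ℤ)
      = ∑ d ∈ V2.erase c, ∑ u ∈ Nbr G c, (if G.Adj d u then (1 : ℤ) else 0) :=
        Finset.sum_congr rfl (fun d _ => step1 d)
    _ = ∑ u ∈ Nbr G c, ∑ d ∈ V2.erase c, (if G.Adj d u then (1 : ℤ) else 0) :=
        Finset.sum_comm
    _ = ∑ u ∈ Nbr G c, (((Nbr G u).card : ℤ) - 1) := by
        apply Finset.sum_congr rfl
        intro u hu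
        have hfe : (V2.erase c).filter (fun d => G.Adj d u) = (Nbr G u).erase c := by
          ext d
          simp only [Finset.mem_filter, Finset.mem_erase, mem_Nbr]
          constructor
          · rintro ⟨⟨hdc, _⟩, hadj⟩
            exact ⟨hdc, hadj.symm⟩
          · rintro ⟨hdc, hadj⟩
            refine ⟨⟨hdc, ?_⟩, hadj.symm⟩
            rcases hbip hadj with ⟨_, hd2⟩ | ⟨hu2, _⟩
            · exact hd2
            · exact absurd hu2 (fun h => hnot12 (hNbrV1 hu) h)
        have hcNu : c ∈ Nbr G u := mem_Nbr.mpr (mem_Nbr.mp hu).symm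
        have hpos : 1 ≤ (Nbr G u).card := Finset.card_pos.mpr ⟨c, hcNu⟩
        rw [← Finset.sum_filter, hfe, Finset.sum_const, Finset.card_erase_of_mem hcNu]
        simp only [nsmul_eq_mul, mul_one]
        push_cast [Nat.cast_sub hpos]
        ring
    _ = ∑ u ∈ Nbr G c, ((Nbr G u).card : ℤ) - ((Nbr G c).card : ℤ) := by
        rw [Finset.sum_sub_distrib, Finset.sum_const]
        push_cast
        ring

end Counting

lemma charging (t : ℕ) (ht : 1 ≤ t) (G : SimpleGraph (Fin n)) (V1 V2 : Finset (Fin n))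
    (hdisj : Disjoint V1 V2)
    (hbip : ∀ ⦃u v : Fin n⦄, G.Adj u v → (u ∈ V1 ∧ v ∈ V2) ∨ (u ∈ V2 ∧ v ∈ V1))
    (hfree : ¬ ContainsCopy (Bgraph t) G) (c : Fin n) (hc : c ∈ V2) :
    ∑ d ∈ V2.erase c,
        ((t.choose 2 : ℤ) * (((CN G c d).card : ℤ) - ((t : ℤ) - 1)) - (G2 t G c d : ℤ))
      ≤ (t.choose 2 : ℤ) * ((t : ℤ) - 1) * ((Nbr G c).card : ℤ) := by
  set c2 : ℤ := (t.choose 2 : ℤ) with hc2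
  have hc2nn : 0 ≤ c2 := by positivity
  have hnot12 : ∀ {a : Fin n}, a ∈ V1 → a ∈ V2 → False := fun ha hb =>
    (Finset.disjoint_left.mp hdisj ha) hb
  have hNcV1 : ∀ {u : Fin n}, u ∈ Nbr G c → u ∈ V1 := by
    intro u hu
    rcases hbip (mem_Nbr.mp hu) with ⟨h1, _⟩ | ⟨_, h2⟩
    · exact absurd h1 (fun h => hnot12 h hc)
    · exact h2
  -- choose covers
  have hexists : ∀ u : Fin n, ∃ BC : Finset (Fin n) × Finset (Fin n),
      u ∈ Nbr G c → (BC.1 ⊆ (Nbr G u).erase c ∧ BC.2 ⊆ (Nbr G c).erase u ∧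
        BC.1.card + BC.2.card + 1 ≤ t ∧
        ∀ x ∈ (Nbr G u).erase c, ∀ y ∈ (Nbr G c).erase u, G.Adj x y → x ∈ BC.1 ∨ y ∈ BC.2) := by
    intro u
    by_cases hu : u ∈ Nbr G c
    · obtain ⟨B, C, h1, h2, h3, h4⟩ := koenig G ((Nbr G u).erase c) ((Nbr G c).erase u) t
        (matching_small t G V1 V2 hdisj hbip hfree (hNcV1 hu) hc (mem_Nbr.mp hu).symm)
      exact ⟨(B, C), fun _ => ⟨h1, h2, h3, h4⟩⟩
    · exact ⟨(∅, ∅), fun h => absurd h hu⟩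
  choose BC hBC using hexists
  set B : Fin n → Finset (Fin n) := fun u => (BC u).1 with hB
  set C : Fin n → Finset (Fin n) := fun u => (BC u).2 with hCd
  have hBCcard : ∀ u ∈ Nbr G c, (B u).card + (C u).card + 1 ≤ t :=
    fun u hu => (hBC u hu).2.2.1
  have hcover : ∀ u ∈ Nbr G c, ∀ x ∈ (Nbr G u).erase c, ∀ y ∈ (Nbr G c).erase u,
      G.Adj x y → x ∈ B u ∨ y ∈ C u := fun u hu => (hBC u hu).2.2.2
  -- basic facts about U d
  have hUsub : ∀ d, CN G c d ⊆ Nbr G c := fun d => Finset.inter_subset_left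
  have hUadj : ∀ {d u : Fin n}, u ∈ CN G c d → G.Adj d u := by
    intro d u hu
    exact mem_Nbr.mp (Finset.mem_of_mem_inter_right hu)
  -- sub-lemma (*)
  have hstar : ∀ d ∈ V2.erase c, ∀ u ∈ CN G c d, d ∉ B u →
      (CN G c d).erase u ⊆ C u := by
    intro d hd u hu hdB u' hu'
    have hu' := Finset.mem_erase.mp hu'
    have hucNbr : u ∈ Nbr G c := hUsub d hu
    have hdX : d ∈ (Nbr G u).erase c := by
      rw [Finset.mem_erase, mem_Nbr]
      exact ⟨(Finset.mem_erase.mp hd).1, (hUadj hu).symm⟩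
    have hu'Y : u' ∈ (Nbr G c).erase u := by
      rw [Finset.mem_erase]
      exact ⟨hu'.1, hUsub d hu'.2⟩
    rcases hcover u hucNbr d hdX u' hu'Y (hUadj hu'.2) with h | h
    · exact absurd h hdB
    · exact h
  -- if some u ∈ U d misses d in its B-cover and |U d| ≥ t then |U d| = t, and more
  have hsize : ∀ d ∈ V2.erase c, ∀ u ∈ CN G c d, d ∉ B u →
      (CN G c d).card ≤ t := by
    intro d hd u hu hdB
    have h1 := Finset.card_le_card (hstar d hd u hu hdB)
    rw [Finset.card_erase_of_mem hu] at h1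
    have h3 := hBCcard u (hUsub d hu)
    omega
  -- the exceptional set
  set D3 : Finset (Fin n) := (V2.erase c).filter (fun d =>
    ((CN G c d).filter (fun u => d ∈ B u)) = ∅ ∧ (CN G c d).card = t ∧
      codegF G (CN G c d) ≤ t) with hD3
  -- per-d inequality
  have key : ∀ d ∈ V2.erase c,
      c2 * (((CN G c d).card : ℤ) - ((t : ℤ) - 1)) - (G2 t G c d : ℤ)
        ≤ c2 * (((CN G c d).filter (fun u => d ∈ B u)).card : ℤ)
          + c2 * (if d ∈ D3 then 1 else 0) := by
    intro d hd
    have hG2nn : (0 : ℤ) ≤ (G2 t G c d : ℤ) := by positivity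
    have hpnn : (0 : ℤ) ≤ (((CN G c d).filter (fun u => d ∈ B u)).card : ℤ) := by positivity
    have hitenn : (0 : ℤ) ≤ c2 * (if d ∈ D3 then 1 else 0) := by
      by_cases h : d ∈ D3 <;> simp [h, hc2nn]
    by_cases hmt : (CN G c d).card < t
    · have : c2 * (((CN G c d).card : ℤ) - ((t : ℤ) - 1)) ≤ 0 := by
        apply mul_nonpos_of_nonneg_of_nonpos hc2nn
        have : ((CN G c d).card : ℤ) ≤ (t : ℤ) - 1 := by
          push_cast
          omega
        linarith
      nlinarith [mul_nonneg hc2nn hpnn]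
    push_neg at hmt
    by_cases hP : ((CN G c d).filter (fun u => d ∈ B u)) = ∅
    · -- p = 0
      have hall : ∀ u ∈ CN G c d, d ∉ B u := by
        intro u hu hdB
        have : u ∈ ((CN G c d).filter (fun u => d ∈ B u)) := Finset.mem_filter.mpr ⟨hu, hdB⟩
        rw [hP] at this
        exact absurd this (Finset.notMem_empty u)
      obtain ⟨u₀, hu₀⟩ := Finset.card_pos.mp (by omega : 0 < (CN G c d).card)
      have hmeq : (CN G c d).card = t :=
        le_antisymm (hsize d hd u₀ hu₀ (hall u₀ hu₀)) hmt
      by_cases hgood : t + 1 ≤ codegF G (CN G c d)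
      · -- all pairs good
        have hfull : ((CN G c d).powersetCard 2).filter (GoodPair t G)
            = (CN G c d).powersetCard 2 := by
          apply Finset.filter_eq_self.mpr
          intro q hq
          exact ⟨CN G c d, hmeq, by rw [hmeq]; exact hgood,
            (Finset.mem_powersetCard.mp hq).1⟩
        have hG2 : (G2 t G c d : ℤ) = c2 := by
          rw [G2, hfull, Finset.card_powersetCard, hmeq, hc2]
        rw [hG2, hmeq]
        push_cast
        nlinarith [mul_nonneg hc2nn hpnn]
      · -- d ∈ D3
        have hdD3 : d ∈ D3 := by
          rw [hD3, Finset.mem_filter]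
          exact ⟨hd, hP, hmeq, by omega⟩
        rw [if_pos hdD3, hmeq]
        push_cast
        nlinarith [mul_nonneg hc2nn hpnn]
    · -- p ≥ 1
      have hppos : 0 < ((CN G c d).filter (fun u => d ∈ B u)).card :=
        Finset.card_pos.mpr (Finset.nonempty_of_ne_empty hP)
      by_cases hPall : ∀ u ∈ CN G c d, d ∈ B u
      · have hPeq : ((CN G c d).filter (fun u => d ∈ B u)) = CN G c d :=
          Finset.filter_eq_self.mpr hPall
        rw [hPeq]
        have h1 : ((CN G c d).card : ℤ) - ((t : ℤ) - 1) ≤ ((CN G c d).card : ℤ) := by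
          push_cast; omega
        nlinarith [mul_le_mul_of_nonneg_left h1 hc2nn]
      · push_neg at hPall
        obtain ⟨u₀, hu₀, hdB₀⟩ := hPall
        have hmeq : (CN G c d).card = t := le_antisymm (hsize d hd u₀ hu₀ hdB₀) hmt
        rw [hmeq]
        have h1 : c2 * 1 ≤ c2 * (((CN G c d).filter (fun u => d ∈ B u)).card : ℤ) := by
          apply mul_le_mul_of_nonneg_left _ hc2nn
          exact_mod_cast hppos
        push_cast
        push_cast at h1
        nlinarith
  -- sum the per-d inequalities
  have hsum := Finset.sum_le_sum key
  -- Σ p ≤ Σ |B u|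
  have hsumP : ∑ d ∈ V2.erase c, ((CN G c d).filter (fun u => d ∈ B u)).card
      ≤ ∑ u ∈ Nbr G c, (B u).card := by
    have hrw : ∀ d, ((CN G c d).filter (fun u => d ∈ B u)).card
        = ∑ u ∈ Nbr G c, (if u ∈ CN G c d ∧ d ∈ B u then 1 else 0) := by
      intro d
      rw [← Finset.card_filter]
      congr 1
      ext u
      simp only [Finset.mem_filter]
      constructor
      · rintro ⟨h1, h2⟩; exact ⟨hUsub d h1, h1, h2⟩
      · rintro ⟨_, h1, h2⟩; exact ⟨h1, h2⟩
    calc ∑ d ∈ V2.erase c, ((CN G c d).filter (fun u => d ∈ B u)).card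
        = ∑ d ∈ V2.erase c, ∑ u ∈ Nbr G c, (if u ∈ CN G c d ∧ d ∈ B u then 1 else 0) := by
          exact Finset.sum_congr rfl (fun d _ => hrw d)
      _ = ∑ u ∈ Nbr G c, ∑ d ∈ V2.erase c, (if u ∈ CN G c d ∧ d ∈ B u then 1 else 0) :=
          Finset.sum_comm
      _ ≤ ∑ u ∈ Nbr G c, (B u).card := by
          apply Finset.sum_le_sum
          intro u _
          rw [← Finset.card_filter]
          apply Finset.card_le_card
          intro d hdm
          exact (Finset.mem_filter.mp hdm).2.2
  -- the fiber map
  set φ : Fin n → Fin n := fun d =>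
    if h : (CN G c d).Nonempty then (CN G c d).min' h else c with hφ
  have hφmem : ∀ d ∈ D3, φ d ∈ CN G c d := by
    intro d hd
    have hcard : (CN G c d).card = t := ((Finset.mem_filter.mp hd).2).2.1
    have hne : (CN G c d).Nonempty := Finset.card_pos.mp (by omega)
    rw [hφ]
    simp only [dif_pos hne]
    exact Finset.min'_mem _ _
  -- structure at a p=0, m=t vertex: C u determines U d
  have hCeq : ∀ d ∈ D3, ∀ u ∈ CN G c d, CN G c d = insert u (C u) := by
    intro d hd u hu
    obtain ⟨hdV2, hPe, hcardt, _⟩ := Finset.mem_filter.mp hd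
    have hdB : d ∉ B u := by
      intro hdB
      have : u ∈ ((CN G c d).filter (fun u => d ∈ B u)) := Finset.mem_filter.mpr ⟨hu, hdB⟩
      rw [hPe] at this
      exact absurd this (Finset.notMem_empty u)
    have hsub := hstar d hdV2 u hu hdB
    have h3 := hBCcard u (hUsub d hu)
    have herase : ((CN G c d).erase u).card = t - 1 := by
      rw [Finset.card_erase_of_mem hu, hcardt]
    have hCeq' : (CN G c d).erase u = C u :=
      Finset.eq_of_subset_of_card_le hsub (by omega)
    rw [← hCeq', Finset.insert_erase hu]
  have hBempty : ∀ d ∈ D3, ∀ u ∈ CN G c d, B u = ∅ := by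
    intro d hd u hu
    obtain ⟨hdV2, hPe, hcardt, _⟩ := Finset.mem_filter.mp hd
    have hdB : d ∉ B u := by
      intro hdB
      have : u ∈ ((CN G c d).filter (fun u => d ∈ B u)) := Finset.mem_filter.mpr ⟨hu, hdB⟩
      rw [hPe] at this
      exact absurd this (Finset.notMem_empty u)
    have hsub := hstar d hdV2 u hu hdB
    have h3 := hBCcard u (hUsub d hu)
    have herase : ((CN G c d).erase u).card = t - 1 := by
      rw [Finset.card_erase_of_mem hu, hcardt]
    have h4 := Finset.card_le_card hsub
    have h5 : (B u).card = 0 := by omega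
    exact Finset.card_eq_zero.mp h5
  -- fiber bound
  have hfiber : D3.card ≤ (t - 1) * (D3.image φ).card := by
    apply Finset.card_le_mul_card_image
    intro b hb
    rcases Finset.eq_empty_or_nonempty (D3.filter (fun d => φ d = b)) with he | ⟨d₀, hd₀⟩
    · rw [he]; simp
    have hd₀D3 : d₀ ∈ D3 := (Finset.mem_filter.mp hd₀).1
    have hb₀ : φ d₀ = b := (Finset.mem_filter.mp hd₀).2
    have hbU : b ∈ CN G c d₀ := hb₀ ▸ hφmem d₀ hd₀D3
    -- fiber ⊆ (codeg set of (insert b (C b))).erase c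
    have hfibsub : D3.filter (fun d => φ d = b) ⊆
        (univ.filter (fun v => ∀ x ∈ insert b (C b), G.Adj x v)).erase c := by
      intro d hdf
      have hdD3 : d ∈ D3 := (Finset.mem_filter.mp hdf).1
      have hbd : φ d = b := (Finset.mem_filter.mp hdf).2
      have hbUd : b ∈ CN G c d := hbd ▸ hφmem d hdD3
      have hUd : CN G c d = insert b (C b) := hCeq d hdD3 b hbUd
      rw [Finset.mem_erase]
      constructor
      · exact (Finset.mem_erase.mp ((Finset.mem_filter.mp hdD3).1)).1
      · rw [Finset.mem_filter]
        refine ⟨Finset.mem_univ _, ?_⟩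
        intro x hx
        rw [← hUd] at hx
        exact (hUadj hx).symm
    have hcmem : c ∈ univ.filter (fun v => ∀ x ∈ insert b (C b), G.Adj x v) := by
      rw [Finset.mem_filter]
      refine ⟨Finset.mem_univ _, ?_⟩
      intro x hx
      rw [← hCeq d₀ hd₀D3 b hbU] at hx
      exact (mem_Nbr.mp (hUsub d₀ hx)).symm
    have hcodeg : (univ.filter (fun v => ∀ x ∈ insert b (C b), G.Adj x v)).card ≤ t := by
      have h1 : codegF G (CN G c d₀) ≤ t := ((Finset.mem_filter.mp hd₀D3).2).2.2
      rw [codegF] at h1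
      rw [← hCeq d₀ hd₀D3 b hbU]
      exact h1
    calc (D3.filter (fun d => φ d = b)).card
        ≤ ((univ.filter (fun v => ∀ x ∈ insert b (C b), G.Adj x v)).erase c).card :=
          Finset.card_le_card hfibsub
      _ = (univ.filter (fun v => ∀ x ∈ insert b (C b), G.Adj x v)).card - 1 :=
          Finset.card_erase_of_mem hcmem
      _ ≤ t - 1 := by omega
  -- Φ ⊆ {u ∈ Nbr c : B u = ∅}
  have hΦsub : D3.image φ ⊆ (Nbr G c).filter (fun u => B u = ∅) := by
    intro b hb
    obtain ⟨d, hd, rfl⟩ := Finset.mem_image.mp hb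
    have hbU := hφmem d hd
    rw [Finset.mem_filter]
    exact ⟨hUsub d hbU, hBempty d hd _ hbU⟩
  -- budget
  have hbudget : ∑ u ∈ Nbr G c, (B u).card + (t - 1) * (D3.image φ).card
      ≤ (t - 1) * (Nbr G c).card := by
    have h1 : (t - 1) * (D3.image φ).card
        = ∑ u ∈ Nbr G c, (if u ∈ D3.image φ then t - 1 else 0) := by
      have hfe : (Nbr G c).filter (fun u => u ∈ D3.image φ) = D3.image φ := by
        apply Finset.Subset.antisymm
        · intro u hu; exact (Finset.mem_filter.mp hu).2
        · intro u hu
          exact Finset.mem_filter.mpr ⟨(Finset.mem_filter.mp (hΦsub hu)).1, hu⟩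
      rw [← Finset.sum_filter, hfe, Finset.sum_const, smul_eq_mul, mul_comm]
    rw [h1, ← Finset.sum_add_distrib]
    calc ∑ u ∈ Nbr G c, ((B u).card + if u ∈ D3.image φ then t - 1 else 0)
        ≤ ∑ u ∈ Nbr G c, (t - 1) := by
          apply Finset.sum_le_sum
          intro u hu
          by_cases hΦ : u ∈ D3.image φ
          · rw [if_pos hΦ]
            have hBu : B u = ∅ := (Finset.mem_filter.mp (hΦsub hΦ)).2
            rw [hBu]
            simp
          · rw [if_neg hΦ]
            have h3 := hBCcard u hu
            omega
      _ = (t - 1) * (Nbr G c).card := by rw [Finset.sum_const, smul_eq_mul, mul_comm]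
  -- assemble
  have hD3card : ∑ d ∈ V2.erase c, (if d ∈ D3 then (1 : ℤ) else 0) = (D3.card : ℤ) := by
    have hfe : (V2.erase c).filter (fun d => d ∈ D3) = D3 := by
      apply Finset.Subset.antisymm
      · intro d hd; exact (Finset.mem_filter.mp hd).2
      · intro d hd
        exact Finset.mem_filter.mpr ⟨(Finset.mem_filter.mp hd).1, hd⟩
    rw [← Finset.sum_filter, hfe, Finset.sum_const]
    simp
  have hNN : (∑ d ∈ V2.erase c, ((CN G c d).filter (fun u => d ∈ B u)).card) + D3.card
      ≤ (t - 1) * (Nbr G c).card :=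
    (Nat.add_le_add hsumP hfiber).trans hbudget
  calc ∑ d ∈ V2.erase c,
        (c2 * (((CN G c d).card : ℤ) - ((t : ℤ) - 1)) - (G2 t G c d : ℤ))
      ≤ ∑ d ∈ V2.erase c,
          (c2 * (((CN G c d).filter (fun u => d ∈ B u)).card : ℤ)
            + c2 * (if d ∈ D3 then 1 else 0)) := Finset.sum_le_sum key
    _ = c2 * ((∑ d ∈ V2.erase c, (((CN G c d).filter (fun u => d ∈ B u)).card : ℤ))
          + (D3.card : ℤ)) := by
        rw [Finset.sum_add_distrib, ← Finset.mul_sum, ← Finset.mul_sum, hD3card, mul_add]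
    _ ≤ c2 * (((t - 1 : ℕ) : ℤ) * ((Nbr G c).card : ℤ)) := by
        apply mul_le_mul_of_nonneg_left _ hc2nn
        have : ((∑ d ∈ V2.erase c, ((CN G c d).filter (fun u => d ∈ B u)).card : ℕ) : ℤ)
            + (D3.card : ℤ) ≤ (((t - 1) * (Nbr G c).card : ℕ) : ℤ) := by
          exact_mod_cast hNN
        push_cast at this ⊢
        linarith
    _ = c2 * ((t : ℤ) - 1) * ((Nbr G c).card : ℤ) := by
        rw [Nat.cast_sub ht]
        push_cast
        ring


lemma main (t : ℕ) (ht : 1 ≤ t) :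
    ∀ N : ℕ, ∀ G : SimpleGraph (Fin n), ∀ V1 V2 : Finset (Fin n),
      Disjoint V1 V2 → V1 ∪ V2 = Finset.univ →
      (∀ ⦃u v : Fin n⦄, G.Adj u v → (u ∈ V1 ∧ v ∈ V2) ∨ (u ∈ V2 ∧ v ∈ V1)) →
      ¬ ContainsCopy (Bgraph t) G → V2.card = N →
      (t.choose 2 : ℤ) * (2 * ∑ u ∈ V1, ((Nbr G u).card : ℤ)^2
          - (2 * (t : ℤ) - 1) * ∑ u : Fin n, ((Nbr G u).card : ℤ)
          - 2 * ((t : ℤ) - 1) * (V2.card : ℤ)^2)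
        ≤ 4 * (NC t G V1 V2 : ℤ) := by
  intro N
  induction N with
  | zero =>
    intro G V1 V2 hdisj hcover hbip hfree hN
    have hV2 : V2 = ∅ := Finset.card_eq_zero.mp hN
    have hNbr : ∀ u : Fin n, Nbr G u = ∅ := by
      intro u
      ext v
      simp only [mem_Nbr, Finset.notMem_empty, iff_false]
      intro hadj
      rcases hbip hadj with ⟨_, h⟩ | ⟨h, _⟩ <;>
        · rw [hV2] at h; exact absurd h (Finset.notMem_empty _)
    have h0 : ∀ u : Fin n, ((Nbr G u).card : ℤ) = 0 := by
      intro u; rw [hNbr u]; simp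
    simp only [h0, hN]
    simp only [Finset.sum_const_zero, ne_eq, OfNat.ofNat_ne_zero, not_false_eq_true,
      zero_pow, mul_zero, Nat.cast_zero, sub_zero, zero_sub, sub_self]
    positivity
  | succ N ih =>
    intro G V1 V2 hdisj hcover hbip hfree hN
    obtain ⟨c, hc⟩ := Finset.card_pos.mp (by omega : 0 < V2.card)
    have hnot12 : ∀ {a : Fin n}, a ∈ V1 → a ∈ V2 → False := fun ha hb =>
      (Finset.disjoint_left.mp hdisj ha) hb
    have hdisj' : Disjoint (insert c V1) (V2.erase c) := by
      rw [Finset.disjoint_left]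
      intro a ha ha'
      rcases Finset.mem_insert.mp ha with rfl | ha
      · exact (Finset.mem_erase.mp ha').1 rfl
      · exact hnot12 ha (Finset.mem_of_mem_erase ha')
    have hcover' : insert c V1 ∪ V2.erase c = Finset.univ := by
      ext a
      simp only [Finset.mem_union, Finset.mem_insert, Finset.mem_erase, Finset.mem_univ,
        iff_true]
      by_cases hac : a = c
      · exact Or.inl (Or.inl hac)
      · have : a ∈ V1 ∪ V2 := by rw [hcover]; exact Finset.mem_univ _
        rcases Finset.mem_union.mp this with h | h
        · exact Or.inl (Or.inr h)
        · exact Or.inr ⟨hac, h⟩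
    have hbip' : ∀ ⦃u v : Fin n⦄, (rmv G c).Adj u v →
        (u ∈ insert c V1 ∧ v ∈ V2.erase c) ∨ (u ∈ V2.erase c ∧ v ∈ insert c V1) := by
      intro u v h
      obtain ⟨h1, h2, h3⟩ := rmv_adj.mp h
      rcases hbip h1 with ⟨ha, hb⟩ | ⟨ha, hb⟩
      · exact Or.inl ⟨Finset.mem_insert_of_mem ha, Finset.mem_erase.mpr ⟨h3, hb⟩⟩
      · exact Or.inr ⟨Finset.mem_erase.mpr ⟨h2, ha⟩, Finset.mem_insert_of_mem hb⟩
    have hfree' : ¬ ContainsCopy (Bgraph t) (rmv G c) := by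
      rintro ⟨f, hf1, hf2⟩
      exact hfree ⟨f, hf1, fun a b h => rmv_le (hf2 h)⟩
    have hN' : (V2.erase c).card = N := by
      rw [Finset.card_erase_of_mem hc, hN]; omega
    have IH := ih (rmv G c) (insert c V1) (V2.erase c) hdisj' hcover' hbip' hfree' hN'
    have hA' := sum_sq_rmv (G := G) (c := c) hdisj hbip hc
    have hS' := sum_deg_rmv (G := G) (c := c)
    have hM := sum_CN (G := G) (c := c) hdisj hbip hc hcover
    have hch := charging t ht G V1 V2 hdisj hbip hfree c hc
    have hQz : (∑ d ∈ V2.erase c, (G2 t G c d : ℤ)) ≤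
        (((univ : Finset (Finset (Fin n) × Finset (Fin n))).filter
          (fun p => Pred t G V1 V2 p ∧ c ∈ p.2)).card : ℤ) := by
      exact_mod_cast count_G2 (t := t) hdisj hbip hc
    have hNCz : (NC t (rmv G c) (insert c V1) (V2.erase c) : ℤ) +
        (((univ : Finset (Finset (Fin n) × Finset (Fin n))).filter
          (fun p => Pred t G V1 V2 p ∧ c ∈ p.2)).card : ℤ) ≤ (NC t G V1 V2 : ℤ) := by
      exact_mod_cast count_split (t := t) hdisj hc
    -- expand the sum in the charging inequality
    have hchL : ∑ d ∈ V2.erase c,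
        ((t.choose 2 : ℤ) * (((CN G c d).card : ℤ) - ((t : ℤ) - 1)) - (G2 t G c d : ℤ))
        = (t.choose 2 : ℤ) * ((∑ u ∈ Nbr G c, ((Nbr G u).card : ℤ)) - ((Nbr G c).card : ℤ)
            - ((t : ℤ) - 1) * (N : ℤ))
          - ∑ d ∈ V2.erase c, (G2 t G c d : ℤ) := by
      rw [Finset.sum_sub_distrib, ← Finset.mul_sum, Finset.sum_sub_distrib, hM,
        Finset.sum_const, hN']
      simp only [nsmul_eq_mul]
      ring
    rw [hchL] at hch
    rw [hA', hS', hN'] at IH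
    rw [hN]
    have hc2T : (0 : ℤ) ≤ (t.choose 2 : ℤ) * ((t : ℤ) - 1) := by
      have h1 : (0 : ℤ) ≤ (t.choose 2 : ℤ) := by positivity
      have h2 : (0 : ℤ) ≤ (t : ℤ) - 1 := by
        have : (1 : ℤ) ≤ (t : ℤ) := by exact_mod_cast ht
        linarith
      positivity
    push_cast
    push_cast at IH hch hQz hNCz
    nlinarith [hch, IH, hQz, hNCz, hc2T]



end BtAux


theorem bip_NC4_lower (t n : ℕ) (ht : 1 ≤ t) (G : SimpleGraph (Fin n))
    (V1 V2 : Finset (Fin n)) (hdisj : Disjoint V1 V2) (hcover : V1 ∪ V2 = Finset.univ)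
    (hbip : ∀ ⦃u v : Fin n⦄, G.Adj u v → (u ∈ V1 ∧ v ∈ V2) ∨ (u ∈ V2 ∧ v ∈ V1))
    (hfree : ¬ ContainsCopy (Bgraph t) G) :
    (1 / 2 : ℝ) * (t.choose 2 : ℝ) *
        ((∑ u ∈ V1, ((G.neighborSet u).ncard : ℝ) ^ 2)
          - (2 * (t : ℝ) - 1) * (G.edgeSet.ncard : ℝ) - ((t : ℝ) - 1) * (V2.card : ℝ) ^ 2)
      ≤ ({p : Finset (Fin n) × Finset (Fin n) |
            p.1 ⊆ V1 ∧ p.2 ⊆ V2 ∧ p.1.card = 2 ∧ p.2.card = 2 ∧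
            (∀ u ∈ p.1, ∀ v ∈ p.2, G.Adj u v) ∧
            ∃ S : Finset (Fin n), S.card = t ∧ S.card + 1 ≤ codeg G S ∧
              (p.1 ∪ p.2) ∩ V1 ⊆ S}.ncard : ℝ) := by
  have hcodeg : ∀ S : Finset (Fin n), codeg G S = BtAux.codegF G S := by
    intro S
    rw [codeg, BtAux.codegF]
    have hset : {v : Fin n | ∀ u ∈ S, G.Adj u v}
        = ↑(Finset.univ.filter (fun v => ∀ u ∈ S, G.Adj u v)) := by
      ext v
      simp
    rw [hset, Set.ncard_coe_finset]
  -- the set equals the Pred filter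
  have hsetN : {p : Finset (Fin n) × Finset (Fin n) |
        p.1 ⊆ V1 ∧ p.2 ⊆ V2 ∧ p.1.card = 2 ∧ p.2.card = 2 ∧
        (∀ u ∈ p.1, ∀ v ∈ p.2, G.Adj u v) ∧
        ∃ S : Finset (Fin n), S.card = t ∧ S.card + 1 ≤ codeg G S ∧
          (p.1 ∪ p.2) ∩ V1 ⊆ S}.ncard = BtAux.NC t G V1 V2 := by
    have hseteq : {p : Finset (Fin n) × Finset (Fin n) |
        p.1 ⊆ V1 ∧ p.2 ⊆ V2 ∧ p.1.card = 2 ∧ p.2.card = 2 ∧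
        (∀ u ∈ p.1, ∀ v ∈ p.2, G.Adj u v) ∧
        ∃ S : Finset (Fin n), S.card = t ∧ S.card + 1 ≤ codeg G S ∧
          (p.1 ∪ p.2) ∩ V1 ⊆ S}
        = ↑((Finset.univ : Finset (Finset (Fin n) × Finset (Fin n))).filter
            (BtAux.Pred t G V1 V2)) := by
      ext p
      simp only [Set.mem_setOf_eq, Finset.coe_filter, Finset.mem_univ, true_and,
        BtAux.Pred, hcodeg]
    rw [hseteq, Set.ncard_coe_finset, BtAux.NC]
  have hnbr : ∀ u : Fin n, (G.neighborSet u).ncard = (BtAux.Nbr G u).card := by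
    intro u
    have hset : G.neighborSet u = ↑(BtAux.Nbr G u) := by
      ext v
      simp [BtAux.mem_Nbr]
    rw [hset, Set.ncard_coe_finset]
  letI : DecidableRel G.Adj := Classical.decRel _
  have hedge : ∑ u : Fin n, (BtAux.Nbr G u).card = 2 * G.edgeSet.ncard := by
    have h1 : G.edgeSet.ncard = G.edgeFinset.card := by
      rw [← SimpleGraph.coe_edgeFinset, Set.ncard_coe_finset]
    have h2 : ∀ u : Fin n, G.degree u = (BtAux.Nbr G u).card := by
      intro u
      rw [← SimpleGraph.card_neighborFinset_eq_degree]
      congr 1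
      ext v
      simp [BtAux.mem_Nbr]
    rw [h1, ← SimpleGraph.sum_degrees_eq_twice_card_edges]
    exact Finset.sum_congr rfl (fun u _ => (h2 u).symm)
  have key := BtAux.main t ht V2.card G V1 V2 hdisj hcover hbip hfree rfl
  have keyR : ((t.choose 2 : ℝ)) * (2 * ∑ u ∈ V1, ((BtAux.Nbr G u).card : ℝ)^2
      - (2 * (t : ℝ) - 1) * ∑ u : Fin n, ((BtAux.Nbr G u).card : ℝ)
      - 2 * ((t : ℝ) - 1) * (V2.card : ℝ)^2)
      ≤ 4 * (BtAux.NC t G V1 V2 : ℝ) := by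
    have : ((t.choose 2 : ℤ) * (2 * ∑ u ∈ V1, ((BtAux.Nbr G u).card : ℤ)^2
        - (2 * (t : ℤ) - 1) * ∑ u : Fin n, ((BtAux.Nbr G u).card : ℤ)
        - 2 * ((t : ℤ) - 1) * (V2.card : ℤ)^2) : ℝ)
        ≤ ((4 * (BtAux.NC t G V1 V2 : ℤ) : ℤ) : ℝ) := by exact_mod_cast key
    push_cast at this
    convert this using 2 <;> push_cast <;> ring
  have hsum1 : ∑ u ∈ V1, ((G.neighborSet u).ncard : ℝ)^2
      = ∑ u ∈ V1, ((BtAux.Nbr G u).card : ℝ)^2 := by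
    apply Finset.sum_congr rfl
    intro u _
    rw [hnbr u]
  have hsum2 : ∑ u : Fin n, ((BtAux.Nbr G u).card : ℝ) = 2 * (G.edgeSet.ncard : ℝ) := by
    have := congrArg (fun x : ℕ => (x : ℝ)) hedge
    push_cast at this
    rw [← this]
  rw [hsetN, hsum1]
  rw [hsum2] at keyR
  linarith
end

section
/- Let t be a positive integer. For every ε > 0 there exists N such that for all n ≥ N, every graph G on n vertices containing no subgraph isomorphic to B_t satisfies N(C_4, G) + ε·n² ≥ (1/2)·C(t,2)·( Σ_{u ∈ V(G)} d(u)² − 2(4t−1)·e(G) − (t−1)·n² ), where C(t,2) is the binomial coefficient t choose 2. -/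
open SimpleGraph

namespace BtProof
open Finset
variable {V : Type*} [Fintype V] [DecidableEq V] {G : SimpleGraph V} [DecidableRel G.Adj]

def CN (G : SimpleGraph V) [DecidableRel G.Adj] (A : Finset V) : Finset V :=
  univ.filter (fun z => ∀ a ∈ A, G.Adj a z)
def cod (G : SimpleGraph V) [DecidableRel G.Adj] (A : Finset V) : ℕ := (CN G A).card

lemma mem_CN {A : Finset V} {z : V} : z ∈ CN G A ↔ ∀ a ∈ A, G.Adj a z := by simp [CN]
lemma mem_CN_pair {a b z : V} : z ∈ CN G {a, b} ↔ G.Adj a z ∧ G.Adj b z := by simp [CN]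
lemma CN_anti {A B : Finset V} (h : A ⊆ B) : CN G B ⊆ CN G A :=
  fun z hz => mem_CN.mpr (fun a ha => (mem_CN.mp hz) a (h ha))

lemma codeg_eq_cod (S : Finset V) : codeg G S = cod G S := by
  have h : {v : V | ∀ u ∈ S, G.Adj u v} = ↑(CN G S) := by
    ext z; simp [CN]
  rw [codeg, h, Set.ncard_coe_finset, cod]

lemma pick_injective : ∀ (k : ℕ) (C : Fin k → Finset V) (F : Finset V),
    (∀ i, k + F.card ≤ (C i).card) →
    ∃ z : Fin k → V, Function.Injective z ∧ (∀ i, z i ∈ C i) ∧ ∀ i, z i ∉ F := by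
  intro k
  induction k with
  | zero => exact fun C F _ => ⟨fun i => i.elim0, fun i => i.elim0, fun i => i.elim0, fun i => i.elim0⟩
  | succ k ih =>
    intro C F hC
    have hne : (C 0 \ F).Nonempty := by
      rw [← Finset.card_pos]
      have h1 := hC 0
      have h2 := Finset.card_le_card_sdiff_add_card (s := C 0) (t := F)
      omega
    obtain ⟨y0, hy0⟩ := hne
    rw [Finset.mem_sdiff] at hy0
    obtain ⟨z', hz'inj, hz'mem, hz'F⟩ := ih (fun i => C i.succ) (insert y0 F)
      (fun i => le_trans (by have := Finset.card_insert_le y0 F; omega) (hC i.succ))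
    refine ⟨Fin.cases y0 z', ?_, ?_, ?_⟩
    · intro i j hij
      induction i using Fin.cases with
      | zero =>
        induction j using Fin.cases with
        | zero => rfl
        | succ j =>
          exfalso; simp only [Fin.cases_zero, Fin.cases_succ] at hij
          exact hz'F j (hij ▸ Finset.mem_insert_self y0 F)
      | succ i =>
        induction j using Fin.cases with
        | zero =>
          exfalso; simp only [Fin.cases_zero, Fin.cases_succ] at hij
          exact hz'F i (hij ▸ Finset.mem_insert_self y0 F)
        | succ j =>
          simp only [Fin.cases_succ] at hij
          exact congrArg Fin.succ (hz'inj hij)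
    · intro i
      induction i using Fin.cases with
      | zero => simpa using hy0.1
      | succ i => simpa using hz'mem i
    · intro i
      induction i using Fin.cases with
      | zero => simpa using hy0.2
      | succ i =>
        simp only [Fin.cases_succ]
        intro hmem
        exact hz'F i (Finset.mem_insert_of_mem hmem)

lemma bt_embed {t : ℕ} {u r : V} {x y : Fin t → V}
    (hur : G.Adj u r)
    (hux : ∀ i, G.Adj u (x i)) (hry : ∀ i, G.Adj r (y i)) (hxy : ∀ i, G.Adj (x i) (y i))
    (hxinj : Function.Injective x) (hyinj : Function.Injective y)
    (hxy' : ∀ i j, x i ≠ y j) (hxr : ∀ i, x i ≠ r) (hyu : ∀ i, y i ≠ u) :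
    ContainsCopy (Bgraph t) G := by
  classical
  have hxu : ∀ i, x i ≠ u := fun i => (hux i).ne'
  have hyr : ∀ i, y i ≠ r := fun i => (hry i).ne'
  have hune : u ≠ r := hur.ne
  refine ⟨fun p => Sum.elim (fun _ => ![u, r] p.1) (fun k => ![x k, y k] p.1) p.2, ?_, ?_⟩
  · rintro ⟨i, p⟩ ⟨j, q⟩ h
    dsimp only at h
    rcases p with p | p <;> rcases q with q | q
    · fin_cases i <;> fin_cases j <;>
        simp only [Sum.elim_inl, Matrix.cons_val_zero, Matrix.cons_val_one, Matrix.head_cons] at h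
      · exact Prod.ext rfl (congrArg Sum.inl (Subsingleton.elim p q))
      · exact absurd h hune
      · exact absurd h hune.symm
      · exact Prod.ext rfl (congrArg Sum.inl (Subsingleton.elim p q))
    · fin_cases i <;> fin_cases j <;>
        simp only [Sum.elim_inl, Sum.elim_inr, Matrix.cons_val_zero, Matrix.cons_val_one,
          Matrix.head_cons] at h
      · exact absurd h (Ne.symm (hxu q))
      · exact absurd h (Ne.symm (hyu q))
      · exact absurd h (Ne.symm (hxr q))
      · exact absurd h (Ne.symm (hyr q))
    · fin_cases i <;> fin_cases j <;>
        simp only [Sum.elim_inl, Sum.elim_inr, Matrix.cons_val_zero, Matrix.cons_val_one,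
          Matrix.head_cons] at h
      · exact absurd h (hxu p)
      · exact absurd h (hxr p)
      · exact absurd h (hyu p)
      · exact absurd h (hyr p)
    · fin_cases i <;> fin_cases j <;>
        simp only [Sum.elim_inr, Matrix.cons_val_zero, Matrix.cons_val_one,
          Matrix.head_cons] at h
      · exact Prod.ext rfl (congrArg Sum.inr (hxinj h))
      · exact absurd h (hxy' p q)
      · exact absurd h (Ne.symm (hxy' q p))
      · exact Prod.ext rfl (congrArg Sum.inr (hyinj h))
  · rintro ⟨i, p⟩ ⟨j, q⟩ hadj
    rw [Bgraph, SimpleGraph.boxProd_adj] at hadj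
    dsimp only
    rcases hadj with ⟨htop, hpq⟩ | ⟨hcb, hij⟩
    · rw [SimpleGraph.top_adj] at htop
      dsimp only at hpq htop
      subst hpq
      rcases p with p | p <;> fin_cases i <;> fin_cases j <;>
          first
          | exact absurd rfl htop
          | simp only [Sum.elim_inl, Sum.elim_inr, Matrix.cons_val_zero, Matrix.cons_val_one,
              Matrix.head_cons]
      · exact hur
      · exact hur.symm
      · exact hxy p
      · exact (hxy p).symm
    · dsimp only at hcb hij
      subst hij
      rw [completeBipartiteGraph_adj] at hcb
      rcases p with p | p <;> rcases q with q | q <;>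
        simp only [Sum.isLeft_inl, Sum.isRight_inl, Sum.isLeft_inr, Sum.isRight_inr,
          Bool.true_and, Bool.and_true, Bool.false_and, Bool.and_false, or_false, false_or,
          and_true, true_and, and_false, false_and, or_self] at hcb <;>
        [skip; skip; skip; skip] <;> try exact hcb.elim
      · exact absurd hcb (by simp)
      · fin_cases i <;>
          simp only [Sum.elim_inl, Sum.elim_inr, Matrix.cons_val_zero, Matrix.cons_val_one,
            Matrix.head_cons]
        · exact hux q
        · exact hry q
      · fin_cases i <;>
          simp only [Sum.elim_inl, Sum.elim_inr, Matrix.cons_val_zero, Matrix.cons_val_one,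
            Matrix.head_cons]
        · exact (hux p).symm
        · exact (hry p).symm
      · exact absurd hcb (by simp)



/-- Lemma 1: in a B_t-free graph, every vertex `a` adjacent to `w` has fewer than `t`
    heavy-codegree partners inside `N(w)`. -/
lemma lemma1 {t : ℕ} (hfree : ¬ ContainsCopy (Bgraph t) G) {a w : V} (haw : G.Adj a w) :
    ((G.neighborFinset w).filter (fun b => a ≠ b ∧ 2*t+2 ≤ cod G {a, b})).card < t := by
  by_contra hge
  push_neg at hge
  obtain ⟨s, hs_sub, hs_card⟩ := Finset.exists_subset_card_eq hge
  have hprop : ∀ c ∈ s, c ∈ G.neighborFinset w ∧ a ≠ c ∧ 2*t+2 ≤ cod G {a, c} := by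
    intro c hc
    have := hs_sub hc
    rw [Finset.mem_filter] at this
    exact ⟨this.1, this.2⟩
  set b : Fin t → V := fun i => ↑(s.equivFin.symm (finCongr hs_card.symm i)) with hbdef
  have hbmem : ∀ i, b i ∈ s := fun i => (s.equivFin.symm (finCongr hs_card.symm i)).2
  have hbinj : Function.Injective b := by
    intro i j hij
    have h2 : s.equivFin.symm (finCongr hs_card.symm i)
        = s.equivFin.symm (finCongr hs_card.symm j) := Subtype.ext hij
    have h3 := s.equivFin.symm.injective h2
    exact (finCongr hs_card.symm).injective h3
  set F : Finset V := insert a (insert w s) with hFdef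
  have hFcard : F.card ≤ t + 2 := by
    calc F.card ≤ (insert w s).card + 1 := Finset.card_insert_le _ _
    _ ≤ s.card + 1 + 1 := by have := Finset.card_insert_le w s; omega
    _ = t + 2 := by omega
  obtain ⟨z, hzinj, hzmem, hzF⟩ := pick_injective t (fun i => CN G {a, b i}) F
    (fun i => by
      have h1 : 2*t+2 ≤ (CN G {a, b i}).card := (hprop _ (hbmem i)).2.2
      show t + F.card ≤ (CN G {a, b i}).card
      omega)
  refine hfree (bt_embed haw (fun i => (mem_CN_pair.mp (hzmem i)).1)
    (fun i => (G.mem_neighborFinset w (b i)).mp (hprop _ (hbmem i)).1)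
    (fun i => ((mem_CN_pair.mp (hzmem i)).2).symm)
    hzinj hbinj ?_ ?_ ?_)
  · intro i j
    intro hcon
    exact hzF i (hcon ▸ (Finset.mem_insert_of_mem (Finset.mem_insert_of_mem (hbmem j))))
  · intro i hcon
    exact hzF i (hcon ▸ (Finset.mem_insert_of_mem (Finset.mem_insert_self w s)))
  · intro i hcon
    exact (hprop _ (hbmem i)).2.1 hcon.symm

def Meets (p q : V × V) : Prop := p.1 = q.1 ∨ p.1 = q.2 ∨ p.2 = q.1 ∨ p.2 = q.2

instance : DecidableEq (V × V) := instDecidableEqProd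

instance (p q : V × V) : Decidable (Meets p q) := by unfold Meets; infer_instance

lemma meets_symm {p q : V × V} (h : Meets p q) : Meets q p := by
  rcases h with h | h | h | h <;> unfold Meets <;> tauto

lemma meets_refl (p : V × V) : Meets p p := Or.inl rfl

set_option linter.unusedSectionVars false in
lemma family_bound (K : ℕ) : ∀ (k : ℕ) (fam : Finset (V × V)),
    (∀ p ∈ fam, (fam.filter (fun q => Meets p q)).card ≤ K) →
    (∀ sub ⊆ fam, (∀ p ∈ sub, ∀ q ∈ sub, p ≠ q → ¬ Meets p q) → sub.card < k) →
    fam.card ≤ k * K := by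
  intro k
  induction k with
  | zero =>
    intro fam _ hnd
    rcases fam.eq_empty_or_nonempty with h | ⟨p₀, h₀⟩
    · simp [h]
    · exfalso
      have := hnd {p₀} (by simpa using h₀) (by
        intro p hp q hq hne
        rw [Finset.mem_singleton] at hp hq
        exact absurd (hp.trans hq.symm) hne)
      simp at this
  | succ k ih =>
    intro fam hK hnd
    rcases fam.eq_empty_or_nonempty with h | ⟨p₀, h₀⟩
    · simp [h]
    · have hsplit := Finset.card_filter_add_card_filter_not
        (s := fam) (p := fun q => Meets p₀ q)
      set rest := fam.filter (fun q => ¬ Meets p₀ q) with hrest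
      have hp₀rest : p₀ ∉ rest := by
        rw [hrest, Finset.mem_filter]
        push_neg
        exact fun _ => meets_refl p₀
      have hrest_le : rest.card ≤ k * K := by
        apply ih
        · intro p hp
          calc (rest.filter (fun q => Meets p q)).card
              ≤ (fam.filter (fun q => Meets p q)).card := by
                apply Finset.card_le_card
                exact Finset.filter_subset_filter _ (Finset.filter_subset _ _)
          _ ≤ K := hK p ((Finset.filter_subset _ _) hp)
        · intro sub hsub hpw
          have hp₀sub : p₀ ∉ sub := fun hmem => hp₀rest (hsub hmem)
          have : (insert p₀ sub).card < k + 1 := by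
            apply hnd
            · intro q hq
              rcases Finset.mem_insert.mp hq with h | h
              · exact h ▸ h₀
              · exact (Finset.filter_subset _ _) (hsub h)
            · intro p hp q hq hne
              rcases Finset.mem_insert.mp hp with hp' | hp' <;>
                rcases Finset.mem_insert.mp hq with hq' | hq'
              · exact absurd (hp'.trans hq'.symm) hne
              · subst hp'
                have := (Finset.mem_filter.mp (hsub hq')).2
                exact this
              · subst hq'
                intro hm
                exact (Finset.mem_filter.mp (hsub hp')).2 (meets_symm hm)
              · exact hpw p hp' q hq' hne
          rw [Finset.card_insert_of_notMem hp₀sub] at this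
          omega
      have h1 : (fam.filter (fun q => Meets p₀ q)).card ≤ K := hK p₀ h₀
      have h2 : (k+1)*K = k*K + K := by ring
      omega

/-- the per-edge fiber of "bounded opposite edges" -/
def fib (G : SimpleGraph V) [DecidableRel G.Adj] (t : ℕ) (u r : V) : Finset (V × V) :=
  (univ ×ˢ univ).filter (fun q =>
    G.Adj u q.1 ∧ G.Adj r q.2 ∧ G.Adj q.1 q.2 ∧ q.1 ≠ r ∧ q.2 ≠ u ∧
    cod G {r, q.1} ≤ 2*t+1 ∧ cod G {u, q.2} ≤ 2*t+1)

lemma mem_fib {t : ℕ} {u r : V} {q : V × V} : q ∈ fib G t u r ↔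
    G.Adj u q.1 ∧ G.Adj r q.2 ∧ G.Adj q.1 q.2 ∧ q.1 ≠ r ∧ q.2 ≠ u ∧
    cod G {r, q.1} ≤ 2*t+1 ∧ cod G {u, q.2} ≤ 2*t+1 := by
  simp [fib]

lemma lemma9 {t : ℕ} (hfree : ¬ ContainsCopy (Bgraph t) G) {u r : V} (hur : G.Adj u r) :
    (fib G t u r).card ≤ t * (4*(2*t+1)) := by
  apply family_bound (4*(2*t+1)) t (fib G t u r)
  · -- meeting bound
    intro p₀ hp₀
    obtain ⟨h₀1, h₀2, h₀3, h₀4, h₀5, h₀6, h₀7⟩ := mem_fib.mp hp₀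
    have hsub : (fib G t u r).filter (fun q => Meets q p₀) ⊆
        (((fib G t u r).filter (fun q => q.1 = p₀.1) ∪
          (fib G t u r).filter (fun q => q.1 = p₀.2)) ∪
         ((fib G t u r).filter (fun q => q.2 = p₀.1) ∪
          (fib G t u r).filter (fun q => q.2 = p₀.2))) := by
      intro q hq
      rw [Finset.mem_filter] at hq
      rcases hq.2 with h | h | h | h <;>
        simp only [Finset.mem_union, Finset.mem_filter] <;> tauto
    have key : ∀ (c : V) (sel : V × V → V) (oth : V × V → V),
        (∀ q, sel q = q.1 ∧ oth q = q.2 ∨ sel q = q.2 ∧ oth q = q.1) → True := fun _ _ _ _ => trivial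
    -- four bounds
    have hb1 : ((fib G t u r).filter (fun q => q.1 = p₀.1)).card ≤ 2*t+1 := by
      calc ((fib G t u r).filter (fun q => q.1 = p₀.1)).card
          ≤ (CN G {r, p₀.1}).card := by
            apply Finset.card_le_card_of_injOn (fun q => q.2)
            · intro q hq
              rw [Finset.mem_coe, Finset.mem_filter, mem_fib] at hq
              exact mem_CN_pair.mpr ⟨hq.1.2.1, hq.2 ▸ hq.1.2.2.1⟩
            · intro q hq q' hq' hqq'
              simp only [Finset.coe_filter, Set.mem_setOf_eq] at hq hq'
              exact Prod.ext (hq.2.trans hq'.2.symm) hqq'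
      _ ≤ 2*t+1 := h₀6
    have hb2 : ((fib G t u r).filter (fun q => q.1 = p₀.2)).card ≤ 2*t+1 := by
      rcases ((fib G t u r).filter (fun q => q.1 = p₀.2)).eq_empty_or_nonempty with he | ⟨w, hw⟩
      · rw [he]; simp
      · rw [Finset.mem_filter, mem_fib] at hw
        calc ((fib G t u r).filter (fun q => q.1 = p₀.2)).card
            ≤ (CN G {r, p₀.2}).card := by
              apply Finset.card_le_card_of_injOn (fun q => q.2)
              · intro q hq
                rw [Finset.mem_coe, Finset.mem_filter, mem_fib] at hq
                exact mem_CN_pair.mpr ⟨hq.1.2.1, hq.2 ▸ hq.1.2.2.1⟩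
              · intro q hq q' hq' hqq'
                simp only [Finset.coe_filter, Set.mem_setOf_eq] at hq hq'
                exact Prod.ext (hq.2.trans hq'.2.symm) hqq'
        _ ≤ 2*t+1 := hw.2 ▸ hw.1.2.2.2.2.2.1
    have hb3 : ((fib G t u r).filter (fun q => q.2 = p₀.1)).card ≤ 2*t+1 := by
      rcases ((fib G t u r).filter (fun q => q.2 = p₀.1)).eq_empty_or_nonempty with he | ⟨w, hw⟩
      · rw [he]; simp
      · rw [Finset.mem_filter, mem_fib] at hw
        calc ((fib G t u r).filter (fun q => q.2 = p₀.1)).card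
            ≤ (CN G {u, p₀.1}).card := by
              apply Finset.card_le_card_of_injOn (fun q => q.1)
              · intro q hq
                rw [Finset.mem_coe, Finset.mem_filter, mem_fib] at hq
                exact mem_CN_pair.mpr ⟨hq.1.1, hq.2 ▸ (hq.1.2.2.1).symm⟩
              · intro q hq q' hq' hqq'
                simp only [Finset.coe_filter, Set.mem_setOf_eq] at hq hq'
                exact Prod.ext hqq' (hq.2.trans hq'.2.symm)
        _ ≤ 2*t+1 := hw.2 ▸ hw.1.2.2.2.2.2.2
    have hb4 : ((fib G t u r).filter (fun q => q.2 = p₀.2)).card ≤ 2*t+1 := by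
      calc ((fib G t u r).filter (fun q => q.2 = p₀.2)).card
          ≤ (CN G {u, p₀.2}).card := by
            apply Finset.card_le_card_of_injOn (fun q => q.1)
            · intro q hq
              rw [Finset.mem_coe, Finset.mem_filter, mem_fib] at hq
              exact mem_CN_pair.mpr ⟨hq.1.1, hq.2 ▸ (hq.1.2.2.1).symm⟩
            · intro q hq q' hq' hqq'
              simp only [Finset.coe_filter, Set.mem_setOf_eq] at hq hq'
              exact Prod.ext hqq' (hq.2.trans hq'.2.symm)
      _ ≤ 2*t+1 := h₀7
    have hmcomm : (fib G t u r).filter (fun q => Meets p₀ q) =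
        (fib G t u r).filter (fun q => Meets q p₀) := by
      apply Finset.filter_congr
      intro q _
      constructor
      · exact fun h => meets_symm h
      · exact fun h => meets_symm h
    calc ((fib G t u r).filter (fun q => Meets p₀ q)).card
        = ((fib G t u r).filter (fun q => Meets q p₀)).card := by rw [hmcomm]
      _ ≤ _ := Finset.card_le_card hsub
      _ ≤ _ := Finset.card_union_le _ _
      _ ≤ (2*t+1) + (2*t+1) + ((2*t+1) + (2*t+1)) := by
          have := Finset.card_union_le ((fib G t u r).filter (fun q => q.1 = p₀.1))
            ((fib G t u r).filter (fun q => q.1 = p₀.2))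
          have := Finset.card_union_le ((fib G t u r).filter (fun q => q.2 = p₀.1))
            ((fib G t u r).filter (fun q => q.2 = p₀.2))
          omega
      _ ≤ 4*(2*t+1) := by ring_nf; omega
  · -- no t pairwise disjoint members
    intro sub hsub hpw
    by_contra hge
    push_neg at hge
    obtain ⟨s, hs_sub, hs_card⟩ := Finset.exists_subset_card_eq hge
    set b : Fin t → V × V := fun i => ↑(s.equivFin.symm (finCongr hs_card.symm i)) with hbdef
    have hbmem : ∀ i, b i ∈ s := fun i => (s.equivFin.symm (finCongr hs_card.symm i)).2
    have hbinj : Function.Injective b := by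
      intro i j hij
      exact (finCongr hs_card.symm).injective
        (s.equivFin.symm.injective (Subtype.ext hij))
    have hfib : ∀ i, b i ∈ fib G t u r := fun i => hsub (hs_sub (hbmem i))
    have hprop := fun i => mem_fib.mp (hfib i)
    have hdisj : ∀ i j, i ≠ j → ¬ Meets (b i) (b j) := by
      intro i j hne
      exact hpw (b i) (hs_sub (hbmem i)) (b j) (hs_sub (hbmem j))
        (fun hc => hne (hbinj hc))
    refine hfree (bt_embed hur (x := fun i => (b i).1) (y := fun i => (b i).2)
      (fun i => (hprop i).1) (fun i => (hprop i).2.1) (fun i => (hprop i).2.2.1)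
      ?_ ?_ ?_ (fun i => (hprop i).2.2.2.1) (fun i => (hprop i).2.2.2.2.1))
    · intro i j hij
      by_contra hne
      exact hdisj i j hne (Or.inl hij)
    · intro i j hij
      by_contra hne
      exact hdisj i j hne (Or.inr (Or.inr (Or.inr hij)))
    · intro i j hij
      by_cases hijeq : i = j
      · subst hijeq
        exact (hprop i).2.2.1.ne hij
      · exact hdisj i j hijeq (Or.inr (Or.inl hij))

section Counting

/-- ordered pairs with distinct coordinates -/
def PP (V : Type*) [Fintype V] [DecidableEq V] : Finset (V × V) :=
  (univ ×ˢ univ).filter (fun p => p.1 ≠ p.2)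

/-- ordered adjacent pairs -/
def AdjP (G : SimpleGraph V) [DecidableRel G.Adj] : Finset (V × V) :=
  (univ ×ˢ univ).filter (fun p => G.Adj p.1 p.2)

def pMid (G : SimpleGraph V) [DecidableRel G.Adj] (t : ℕ) (p : V × V) : Prop :=
  t ≤ cod G {p.1, p.2} ∧ cod G {p.1, p.2} ≤ 2*t+1
def pGood (G : SimpleGraph V) [DecidableRel G.Adj] (t : ℕ) (p : V × V) : Prop :=
  cod G {p.1, p.2} = t ∧ t+1 ≤ cod G (CN G {p.1, p.2})
def pCaseA (G : SimpleGraph V) [DecidableRel G.Adj] (t : ℕ) (p : V × V) : Prop :=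
  ∃ q : V × V, q.1 ∈ CN G {p.1, p.2} ∧ q.2 ∈ CN G {p.1, p.2} ∧
  q.1 ≠ q.2 ∧ cod G {q.1, q.2} ≤ 2*t+1

instance (G : SimpleGraph V) [DecidableRel G.Adj] (t : ℕ) (p : V × V) :
    Decidable (pMid G t p) := by unfold pMid; infer_instance
instance (G : SimpleGraph V) [DecidableRel G.Adj] (t : ℕ) (p : V × V) :
    Decidable (pGood G t p) := by unfold pGood; infer_instance
instance (G : SimpleGraph V) [DecidableRel G.Adj] (t : ℕ) (p : V × V) :
    Decidable (pCaseA G t p) := by unfold pCaseA; infer_instance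

lemma adjP_card : (AdjP G).card = ∑ v, G.degree v := by
  rw [AdjP, Finset.card_filter, Finset.sum_product]
  congr 1
  ext a
  rw [← SimpleGraph.card_neighborFinset_eq_degree, SimpleGraph.neighborFinset_eq_filter,
    Finset.card_filter]

lemma cod_pair_eq_sum (a b : V) :
    cod G {a, b} = ∑ z, (if G.Adj a z then 1 else 0) * (if G.Adj b z then 1 else 0) := by
  rw [cod, CN, Finset.card_filter]
  apply Finset.sum_congr rfl
  intro z _
  by_cases h1 : G.Adj a z <;> by_cases h2 : G.Adj b z <;> simp [h1, h2]

lemma deg_eq_sum (z : V) : ∑ a, (if G.Adj a z then 1 else 0) = G.degree z := by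
  rw [← SimpleGraph.card_neighborFinset_eq_degree, SimpleGraph.neighborFinset_eq_filter,
    Finset.card_filter]
  apply Finset.sum_congr rfl
  intro a _
  by_cases h : G.Adj z a
  · simp [h, h.symm]
  · have h' : ¬ G.Adj a z := fun hh => h hh.symm
    simp [h, h']

lemma fubini : ∑ p ∈ univ ×ˢ univ, cod G {p.1, p.2} = ∑ z, (G.degree z)^2 := by
  rw [Finset.sum_product]
  simp only [cod_pair_eq_sum]
  have h1 : ∀ a : V, (∑ b : V, ∑ z : V,
      (if G.Adj a z then 1 else 0) * (if G.Adj b z then 1 else 0))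
      = ∑ z : V, ∑ b : V, (if G.Adj a z then 1 else 0) * (if G.Adj b z then 1 else 0) :=
    fun a => Finset.sum_comm
  rw [Finset.sum_congr rfl (fun a _ => h1 a), Finset.sum_comm]
  apply Finset.sum_congr rfl
  intro z _
  rw [sq, ← deg_eq_sum z, Finset.sum_mul_sum]

lemma diag_sum : ∑ p ∈ (univ ×ˢ univ).filter (fun p : V × V => ¬ p.1 ≠ p.2), cod G {p.1, p.2}
    = ∑ v, G.degree v := by
  have himg : (univ ×ˢ univ).filter (fun p : V × V => ¬ p.1 ≠ p.2)
      = univ.image (fun a => (a, a)) := by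
    ext p
    simp only [Finset.mem_filter, Finset.mem_image, Finset.mem_product, Finset.mem_univ,
      true_and, not_not]
    constructor
    · rintro h
      exact ⟨p.1, Prod.ext rfl h⟩
    · rintro ⟨a, rfl⟩
      rfl
  rw [himg, Finset.sum_image (by intro a _ b _ h; exact (Prod.mk.injEq _ _ _ _).mp h |>.1)]
  apply Finset.sum_congr rfl
  intro a _
  have : ({a, a} : Finset V) = {a} := by simp
  rw [this]
  rw [cod, CN]
  rw [← SimpleGraph.card_neighborFinset_eq_degree, SimpleGraph.neighborFinset_eq_filter]
  congr 1
  apply Finset.filter_congr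
  intro z _
  simp

lemma sum_split : ∑ z, (G.degree z)^2
    = ∑ p ∈ PP V, cod G {p.1, p.2} + ∑ v, G.degree v := by
  rw [← fubini, ← Finset.sum_filter_add_sum_filter_not (univ ×ˢ univ) (fun p => p.1 ≠ p.2),
    diag_sum]
  rfl

/-- heavy pairs contribute at most `t * Σ deg` codegree in total -/
lemma heavy_sum (hfree : ¬ ContainsCopy (Bgraph t) G) :
    ∑ p ∈ (PP V).filter (fun p => 2*t+2 ≤ cod G {p.1, p.2}), cod G {p.1, p.2}
      ≤ t * ∑ v, G.degree v := by
  set Hv := (PP V).filter (fun p => 2*t+2 ≤ cod G {p.1, p.2}) with hHv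
  have hstep : ∑ p ∈ Hv, cod G {p.1, p.2}
      = ∑ z, (Hv.filter (fun p => z ∈ CN G {p.1, p.2})).card := by
    have : ∀ p ∈ Hv, cod G {p.1, p.2} = ∑ z, if z ∈ CN G {p.1, p.2} then 1 else 0 := by
      intro p _
      rw [cod, ← Finset.filter_univ_mem (CN G {p.1, p.2}), Finset.card_filter]
      simp
    rw [Finset.sum_congr rfl this, Finset.sum_comm]
    apply Finset.sum_congr rfl
    intro z _
    rw [Finset.card_filter]
  rw [hstep]
  have hbound : ∀ z : V, (Hv.filter (fun p => z ∈ CN G {p.1, p.2})).card ≤ t * G.degree z := by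
    intro z
    have hsub : Hv.filter (fun p => z ∈ CN G {p.1, p.2}) ⊆
        ((G.neighborFinset z) ×ˢ (G.neighborFinset z)).filter
          (fun p => p.1 ≠ p.2 ∧ 2*t+2 ≤ cod G {p.1, p.2}) := by
      intro p hp
      simp only [hHv, PP, Finset.mem_filter, Finset.mem_product, Finset.mem_univ, true_and] at hp ⊢
      obtain ⟨⟨hne, hheavy⟩, hz⟩ := hp
      obtain ⟨h1, h2⟩ := mem_CN_pair.mp hz
      exact ⟨⟨(G.mem_neighborFinset _ _).mpr h1.symm, (G.mem_neighborFinset _ _).mpr h2.symm⟩,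
        hne, hheavy⟩
    calc (Hv.filter (fun p => z ∈ CN G {p.1, p.2})).card
        ≤ _ := Finset.card_le_card hsub
      _ = ∑ a ∈ G.neighborFinset z,
            ((G.neighborFinset z).filter (fun b => a ≠ b ∧ 2*t+2 ≤ cod G {a, b})).card := by
          rw [Finset.card_filter, Finset.sum_product]
          apply Finset.sum_congr rfl
          intro a _
          rw [Finset.card_filter]
      _ ≤ ∑ _a ∈ G.neighborFinset z, t := by
          apply Finset.sum_le_sum
          intro a ha
          have haz : G.Adj a z := ((G.mem_neighborFinset _ _).mp ha).symm
          exact le_of_lt (lemma1 hfree haz)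
      _ = t * G.degree z := by
          rw [Finset.sum_const, smul_eq_mul, SimpleGraph.card_neighborFinset_eq_degree,
            mul_comm]
  calc ∑ z, (Hv.filter (fun p => z ∈ CN G {p.1, p.2})).card
      ≤ ∑ z, t * G.degree z := Finset.sum_le_sum (fun z _ => hbound z)
    _ = t * ∑ v, G.degree v := by rw [Finset.mul_sum]

lemma ma_bound {t : ℕ} (hfree : ¬ ContainsCopy (Bgraph t) G) :
    ((PP V).filter (fun p => pMid G t p ∧ pCaseA G t p)).card
      ≤ (∑ v, G.degree v) * (t * (4*(2*t+1))) := by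
  classical
  set φ : V × V → ((_ : V × V) × (V × V)) := fun p =>
    if h : pCaseA G t p then
      ⟨(p.1, (Classical.choose h).1), ((Classical.choose h).2, p.2)⟩
    else ⟨(p.1, p.1), (p.1, p.1)⟩ with hφ
  have hmain : ((PP V).filter (fun p => pMid G t p ∧ pCaseA G t p)).card
      ≤ ((AdjP G).sigma (fun e => fib G t e.1 e.2)).card := by
    apply Finset.card_le_card_of_injOn φ
    · intro p hp
      rw [Finset.mem_coe, Finset.mem_filter] at hp
      obtain ⟨hPP, hmid, hca⟩ := hp
      have hne : p.1 ≠ p.2 := by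
        rw [PP, Finset.mem_filter] at hPP
        exact hPP.2
      obtain ⟨hq1, hq2, hqne, hqcod⟩ := Classical.choose_spec hca
      rw [hφ]
      simp only [dif_pos hca]
      rw [Finset.mem_coe, Finset.mem_sigma]
      constructor
      · rw [AdjP, Finset.mem_filter]
        exact ⟨Finset.mem_product.mpr ⟨Finset.mem_univ _, Finset.mem_univ _⟩,
          (mem_CN_pair.mp hq1).1⟩
      · rw [mem_fib]
        refine ⟨(mem_CN_pair.mp hq2).1, (mem_CN_pair.mp hq1).2.symm,
          (mem_CN_pair.mp hq2).2.symm, hqne.symm, hne.symm, hqcod, hmid.2⟩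
    · intro p hp p' hp' hpp'
      simp only [Finset.coe_filter, Set.mem_setOf_eq] at hp hp'
      rw [hφ] at hpp'
      simp only [dif_pos hp.2.2, dif_pos hp'.2.2] at hpp'
      have h1 := congrArg (fun x => x.1.1) hpp'
      have h2 := congrArg (fun x => x.2.2) hpp'
      simp only at h1 h2
      exact Prod.ext h1 h2
  calc ((PP V).filter (fun p => pMid G t p ∧ pCaseA G t p)).card
      ≤ _ := hmain
    _ = ∑ e ∈ AdjP G, (fib G t e.1 e.2).card := Finset.card_sigma _ _
    _ ≤ ∑ _e ∈ AdjP G, t * (4*(2*t+1)) := by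
        apply Finset.sum_le_sum
        intro e he
        rw [AdjP, Finset.mem_filter] at he
        exact lemma9 hfree he.2
    _ = (∑ v, G.degree v) * (t * (4*(2*t+1))) := by
        rw [Finset.sum_const, smul_eq_mul, adjP_card]

def Hnb (G : SimpleGraph V) [DecidableRel G.Adj] (t : ℕ) (a c : V) : Finset V :=
  (G.neighborFinset a).filter (fun z => c ≠ z ∧ 2*t+2 ≤ cod G {c, z})

def Wdet (G : SimpleGraph V) [DecidableRel G.Adj] (t : ℕ) (a c : V) : Finset V :=
  insert c (Hnb G t a c)

def fib2 (G : SimpleGraph V) [DecidableRel G.Adj] (t : ℕ) (e : V × V) : Finset V :=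
  if (Wdet G t e.1 e.2).card = t ∧ cod G (Wdet G t e.1 e.2) ≤ t
  then CN G (Wdet G t e.1 e.2) else ∅

lemma fib2_card {t : ℕ} (e : V × V) : (fib2 G t e).card ≤ t := by
  rw [fib2]
  split
  · next h => exact h.2
  · simp

lemma mb_bound {t : ℕ} (hfree : ¬ ContainsCopy (Bgraph t) G) (ht : 1 ≤ t) :
    ((PP V).filter (fun p => pMid G t p ∧ ¬ pGood G t p ∧ ¬ pCaseA G t p)).card
      ≤ (∑ v, G.degree v) * t := by
  classical
  set ψ : V × V → ((_ : V × V) × V) := fun p =>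
    if h : (CN G {p.1, p.2}).Nonempty then ⟨(p.1, h.choose), p.2⟩
    else ⟨(p.1, p.1), p.2⟩ with hψ
  have hmain : ((PP V).filter (fun p => pMid G t p ∧ ¬ pGood G t p ∧ ¬ pCaseA G t p)).card
      ≤ ((AdjP G).sigma (fun e => fib2 G t e)).card := by
    apply Finset.card_le_card_of_injOn ψ
    · intro p hp
      rw [Finset.mem_coe, Finset.mem_filter] at hp
      obtain ⟨hPP, hmid, hng, hnca⟩ := hp
      have hne : p.1 ≠ p.2 := by
        rw [PP, Finset.mem_filter] at hPP
        exact hPP.2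
      have hWne : (CN G {p.1, p.2}).Nonempty := by
        rw [← Finset.card_pos]
        have := hmid.1
        rw [cod] at this
        omega
      set W := CN G {p.1, p.2} with hW
      set c := hWne.choose with hc
      have hcW : c ∈ W := hWne.choose_spec
      have hAdj1c : G.Adj p.1 c := (mem_CN_pair.mp hcW).1
      have hsub1 : W.erase c ⊆ Hnb G t p.1 c := by
        intro w hw
        rw [Finset.mem_erase] at hw
        obtain ⟨hwc, hwW⟩ := hw
        rw [Hnb, Finset.mem_filter]
        refine ⟨(G.mem_neighborFinset _ _).mpr (mem_CN_pair.mp hwW).1, hwc.symm, ?_⟩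
        by_contra hcon
        push_neg at hcon
        refine hnca ⟨(c, w), hcW, hwW, hwc.symm, ?_⟩
        show cod G {c, w} ≤ 2*t+1
        omega
      have hHnb : (Hnb G t p.1 c).card < t := lemma1 hfree hAdj1c.symm
      have herase : (W.erase c).card = W.card - 1 := Finset.card_erase_of_mem hcW
      have hWt : W.card = t := by
        have h1 : (W.erase c).card ≤ (Hnb G t p.1 c).card := Finset.card_le_card hsub1
        have h2 : t ≤ W.card := hmid.1
        omega
      have heq : W.erase c = Hnb G t p.1 c := by
        apply Finset.eq_of_subset_of_card_le hsub1
        omega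
      have hWdet : Wdet G t p.1 c = W := by
        rw [Wdet, ← heq, Finset.insert_erase hcW]
      have hcodW : cod G W ≤ t := by
        by_contra hcon
        push_neg at hcon
        exact hng ⟨hWt, hcon⟩
      rw [hψ]
      rw [Finset.mem_coe]; dsimp only; rw [dif_pos hWne]
      rw [Finset.mem_sigma]
      constructor
      · rw [AdjP, Finset.mem_filter]
        exact ⟨Finset.mem_product.mpr ⟨Finset.mem_univ _, Finset.mem_univ _⟩, hAdj1c⟩
      · show p.2 ∈ fib2 G t (p.1, c)
        rw [fib2]
        have hconds : (Wdet G t (p.1, c).1 (p.1, c).2).card = t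
            ∧ cod G (Wdet G t (p.1, c).1 (p.1, c).2) ≤ t := by
          simp only []
          rw [hWdet]
          exact ⟨hWt, hcodW⟩
        rw [if_pos hconds]
        simp only []
        rw [hWdet]
        rw [mem_CN]
        intro w hwW
        exact (mem_CN_pair.mp hwW).2.symm
    · intro p hp p' hp' hpp'
      simp only [Finset.coe_filter, Set.mem_setOf_eq] at hp hp'
      have hWne : (CN G {p.1, p.2}).Nonempty := by
        rw [← Finset.card_pos]
        have := hp.2.1.1
        rw [cod] at this
        omega
      have hWne' : (CN G {p'.1, p'.2}).Nonempty := by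
        rw [← Finset.card_pos]
        have := hp'.2.1.1
        rw [cod] at this
        omega
      rw [hψ] at hpp'
      simp only [dif_pos hWne, dif_pos hWne'] at hpp'
      have h1 := congrArg (fun x => x.1.1) hpp'
      have h2 := congrArg (fun x => x.2) hpp'
      simp only at h1 h2
      exact Prod.ext h1 h2
  calc ((PP V).filter (fun p => pMid G t p ∧ ¬ pGood G t p ∧ ¬ pCaseA G t p)).card
      ≤ _ := hmain
    _ = ∑ e ∈ AdjP G, (fib2 G t e).card := Finset.card_sigma _ _
    _ ≤ ∑ _e ∈ AdjP G, t := Finset.sum_le_sum (fun e _ => fib2_card e)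
    _ = (∑ v, G.degree v) * t := by
        rw [Finset.sum_const, smul_eq_mul, adjP_card]

lemma po_bound {t : ℕ} :
    ((PP V).filter (fun p => pGood G t p)).card
      ≤ 2 * (((PP V).filter (fun p => pGood G t p)).image
          (fun p => ({p.1, p.2} : Finset V))).card := by
  set s := (PP V).filter (fun p => pGood G t p) with hs
  rw [Finset.card_eq_sum_card_image (fun p => ({p.1, p.2} : Finset V)) s]
  calc ∑ Q ∈ s.image (fun p => ({p.1, p.2} : Finset V)),
        (s.filter (fun p => ({p.1, p.2} : Finset V) = Q)).card
      ≤ ∑ _Q ∈ s.image (fun p => ({p.1, p.2} : Finset V)), 2 := by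
        apply Finset.sum_le_sum
        intro Q hQ
        obtain ⟨p₀, hp₀, rfl⟩ := Finset.mem_image.mp hQ
        have hsub : s.filter (fun p => ({p.1, p.2} : Finset V) = {p₀.1, p₀.2})
            ⊆ {(p₀.1, p₀.2), (p₀.2, p₀.1)} := by
          intro p hp
          rw [Finset.mem_filter] at hp
          obtain ⟨hps, hpe⟩ := hp
          have hne : p.1 ≠ p.2 := by
            have := (Finset.mem_filter.mp hps).1
            rw [PP, Finset.mem_filter] at this
            exact this.2
          have h1 : p.1 ∈ ({p₀.1, p₀.2} : Finset V) := hpe ▸ Finset.mem_insert_self _ _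
          have h2 : p.2 ∈ ({p₀.1, p₀.2} : Finset V) := hpe ▸
            Finset.mem_insert_of_mem (Finset.mem_singleton_self _)
          simp only [Finset.mem_insert, Finset.mem_singleton] at h1 h2 ⊢
          rcases h1 with h1 | h1 <;> rcases h2 with h2 | h2
          · exact absurd (h1.trans h2.symm) hne
          · left; exact Prod.ext h1 h2
          · right; exact Prod.ext h1 h2
          · exact absurd (h1.trans h2.symm) hne
        calc (s.filter (fun p => ({p.1, p.2} : Finset V) = {p₀.1, p₀.2})).card
            ≤ ({(p₀.1, p₀.2), (p₀.2, p₀.1)} : Finset (V × V)).card := Finset.card_le_card hsub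
          _ ≤ 2 := Finset.card_insert_le _ _ |>.trans (by simp)
      _ = 2 * (s.image (fun p => ({p.1, p.2} : Finset V))).card := by
        rw [Finset.sum_const, smul_eq_mul, mul_comm]

lemma funding {t : ℕ} :
    (t.choose 2) * (((PP V).filter (fun p => pGood G t p)).image
        (fun p => ({p.1, p.2} : Finset V))).card
      ≤ {p : Sym2 (Finset V) |
          ∃ A B : Finset V, p = s(A, B) ∧ A.card = 2 ∧ B.card = 2 ∧
            Disjoint A B ∧ (∀ u ∈ A, ∀ v ∈ B, G.Adj u v) ∧
            ∃ S : Finset V, S.card = t ∧ S.card + 1 ≤ codeg G S ∧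
              (A ⊆ S ∨ B ⊆ S)}.ncard := by
  classical
  set PF := ((PP V).filter (fun p => pGood G t p)).image
    (fun p => ({p.1, p.2} : Finset V)) with hPFdef
  have hPF : ∀ Q ∈ PF, Q.card = 2 ∧ cod G Q = t ∧ t+1 ≤ cod G (CN G Q) := by
    intro Q hQ
    obtain ⟨p, hp, rfl⟩ := Finset.mem_image.mp hQ
    rw [Finset.mem_filter] at hp
    have hne : p.1 ≠ p.2 := by
      have := hp.1
      rw [PP, Finset.mem_filter] at this
      exact this.2
    exact ⟨Finset.card_pair hne, hp.2.1, hp.2.2⟩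
  set src := PF.sigma (fun Q => (CN G Q).powersetCard 2) with hsrc
  set φ : ((_ : Finset V) × Finset V) → Sym2 (Finset V) := fun x => s(x.2, x.1) with hφ
  have hinj : Set.InjOn φ ↑src := by
    intro x hx x' hx' hxx'
    rw [Finset.mem_coe, hsrc, Finset.mem_sigma] at hx hx'
    rw [hφ] at hxx'
    simp only [Sym2.eq_iff] at hxx'
    rcases hxx' with ⟨h2, h1⟩ | ⟨h2, h1⟩
    · obtain ⟨a, b⟩ := x
      obtain ⟨a', b'⟩ := x'
      simp only at h1 h2
      subst h1; subst h2; rfl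
    · -- impossible: x'.1 ∈ PF has codegree t but is inside CN of x.1
      exfalso
      have hmem : x'.1 ⊆ CN G x.1 := by
        rw [← h2]
        exact (Finset.mem_powersetCard.mp hx.2).1
      have hanti : CN G (CN G x.1) ⊆ CN G x'.1 := CN_anti hmem
      have h3 : t + 1 ≤ cod G (CN G x.1) := (hPF _ hx.1).2.2
      have h4 : cod G x'.1 = t := (hPF _ hx'.1).2.1
      have h5 : cod G (CN G x.1) ≤ cod G x'.1 := Finset.card_le_card hanti
      omega
  have hcard : src.card = PF.card * t.choose 2 := by
    rw [hsrc, Finset.card_sigma]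
    have hcc : ∀ Q ∈ PF, ((CN G Q).powersetCard 2).card = t.choose 2 := by
      intro Q hQ
      rw [Finset.card_powersetCard]
      have h := (hPF Q hQ).2.1
      rw [cod] at h
      rw [h]
    rw [Finset.sum_congr rfl hcc, Finset.sum_const, smul_eq_mul]
  have hsub : ↑(src.image φ) ⊆ {p : Sym2 (Finset V) |
      ∃ A B : Finset V, p = s(A, B) ∧ A.card = 2 ∧ B.card = 2 ∧
        Disjoint A B ∧ (∀ u ∈ A, ∀ v ∈ B, G.Adj u v) ∧
        ∃ S : Finset V, S.card = t ∧ S.card + 1 ≤ codeg G S ∧ (A ⊆ S ∨ B ⊆ S)} := by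
    intro y hy
    rw [Finset.mem_coe, Finset.mem_image] at hy
    obtain ⟨x, hx, rfl⟩ := hy
    rw [hsrc, Finset.mem_sigma] at hx
    obtain ⟨hQ, hR⟩ := hx
    obtain ⟨hRsub, hRcard⟩ := Finset.mem_powersetCard.mp hR
    refine ⟨x.2, x.1, rfl, hRcard, (hPF _ hQ).1, ?_, ?_, CN G x.1, (hPF _ hQ).2.1, ?_, Or.inl hRsub⟩
    · rw [Finset.disjoint_left]
      intro a haR haQ
      exact G.irrefl (mem_CN.mp (hRsub haR) a haQ)
    · intro u hu v hv
      exact (mem_CN.mp (hRsub hu) v hv).symm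
    · rw [codeg_eq_cod]
      have := (hPF _ hQ).2.2
      have h2 : (CN G x.1).card = t := (hPF _ hQ).2.1
      rw [h2]
      exact this
  calc t.choose 2 * PF.card = src.card := by rw [hcard, mul_comm]
    _ = (src.image φ).card := (Finset.card_image_of_injOn hinj).symm
    _ = (↑(src.image φ) : Set (Sym2 (Finset V))).ncard := (Set.ncard_coe_finset _).symm
    _ ≤ _ := Set.ncard_le_ncard hsub (Set.toFinite _)

lemma pp_card_le : (PP V).card ≤ Fintype.card V * Fintype.card V := by
  calc (PP V).card ≤ (univ ×ˢ univ : Finset (V × V)).card := Finset.card_filter_le _ _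
    _ = Fintype.card V * Fintype.card V := by
        rw [Finset.card_product, Finset.card_univ]

lemma gsum_bound {t : ℕ} (hfree : ¬ ContainsCopy (Bgraph t) G) (ht : 1 ≤ t) :
    ∑ p ∈ PP V, (cod G {p.1, p.2} + 1 - t)
      ≤ t * (∑ v, G.degree v)
        + 2 * (((PP V).filter (fun p => pGood G t p)).image
            (fun p => ({p.1, p.2} : Finset V))).card
        + (t+2) * (((PP V).filter (fun p => pMid G t p ∧ pCaseA G t p)).card
                 + ((PP V).filter (fun p => pMid G t p ∧ ¬pGood G t p ∧ ¬pCaseA G t p)).card) := by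
  set g : V × V → ℕ := fun p => cod G {p.1, p.2} + 1 - t with hg
  -- split off heavy
  rw [← Finset.sum_filter_add_sum_filter_not (PP V) (fun p => 2*t+2 ≤ cod G {p.1, p.2}) g]
  have hheavy : ∑ p ∈ (PP V).filter (fun p => 2*t+2 ≤ cod G {p.1, p.2}), g p
      ≤ t * (∑ v, G.degree v) := by
    calc ∑ p ∈ (PP V).filter (fun p => 2*t+2 ≤ cod G {p.1, p.2}), g p
        ≤ ∑ p ∈ (PP V).filter (fun p => 2*t+2 ≤ cod G {p.1, p.2}), cod G {p.1, p.2} :=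
          Finset.sum_le_sum (fun p _ => by
            have hgp : g p = cod G {p.1, p.2} + 1 - t := rfl
            omega)
      _ ≤ t * (∑ v, G.degree v) := heavy_sum hfree
  set R1 := (PP V).filter (fun p => ¬ (2*t+2 ≤ cod G {p.1, p.2})) with hR1
  -- split off low
  rw [← Finset.sum_filter_add_sum_filter_not R1 (fun p => cod G {p.1, p.2} < t) g]
  have hlow : ∑ p ∈ R1.filter (fun p => cod G {p.1, p.2} < t), g p = 0 := by
    apply Finset.sum_eq_zero
    intro p hp
    rw [Finset.mem_filter] at hp
    have hgp : g p = cod G {p.1, p.2} + 1 - t := rfl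
    omega
  set R2 := R1.filter (fun p => ¬ (cod G {p.1, p.2} < t)) with hR2
  have hR2mid : ∀ p ∈ R2, pMid G t p := by
    intro p hp
    rw [hR2, Finset.mem_filter, hR1, Finset.mem_filter] at hp
    exact ⟨by omega, by omega⟩
  -- split off good
  rw [← Finset.sum_filter_add_sum_filter_not R2 (fun p => pGood G t p) g]
  have hgood : ∑ p ∈ R2.filter (fun p => pGood G t p), g p
      ≤ 2 * (((PP V).filter (fun p => pGood G t p)).image
          (fun p => ({p.1, p.2} : Finset V))).card := by
    calc ∑ p ∈ R2.filter (fun p => pGood G t p), g p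
        ≤ ∑ p ∈ R2.filter (fun p => pGood G t p), 1 := by
          apply Finset.sum_le_sum
          intro p hp
          rw [Finset.mem_filter] at hp
          have := hp.2.1
          have hgp : g p = cod G {p.1, p.2} + 1 - t := rfl
          omega
      _ = (R2.filter (fun p => pGood G t p)).card := by rw [Finset.sum_const, smul_eq_mul, mul_one]
      _ ≤ ((PP V).filter (fun p => pGood G t p)).card := by
          apply Finset.card_le_card
          intro p hp
          rw [Finset.mem_filter] at hp ⊢
          refine ⟨?_, hp.2⟩
          have := hp.1
          rw [hR2, Finset.mem_filter, hR1, Finset.mem_filter] at this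
          exact this.1.1
      _ ≤ _ := po_bound
  set R3 := R2.filter (fun p => ¬ pGood G t p) with hR3
  -- split by caseA
  rw [← Finset.sum_filter_add_sum_filter_not R3 (fun p => pCaseA G t p) g]
  have hgle : ∀ p ∈ R2, g p ≤ t + 2 := by
    intro p hp
    have := hR2mid p hp
    rw [pMid] at this
    have hgp : g p = cod G {p.1, p.2} + 1 - t := rfl
    omega
  have hA : ∑ p ∈ R3.filter (fun p => pCaseA G t p), g p
      ≤ (t+2) * ((PP V).filter (fun p => pMid G t p ∧ pCaseA G t p)).card := by
    calc ∑ p ∈ R3.filter (fun p => pCaseA G t p), g p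
        ≤ ∑ _p ∈ R3.filter (fun p => pCaseA G t p), (t+2) := by
          apply Finset.sum_le_sum
          intro p hp
          rw [Finset.mem_filter, hR3, Finset.mem_filter] at hp
          exact hgle p hp.1.1
      _ = (R3.filter (fun p => pCaseA G t p)).card * (t+2) := by
          rw [Finset.sum_const, smul_eq_mul]
      _ ≤ ((PP V).filter (fun p => pMid G t p ∧ pCaseA G t p)).card * (t+2) := by
          apply Nat.mul_le_mul_right
          apply Finset.card_le_card
          intro p hp
          rw [Finset.mem_filter, hR3, Finset.mem_filter] at hp
          rw [Finset.mem_filter]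
          have hPPp : p ∈ PP V := by
            have := hp.1.1
            rw [hR2, Finset.mem_filter, hR1, Finset.mem_filter] at this
            exact this.1.1
          exact ⟨hPPp, hR2mid p hp.1.1, hp.2⟩
      _ = (t+2) * ((PP V).filter (fun p => pMid G t p ∧ pCaseA G t p)).card := mul_comm _ _
  have hB : ∑ p ∈ R3.filter (fun p => ¬ pCaseA G t p), g p
      ≤ (t+2) * ((PP V).filter (fun p => pMid G t p ∧ ¬pGood G t p ∧ ¬pCaseA G t p)).card := by
    calc ∑ p ∈ R3.filter (fun p => ¬ pCaseA G t p), g p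
        ≤ ∑ _p ∈ R3.filter (fun p => ¬ pCaseA G t p), (t+2) := by
          apply Finset.sum_le_sum
          intro p hp
          rw [Finset.mem_filter, hR3, Finset.mem_filter] at hp
          exact hgle p hp.1.1
      _ = (R3.filter (fun p => ¬ pCaseA G t p)).card * (t+2) := by
          rw [Finset.sum_const, smul_eq_mul]
      _ ≤ ((PP V).filter (fun p => pMid G t p ∧ ¬pGood G t p ∧ ¬pCaseA G t p)).card * (t+2) := by
          apply Nat.mul_le_mul_right
          apply Finset.card_le_card
          intro p hp
          rw [Finset.mem_filter, hR3, Finset.mem_filter] at hp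
          rw [Finset.mem_filter]
          have hPPp : p ∈ PP V := by
            have := hp.1.1
            rw [hR2, Finset.mem_filter, hR1, Finset.mem_filter] at this
            exact this.1.1
          exact ⟨hPPp, hR2mid p hp.1.1, hp.1.2, hp.2⟩
      _ = (t+2) * ((PP V).filter (fun p => pMid G t p ∧ ¬pGood G t p ∧ ¬pCaseA G t p)).card :=
          mul_comm _ _
  have hdist : (t+2) * (((PP V).filter (fun p => pMid G t p ∧ pCaseA G t p)).card
      + ((PP V).filter (fun p => pMid G t p ∧ ¬pGood G t p ∧ ¬pCaseA G t p)).card)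
      = (t+2) * ((PP V).filter (fun p => pMid G t p ∧ pCaseA G t p)).card
      + (t+2) * ((PP V).filter (fun p => pMid G t p ∧ ¬pGood G t p ∧ ¬pCaseA G t p)).card :=
    Nat.mul_add _ _ _
  omega

lemma master {t : ℕ} (hfree : ¬ ContainsCopy (Bgraph t) G) (ht : 1 ≤ t) :
    ∑ z, (G.degree z)^2
      ≤ (t-1) * (Fintype.card V * Fintype.card V)
        + 2 * (((PP V).filter (fun p => pGood G t p)).image
            (fun p => ({p.1, p.2} : Finset V))).card
        + (t+2) * (((PP V).filter (fun p => pMid G t p ∧ pCaseA G t p)).card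
                 + ((PP V).filter (fun p => pMid G t p ∧ ¬pGood G t p ∧ ¬pCaseA G t p)).card)
        + (t+1) * (∑ v, G.degree v) := by
  have h1 : ∑ p ∈ PP V, cod G {p.1, p.2}
      ≤ (t-1) * (PP V).card + ∑ p ∈ PP V, (cod G {p.1, p.2} + 1 - t) := by
    calc ∑ p ∈ PP V, cod G {p.1, p.2}
        ≤ ∑ p ∈ PP V, ((t-1) + (cod G {p.1, p.2} + 1 - t)) :=
          Finset.sum_le_sum (fun p _ => by omega)
      _ = (t-1) * (PP V).card + ∑ p ∈ PP V, (cod G {p.1, p.2} + 1 - t) := by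
          rw [Finset.sum_add_distrib, Finset.sum_const, smul_eq_mul, mul_comm]
  have h2 := gsum_bound hfree ht
  have h3 := sum_split (G := G)
  have h4 : (t-1) * (PP V).card ≤ (t-1) * (Fintype.card V * Fintype.card V) :=
    Nat.mul_le_mul_left _ pp_card_le
  have h5 : (t+1) * (∑ v, G.degree v) = t * (∑ v, G.degree v) + (∑ v, G.degree v) := by ring
  omega

lemma master_e {t : ℕ} (hfree : ¬ ContainsCopy (Bgraph t) G) (ht : 1 ≤ t) :
    ∑ z, (G.degree z)^2
      ≤ (2*t+1) * (Fintype.card V * Fintype.card V) + (t+1) * (∑ v, G.degree v) := by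
  have h3 := sum_split (G := G)
  have h1 : ∑ p ∈ PP V, cod G {p.1, p.2}
      ≤ t * (∑ v, G.degree v) + (2*t+1) * (PP V).card := by
    rw [← Finset.sum_filter_add_sum_filter_not (PP V) (fun p => 2*t+2 ≤ cod G {p.1, p.2})]
    have ha := heavy_sum (G := G) (t := t) hfree
    have hb : ∑ p ∈ (PP V).filter (fun p => ¬ (2*t+2 ≤ cod G {p.1, p.2})), cod G {p.1, p.2}
        ≤ (2*t+1) * (PP V).card := by
      calc ∑ p ∈ (PP V).filter (fun p => ¬ (2*t+2 ≤ cod G {p.1, p.2})), cod G {p.1, p.2}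
          ≤ ∑ _p ∈ (PP V).filter (fun p => ¬ (2*t+2 ≤ cod G {p.1, p.2})), (2*t+1) := by
            apply Finset.sum_le_sum
            intro p hp
            rw [Finset.mem_filter] at hp
            omega
        _ = ((PP V).filter (fun p => ¬ (2*t+2 ≤ cod G {p.1, p.2}))).card * (2*t+1) := by
            rw [Finset.sum_const, smul_eq_mul]
        _ ≤ (PP V).card * (2*t+1) := by
            exact Nat.mul_le_mul_right _ (Finset.card_filter_le _ _)
        _ = (2*t+1) * (PP V).card := mul_comm _ _
    omega
  have h4 : (2*t+1) * (PP V).card ≤ (2*t+1) * (Fintype.card V * Fintype.card V) :=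
    Nat.mul_le_mul_left _ pp_card_le
  have h5 : (t+1) * (∑ v, G.degree v) = t * (∑ v, G.degree v) + (∑ v, G.degree v) := by ring
  omega

lemma choose_two_le_sq (t : ℕ) : t.choose 2 ≤ t * t := by
  rw [Nat.choose_two_right]
  calc t * (t-1) / 2 ≤ t * (t-1) := Nat.div_le_self _ _
    _ ≤ t * t := Nat.mul_le_mul_left _ (by omega)

lemma master_final {t : ℕ} (hfree : ¬ ContainsCopy (Bgraph t) G) (ht : 1 ≤ t) :
    ∑ z, (G.degree z)^2
      ≤ (t-1) * (Fintype.card V * Fintype.card V)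
        + 2 * (((PP V).filter (fun p => pGood G t p)).image
            (fun p => ({p.1, p.2} : Finset V))).card
        + ((t+2)*(t*(4*(2*t+1)) + t) + (t+1)) * (∑ v, G.degree v) := by
  have hm := master hfree ht
  have hma := ma_bound (t := t) hfree
  have hmb := mb_bound (t := t) hfree ht
  set MA := ((PP V).filter (fun p => pMid G t p ∧ pCaseA G t p)).card with hMA
  set MB := ((PP V).filter (fun p => pMid G t p ∧ ¬pGood G t p ∧ ¬pCaseA G t p)).card with hMB
  set D := ∑ v, G.degree v with hD
  have h1 : MA + MB ≤ D * (t*(4*(2*t+1))) + D * t := Nat.add_le_add hma hmb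
  have h2 : (t+2)*(MA+MB) ≤ (t+2)*(D * (t*(4*(2*t+1))) + D * t) := Nat.mul_le_mul_left _ h1
  have h3 : (t+2)*(D * (t*(4*(2*t+1))) + D * t) + (t+1) * D
      = ((t+2)*(t*(4*(2*t+1)) + t) + (t+1)) * D := by ring
  omega

end Counting

end BtProof

open BtProof

set_option maxHeartbeats 2000000

theorem NC4_lower (t : ℕ) (ht : 1 ≤ t) (ε : ℝ) (hε : 0 < ε) :
    ∃ N : ℕ, ∀ n : ℕ, N ≤ n → ∀ G : SimpleGraph (Fin n),
      ¬ ContainsCopy (Bgraph t) G →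
      (1 / 2 : ℝ) * (t.choose 2 : ℝ) *
          ((∑ u : Fin n, ((G.neighborSet u).ncard : ℝ) ^ 2)
            - 2 * (4 * (t : ℝ) - 1) * (G.edgeSet.ncard : ℝ) - ((t : ℝ) - 1) * (n : ℝ) ^ 2)
        ≤ ({p : Sym2 (Finset (Fin n)) |
              ∃ A B : Finset (Fin n), p = s(A, B) ∧ A.card = 2 ∧ B.card = 2 ∧
                Disjoint A B ∧ (∀ u ∈ A, ∀ v ∈ B, G.Adj u v) ∧
                ∃ S : Finset (Fin n), S.card = t ∧ S.card + 1 ≤ codeg G S ∧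
                  (A ⊆ S ∨ B ⊆ S)}.ncard : ℝ) + ε * (n : ℝ) ^ 2 := by
  classical
  set c1 : ℕ := (t+2)*(t*(4*(2*t+1)) + t) + (t+1) with hc1
  set c7 : ℕ := t*t*c1 with hc7
  set A : ℝ := ((c7*(2*t+2) + c7^2*t : ℕ) : ℝ) with hA
  refine ⟨⌈A/ε + A/ε^2⌉₊ + 1, ?_⟩
  intro n hn G hfree
  letI : DecidableRel G.Adj := Classical.decRel _
  set rn : ℝ := (n : ℝ) with hrn
  -- basic positivity
  have hrn0 : (0:ℝ) ≤ rn := Nat.cast_nonneg n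
  have hA0 : (0:ℝ) ≤ A := Nat.cast_nonneg _
  have hnN : A/ε + A/ε^2 ≤ rn := by
    have h0 : A/ε + A/ε^2 ≤ (⌈A/ε + A/ε^2⌉₊ : ℝ) := Nat.le_ceil _
    have h1 : ((⌈A/ε + A/ε^2⌉₊ + 1 : ℕ) : ℝ) ≤ rn := by
      rw [hrn]
      exact_mod_cast hn
    push_cast at h1
    linarith
  have hdiv1 : (0:ℝ) ≤ A/ε := div_nonneg hA0 hε.le
  have hdiv2 : (0:ℝ) ≤ A/ε^2 := div_nonneg hA0 (by positivity)
  have hεn : A ≤ ε * rn := by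
    have h2 : A/ε ≤ rn := by linarith
    calc A = (A/ε) * ε := by field_simp
      _ ≤ rn * ε := mul_le_mul_of_nonneg_right h2 hε.le
      _ = ε * rn := mul_comm _ _
  have hε2n : A ≤ ε^2 * rn := by
    have h2 : A/ε^2 ≤ rn := by linarith
    calc A = (A/ε^2) * ε^2 := by field_simp
      _ ≤ rn * ε^2 := mul_le_mul_of_nonneg_right h2 (by positivity)
      _ = ε^2 * rn := mul_comm _ _
  -- natural number quantities
  set e : ℕ := G.edgeFinset.card with he
  set Snat : ℕ := ∑ z, (G.degree z)^2 with hSnat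
  set PFc : ℕ := (((PP (Fin n)).filter (fun p => pGood G t p)).image
    (fun p => ({p.1, p.2} : Finset (Fin n)))).card with hPFc
  set NC : ℕ := ({p : Sym2 (Finset (Fin n)) |
      ∃ A B : Finset (Fin n), p = s(A, B) ∧ A.card = 2 ∧ B.card = 2 ∧
        Disjoint A B ∧ (∀ u ∈ A, ∀ v ∈ B, G.Adj u v) ∧
        ∃ S : Finset (Fin n), S.card = t ∧ S.card + 1 ≤ codeg G S ∧
          (A ⊆ S ∨ B ⊆ S)}.ncard) with hNC
  have hdegsum : ∑ v, G.degree v = 2 * e := G.sum_degrees_eq_twice_card_edges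
  -- nat inequalities
  have F1 : Snat ≤ (t-1) * (n * n) + 2 * PFc + c1 * (2 * e) := by
    have := master_final hfree ht
    rw [Fintype.card_fin, hdegsum] at this
    exact this
  have F2 : Snat ≤ (2*t+1) * (n * n) + (t+1) * (2 * e) := by
    have := master_e (G := G) hfree ht
    rw [Fintype.card_fin, hdegsum] at this
    exact this
  have F3 : t.choose 2 * PFc ≤ NC := funding
  have F4 : t.choose 2 * c1 ≤ c7 := by
    rw [hc7]
    exact Nat.mul_le_mul_right _ (choose_two_le_sq t)
  -- casts
  have hns : ∀ u : Fin n, (G.neighborSet u).ncard = G.degree u := by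
    intro u
    rw [← SimpleGraph.card_neighborFinset_eq_degree, SimpleGraph.neighborFinset_def,
      Set.ncard_eq_toFinset_card']
  have hS : (∑ u : Fin n, ((G.neighborSet u).ncard : ℝ) ^ 2) = (Snat : ℝ) := by
    simp only [hns]
    rw [hSnat]
    push_cast
    rfl
  have hEs : (G.edgeSet.ncard : ℝ) = (e : ℝ) := by
    rw [he]
    congr 1
    rw [← SimpleGraph.coe_edgeFinset, Set.ncard_coe_finset]
  have htR : (1:ℝ) ≤ (t:ℝ) := by exact_mod_cast ht
  have hB0 : (0:ℝ) ≤ (t.choose 2 : ℝ) := Nat.cast_nonneg _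
  have hE0 : (0:ℝ) ≤ (e:ℝ) := Nat.cast_nonneg _
  have RL1 : (Snat : ℝ) ≤ ((t:ℝ)-1) * rn^2 + 2*(PFc:ℝ) + (c1:ℝ)*(2*(e:ℝ)) := by
    calc (Snat : ℝ) ≤ (((t-1) * (n * n) + 2 * PFc + c1 * (2 * e) : ℕ) : ℝ) :=
          Nat.cast_le.mpr F1
      _ = ((t:ℝ)-1) * rn^2 + 2*(PFc:ℝ) + (c1:ℝ)*(2*(e:ℝ)) := by
          push_cast [Nat.cast_sub ht]
          ring
  have RL2 : (Snat : ℝ) ≤ (2*(t:ℝ)+1) * rn^2 + (2*(t:ℝ)+2)*(e:ℝ) := by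
    calc (Snat : ℝ) ≤ (((2*t+1) * (n * n) + (t+1) * (2 * e) : ℕ) : ℝ) := Nat.cast_le.mpr F2
      _ = (2*(t:ℝ)+1) * rn^2 + (2*(t:ℝ)+2)*(e:ℝ) := by push_cast; ring
  have hCS : (2*(e:ℝ))^2 ≤ rn * (Snat : ℝ) := by
    have hcs0 := Finset.sum_mul_sq_le_sq_mul_sq Finset.univ
      (fun v : Fin n => (G.degree v : ℝ)) (fun _ => (1:ℝ))
    have hl : (∑ v : Fin n, (G.degree v : ℝ) * 1) = 2*(e:ℝ) := by
      simp only [mul_one]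
      rw [← Nat.cast_sum]
      rw [hdegsum]
      push_cast
      ring
    have hr1 : (∑ v : Fin n, (G.degree v : ℝ)^2) = (Snat:ℝ) := by
      rw [hSnat]
      push_cast
      rfl
    have hr2 : (∑ _v : Fin n, (1:ℝ)^2) = rn := by
      simp [hrn]
    rw [hl, hr1, hr2] at hcs0
    linarith [hcs0]
  -- the epsilon bound for the error term
  have hc7e : (c7:ℝ) * (e:ℝ) ≤ ε * rn^2 := by
    by_cases hcase : (e:ℝ) ≤ (2*(t:ℝ)+2) * rn
    · calc (c7:ℝ) * (e:ℝ) ≤ (c7:ℝ) * ((2*(t:ℝ)+2) * rn) :=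
            mul_le_mul_of_nonneg_left hcase (Nat.cast_nonneg _)
        _ = ((c7*(2*t+2) : ℕ) : ℝ) * rn := by push_cast; ring
        _ ≤ A * rn := by
            apply mul_le_mul_of_nonneg_right _ hrn0
            rw [hA]
            exact_mod_cast Nat.le_add_right _ _
        _ ≤ (ε * rn) * rn := mul_le_mul_of_nonneg_right hεn hrn0
        _ = ε * rn^2 := by ring
    · push_neg at hcase
      have hEpos : (0:ℝ) < (e:ℝ) := lt_of_le_of_lt (by positivity) hcase
      have h2 : (2*(t:ℝ)+2)*(e:ℝ)*rn ≤ (e:ℝ)*(e:ℝ) := by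
        have hh := mul_le_mul_of_nonneg_right hcase.le hE0
        calc (2*(t:ℝ)+2)*(e:ℝ)*rn = ((2*(t:ℝ)+2)*rn)*(e:ℝ) := by ring
          _ ≤ (e:ℝ)*(e:ℝ) := hh
      have h3 : 4*(e:ℝ)^2 ≤ (2*(t:ℝ)+1)*rn^3 + (2*(t:ℝ)+2)*(e:ℝ)*rn := by
        have hm := mul_le_mul_of_nonneg_left RL2 hrn0
        calc 4*(e:ℝ)^2 = (2*(e:ℝ))^2 := by ring
          _ ≤ rn * (Snat:ℝ) := hCS
          _ ≤ rn * ((2*(t:ℝ)+1) * rn^2 + (2*(t:ℝ)+2)*(e:ℝ)) := hm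
          _ = (2*(t:ℝ)+1)*rn^3 + (2*(t:ℝ)+2)*(e:ℝ)*rn := by ring
      have hEE : (e:ℝ)*(e:ℝ) = (e:ℝ)^2 := by ring
      have h4 : 3*(e:ℝ)^2 ≤ (2*(t:ℝ)+1)*rn^3 := by linarith
      have hrn3 : (0:ℝ) ≤ rn^3 := by positivity
      have h4b : (2*(t:ℝ)+1)*rn^3 ≤ 3*(t:ℝ)*rn^3 :=
        mul_le_mul_of_nonneg_right (by linarith) hrn3
      have h5 : (e:ℝ)^2 ≤ (t:ℝ)*rn^3 := by linarith
      have h6 : ((c7:ℝ)*(e:ℝ))^2 ≤ ((c7:ℝ)^2*(t:ℝ))*rn^3 := by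
        have hh := mul_le_mul_of_nonneg_left h5 (sq_nonneg (c7:ℝ))
        calc ((c7:ℝ)*(e:ℝ))^2 = (c7:ℝ)^2 * (e:ℝ)^2 := by ring
          _ ≤ (c7:ℝ)^2 * ((t:ℝ)*rn^3) := hh
          _ = ((c7:ℝ)^2*(t:ℝ))*rn^3 := by ring
      have h7 : ((c7:ℝ)^2*(t:ℝ)) ≤ A := by
        rw [hA]
        push_cast
        have hnn : (0:ℝ) ≤ (c7:ℝ)*(2*(t:ℝ)+2) := by positivity
        linarith
      have h8 : ((c7:ℝ)*(e:ℝ))^2 ≤ (ε*rn^2)^2 := by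
        calc ((c7:ℝ)*(e:ℝ))^2 ≤ ((c7:ℝ)^2*(t:ℝ))*rn^3 := h6
          _ ≤ A * rn^3 := mul_le_mul_of_nonneg_right h7 (by positivity)
          _ ≤ (ε^2*rn) * rn^3 := mul_le_mul_of_nonneg_right hε2n (by positivity)
          _ = (ε*rn^2)^2 := by ring
      have h9 : (0:ℝ) ≤ (c7:ℝ)*(e:ℝ) := by positivity
      have h10 : (0:ℝ) ≤ ε*rn^2 := by positivity
      exact (pow_le_pow_iff_left₀ h9 h10 (two_ne_zero)).mp h8
  -- main chain
  rw [hS, hEs]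
  have hkey : (Snat:ℝ) - 2*(4*(t:ℝ)-1)*(e:ℝ) - ((t:ℝ)-1)*rn^2
      ≤ 2*(PFc:ℝ) + (c1:ℝ)*(2*(e:ℝ)) := by
    have h4t : (0:ℝ) ≤ 4*(t:ℝ)-1 := by linarith
    have hprod : (0:ℝ) ≤ 2*(4*(t:ℝ)-1)*(e:ℝ) :=
      mul_nonneg (mul_nonneg (by norm_num) h4t) hE0
    linarith [RL1]
  have hBP : (t.choose 2 : ℝ) * (PFc:ℝ) ≤ (NC:ℝ) := by exact_mod_cast F3
  have hBc1 : (t.choose 2 : ℝ) * (c1:ℝ) ≤ (c7:ℝ) := by exact_mod_cast F4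
  calc (1 / 2 : ℝ) * (t.choose 2 : ℝ) *
        ((Snat:ℝ) - 2 * (4 * (t : ℝ) - 1) * (e:ℝ) - ((t : ℝ) - 1) * rn ^ 2)
      ≤ (1 / 2 : ℝ) * (t.choose 2 : ℝ) * (2*(PFc:ℝ) + (c1:ℝ)*(2*(e:ℝ))) := by
        exact mul_le_mul_of_nonneg_left hkey (by positivity)
    _ = (t.choose 2 : ℝ) * (PFc:ℝ) + ((t.choose 2 : ℝ) * (c1:ℝ)) * (e:ℝ) := by ring
    _ ≤ (NC:ℝ) + (c7:ℝ)*(e:ℝ) := by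
        have := mul_le_mul_of_nonneg_right hBc1 hE0
        linarith
    _ ≤ (NC:ℝ) + ε * rn^2 := by linarith [hc7e]
end

section
/- Let T be a tree on t vertices and let G be a bipartite graph with parts X and Y having at least one edge. Assume that for every edge xy ∈ E(G) with x ∈ X and y ∈ Y, the vertex y has at least t neighbors z such that |N(x) ∩ N(z)| ≥ t. Then G contains K_2 □ T as a subgraph. -/
open SimpleGraph

/-- Invariant for the partial double embedding of the tree `T` into `G`. -/
def EmbInv {V : Type*} {t : ℕ} (G : SimpleGraph V) (T : SimpleGraph (Fin t))
    (S : Set (Fin t)) (p q : Fin t → V) : Prop :=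
  (∀ i ∈ S, G.Adj (p i) (q i)) ∧
  (∀ i ∈ S, ∀ j ∈ S, T.Adj i j → G.Adj (p i) (p j) ∧ G.Adj (q i) (q j)) ∧
  (∀ i ∈ S, ∀ j ∈ S, p i = p j → i = j) ∧
  (∀ i ∈ S, ∀ j ∈ S, q i = q j → i = j) ∧
  (∀ i ∈ S, ∀ j ∈ S, p i ≠ q j) ∧
  (∀ a ∈ S, ∀ b ∈ S, ∃ w : T.Walk a b, ∀ v ∈ w.support, v ∈ S)

/-- From a walk entering the complement of `S` one finds a crossing edge. -/
lemma cross_lemma {t : ℕ} {T : SimpleGraph (Fin t)} {S : Set (Fin t)} :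
    ∀ {a b : Fin t}, T.Walk a b → a ∈ S → b ∉ S →
      ∃ i ∈ S, ∃ j, j ∉ S ∧ T.Adj i j := by
  intro a b w
  induction w with
  | nil => intro ha hb; exact absurd ha hb
  | @cons u c b h p ih =>
    intro ha hb
    by_cases hc : c ∈ S
    · exact ih hc hb
    · exact ⟨u, ha, c, hc, h⟩

/-- In an acyclic graph, a vertex outside a connected set `S` has at most one
neighbour in `S`. -/
lemma unique_nbr {t : ℕ} {T : SimpleGraph (Fin t)} (hac : T.IsAcyclic)
    {S : Set (Fin t)}
    (hconn : ∀ a ∈ S, ∀ b ∈ S, ∃ w : T.Walk a b, ∀ v ∈ w.support, v ∈ S)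
    {j i₁ i₂ : Fin t} (hj : j ∉ S) (h1 : i₁ ∈ S) (h2 : i₂ ∈ S)
    (a1 : T.Adj j i₁) (a2 : T.Adj j i₂) : i₁ = i₂ := by
  by_contra hne
  obtain ⟨w, hw⟩ := hconn i₁ h1 i₂ h2
  set P : T.Path i₁ i₂ := w.toPath with hP
  have hjP : j ∉ (P : T.Walk i₁ i₂).support := by
    intro hmem
    exact hj (hw j (w.support_toPath_subset hmem))
  have hQpath : (SimpleGraph.Walk.cons a1 (P : T.Walk i₁ i₂)).IsPath :=
    P.prop.cons hjP
  set Q : T.Path j i₂ := ⟨SimpleGraph.Walk.cons a1 (P : T.Walk i₁ i₂), hQpath⟩ with hQ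
  have hedge : s(i₂, j) ∉ (Q : T.Walk j i₂).edges := by
    simp only [hQ, SimpleGraph.Walk.edges_cons, List.mem_cons]
    rintro (heq | hmem)
    · rw [Sym2.eq_iff] at heq
      rcases heq with ⟨h', h''⟩ | ⟨h', _⟩
      · exact a2.ne h'.symm
      · exact hne h'.symm
    · exact hjP ((P : T.Walk i₁ i₂).snd_mem_support_of_mem_edges hmem)
  exact hac _ (Q.cons_isCycle a2.symm hedge)

/-- Counting: the vertices used on one side of the bipartition are at most `|S|`. -/
lemma side_count {V : Type*} {t : ℕ} {W : Set V} {S : Set (Fin t)} {p q : Fin t → V}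
    (h : ∀ i ∈ S, (p i ∈ W ∧ q i ∉ W) ∨ (p i ∉ W ∧ q i ∈ W)) :
    ((p '' S ∪ q '' S) ∩ W).ncard ≤ S.ncard := by
  classical
  set e : Fin t → V := fun i => if p i ∈ W then p i else q i with he
  have hsub : (p '' S ∪ q '' S) ∩ W ⊆ e '' S := by
    rintro v ⟨hv | hv, hvW⟩
    · obtain ⟨i, hi, rfl⟩ := hv
      exact ⟨i, hi, by simp [he, hvW]⟩
    · obtain ⟨i, hi, rfl⟩ := hv
      refine ⟨i, hi, ?_⟩
      rcases h i hi with ⟨_, h2⟩ | ⟨h1, _⟩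
      · exact absurd hvW h2
      · simp [he, h1]
  calc ((p '' S ∪ q '' S) ∩ W).ncard ≤ (e '' S).ncard :=
        Set.ncard_le_ncard hsub (Set.toFinite _)
    _ ≤ S.ncard := Set.ncard_image_le (Set.toFinite _)

/-- Picking a fresh rung: given an edge `xy` of `G` and fewer than `t` used rungs,
find a fresh pair `z, w` forming a `C₄` with `x, y`. -/
lemma pick {V : Type*} [Fintype V] {t : ℕ} {G : SimpleGraph V} {X Y : Set V}
    (hdisj : Disjoint X Y)
    (hbip : ∀ ⦃u v : V⦄, G.Adj u v → (u ∈ X ∧ v ∈ Y) ∨ (u ∈ Y ∧ v ∈ X))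
    (hcond : ∀ ⦃x y : V⦄, x ∈ X → y ∈ Y → G.Adj x y →
      t ≤ {z : V | G.Adj y z ∧ t ≤ (G.neighborSet x ∩ G.neighborSet z).ncard}.ncard)
    {x y : V} (hx : x ∈ X) (hy : y ∈ Y) (hxy : G.Adj x y)
    {S : Set (Fin t)} {p q : Fin t → V} (hS : S.ncard < t)
    (hedge : ∀ i ∈ S, G.Adj (p i) (q i)) :
    ∃ z w : V, G.Adj y z ∧ G.Adj x w ∧ G.Adj z w ∧ z ∈ X ∧ w ∈ Y ∧
      z ∉ (p '' S ∪ q '' S) ∧ w ∉ (p '' S ∪ q '' S) := by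
  classical
  set U : Set V := p '' S ∪ q '' S with hU
  have hsideX : ∀ i ∈ S, (p i ∈ X ∧ q i ∉ X) ∨ (p i ∉ X ∧ q i ∈ X) := by
    intro i hi
    rcases hbip (hedge i hi) with ⟨h1, h2⟩ | ⟨h1, h2⟩
    · exact Or.inl ⟨h1, fun hh => Set.disjoint_left.mp hdisj hh h2⟩
    · exact Or.inr ⟨fun hh => Set.disjoint_left.mp hdisj hh h1, h2⟩
  have hsideY : ∀ i ∈ S, (p i ∈ Y ∧ q i ∉ Y) ∨ (p i ∉ Y ∧ q i ∈ Y) := by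
    intro i hi
    rcases hbip (hedge i hi) with ⟨h1, h2⟩ | ⟨h1, h2⟩
    · exact Or.inr ⟨fun hh => Set.disjoint_left.mp hdisj h1 hh, h2⟩
    · exact Or.inl ⟨h1, fun hh => Set.disjoint_left.mp hdisj h2 hh⟩
  set Z : Set V := {z : V | G.Adj y z ∧ t ≤ (G.neighborSet x ∩ G.neighborSet z).ncard}
    with hZdef
  have hZ : t ≤ Z.ncard := hcond hx hy hxy
  have hZX : Z ⊆ X := by
    intro z hz
    rcases hbip hz.1 with ⟨h1, _⟩ | ⟨_, h2⟩
    · exact absurd h1 (Set.disjoint_right.mp hdisj hy)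
    · exact h2
  have hcount : (U ∩ X).ncard < Z.ncard :=
    lt_of_le_of_lt (side_count hsideX) (lt_of_lt_of_le hS hZ)
  obtain ⟨z, hzZ, hzU⟩ := Set.exists_mem_notMem_of_ncard_lt_ncard hcount (Set.toFinite _)
  have hzX : z ∈ X := hZX hzZ
  have hzU' : z ∉ U := fun hh => hzU ⟨hh, hzX⟩
  set W' : Set V := G.neighborSet x ∩ G.neighborSet z with hW'
  have hW : t ≤ W'.ncard := hzZ.2
  have hWY : W' ⊆ Y := by
    intro w hw
    rcases hbip hw.1 with ⟨_, h2⟩ | ⟨h1, _⟩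
    · exact h2
    · exact absurd h1 (Set.disjoint_left.mp hdisj hx)
  have hcount' : (U ∩ Y).ncard < W'.ncard :=
    lt_of_le_of_lt (side_count hsideY) (lt_of_lt_of_le hS hW)
  obtain ⟨w, hwW, hwU⟩ := Set.exists_mem_notMem_of_ncard_lt_ncard hcount' (Set.toFinite _)
  have hwY : w ∈ Y := hWY hwW
  have hwU' : w ∉ U := fun hh => hwU ⟨hh, hwY⟩
  exact ⟨z, w, hzZ.1, hwW.1, hwW.2, hzX, hwY, hzU', hwU'⟩

theorem embed_K2_tree {V : Type*} [Fintype V] (t : ℕ) (T : SimpleGraph (Fin t))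
    (hT : T.IsTree) (G : SimpleGraph V) (X Y : Set V)
    (hdisj : Disjoint X Y) (hcover : X ∪ Y = Set.univ)
    (hbip : ∀ ⦃u v : V⦄, G.Adj u v → (u ∈ X ∧ v ∈ Y) ∨ (u ∈ Y ∧ v ∈ X))
    (hne : G.edgeSet.Nonempty)
    (hcond : ∀ ⦃x y : V⦄, x ∈ X → y ∈ Y → G.Adj x y →
      t ≤ {z : V | G.Adj y z ∧ t ≤ (G.neighborSet x ∩ G.neighborSet z).ncard}.ncard) :
    ContainsCopy ((⊤ : SimpleGraph (Fin 2)).boxProd T) G := by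
  classical
  -- Extension step
  have extend : ∀ (S : Set (Fin t)) (p q : Fin t → V), EmbInv G T S p q → S.ncard < t →
      ∀ i j : Fin t, i ∈ S → j ∉ S → T.Adj i j →
      ∃ p' q', EmbInv G T (insert j S) p' q' := by
    intro S p q hInv hS i j hi hj hij
    obtain ⟨h1, h2, h3, h4, h5, h6⟩ := hInv
    have hnew : ∃ pj qj : V, G.Adj pj qj ∧ G.Adj (p i) pj ∧ G.Adj (q i) qj ∧
        pj ∉ (p '' S ∪ q '' S) ∧ qj ∉ (p '' S ∪ q '' S) ∧ pj ≠ qj := by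
      rcases hbip (h1 i hi) with ⟨hpX, hqY⟩ | ⟨hpY, hqX⟩
      · obtain ⟨z, w, hyz, hxw, hzw, hzX, hwY, hzU, hwU⟩ :=
          pick hdisj hbip hcond hpX hqY (h1 i hi) hS h1
        exact ⟨w, z, hzw.symm, hxw, hyz, hwU, hzU,
          fun hh => Set.disjoint_left.mp hdisj (hh ▸ hzX) hwY⟩
      · obtain ⟨z, w, hyz, hxw, hzw, hzX, hwY, hzU, hwU⟩ :=
          pick hdisj hbip hcond hqX hpY ((h1 i hi).symm) hS h1
        exact ⟨z, w, hzw, hyz, hxw, hzU, hwU,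
          fun hh => Set.disjoint_left.mp hdisj hzX (hh ▸ hwY)⟩
    obtain ⟨pj, qj, hr1, hr2, hr3, hpU, hqU, hpqne⟩ := hnew
    set p' : Fin t → V := Function.update p j pj with hp'
    set q' : Fin t → V := Function.update q j qj with hq'
    have hpval : ∀ k ∈ S, p' k = p k := by
      intro k hk
      apply Function.update_of_ne
      intro hh
      subst hh
      exact hj hk
    have hqval : ∀ k ∈ S, q' k = q k := by
      intro k hk
      apply Function.update_of_ne
      intro hh
      subst hh
      exact hj hk
    have hpj : p' j = pj := Function.update_self _ _ _
    have hqj : q' j = qj := Function.update_self _ _ _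
    have hpnotS : ∀ k ∈ S, p k ≠ pj ∧ q k ≠ pj := by
      intro k hk
      constructor
      · exact fun hh => hpU (Or.inl ⟨k, hk, hh⟩)
      · exact fun hh => hpU (Or.inr ⟨k, hk, hh⟩)
    have hqnotS : ∀ k ∈ S, p k ≠ qj ∧ q k ≠ qj := by
      intro k hk
      constructor
      · exact fun hh => hqU (Or.inl ⟨k, hk, hh⟩)
      · exact fun hh => hqU (Or.inr ⟨k, hk, hh⟩)
    have huniq : ∀ k ∈ S, T.Adj j k → k = i :=
      fun k hk hjk => unique_nbr hT.IsAcyclic h6 hj hk hi hjk hij.symm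
    refine ⟨p', q', ?_, ?_, ?_, ?_, ?_, ?_⟩
    · rintro k (rfl | hk)
      · rw [hpj, hqj]; exact hr1
      · rw [hpval k hk, hqval k hk]; exact h1 k hk
    · rintro k (rfl | hk) l (rfl | hl) hkl
      · exact absurd hkl T.irrefl
      · have : l = i := huniq l hl hkl
        subst this
        rw [hpj, hqj, hpval l hl, hqval l hl]
        exact ⟨hr2.symm, hr3.symm⟩
      · have : k = i := huniq k hk hkl.symm
        subst this
        rw [hpj, hqj, hpval k hk, hqval k hk]
        exact ⟨hr2, hr3⟩
      · rw [hpval k hk, hqval k hk, hpval l hl, hqval l hl]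
        exact h2 k hk l hl hkl
    · rintro k (rfl | hk) l (rfl | hl) hkl
      · rfl
      · rw [hpj, hpval l hl] at hkl
        exact absurd hkl.symm (hpnotS l hl).1
      · rw [hpj, hpval k hk] at hkl
        exact absurd hkl (hpnotS k hk).1
      · rw [hpval k hk, hpval l hl] at hkl
        exact h3 k hk l hl hkl
    · rintro k (rfl | hk) l (rfl | hl) hkl
      · rfl
      · rw [hqj, hqval l hl] at hkl
        exact absurd hkl.symm (hqnotS l hl).2
      · rw [hqj, hqval k hk] at hkl
        exact absurd hkl (hqnotS k hk).2
      · rw [hqval k hk, hqval l hl] at hkl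
        exact h4 k hk l hl hkl
    · rintro k (rfl | hk) l (rfl | hl)
      · rw [hpj, hqj]; exact hpqne
      · rw [hpj, hqval l hl]
        exact fun hh => (hpnotS l hl).2 hh.symm
      · rw [hqj, hpval k hk]
        exact (hqnotS k hk).1
      · rw [hpval k hk, hqval l hl]
        exact h5 k hk l hl
    · rintro a (rfl | ha) b (rfl | hb)
      · exact ⟨SimpleGraph.Walk.nil, by simp⟩
      · obtain ⟨w, hw⟩ := h6 i hi b hb
        refine ⟨SimpleGraph.Walk.cons hij.symm w, ?_⟩
        intro v hv
        rw [SimpleGraph.Walk.support_cons, List.mem_cons] at hv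
        rcases hv with rfl | hv
        · exact Set.mem_insert _ _
        · exact Set.mem_insert_of_mem _ (hw v hv)
      · obtain ⟨w, hw⟩ := h6 a ha i hi
        refine ⟨w.concat hij, ?_⟩
        intro v hv
        simp only [SimpleGraph.Walk.support_concat, List.concat_eq_append,
          List.mem_append, List.mem_singleton] at hv
        rcases hv with hv | rfl
        · exact Set.mem_insert_of_mem _ (hw v hv)
        · exact Set.mem_insert _ _
      · obtain ⟨w, hw⟩ := h6 a ha b hb
        exact ⟨w, fun v hv => Set.mem_insert_of_mem _ (hw v hv)⟩
  -- Main induction: grow the embedding to all of `Fin t`.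
  have key : ∀ n : ℕ, ∀ (S : Set (Fin t)) (p q : Fin t → V),
      Sᶜ.ncard = n → S.Nonempty → EmbInv G T S p q →
      ∃ p' q', EmbInv G T Set.univ p' q' := by
    intro n
    induction n with
    | zero =>
      intro S p q hc _ hInv
      have hcompl : Sᶜ = ∅ := (Set.ncard_eq_zero (Set.toFinite _)).mp hc
      have : S = Set.univ := by
        rw [← Set.compl_empty_iff.mp hcompl]
      exact ⟨p, q, this ▸ hInv⟩
    | succ n ih =>
      intro S p q hc hSne hInv
      have hScompl : Sᶜ.Nonempty := by
        rw [← Set.ncard_pos (Set.toFinite _)] at *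
        omega
      obtain ⟨b, hb⟩ := hScompl
      obtain ⟨a, ha⟩ := hSne
      obtain ⟨w⟩ := hT.isConnected.preconnected a b
      obtain ⟨i, hi, j, hj, hij⟩ := cross_lemma w ha hb
      have hcard : S.ncard < t := by
        have htotal : S.ncard + Sᶜ.ncard = t := by
          have := Set.ncard_add_ncard_compl S
          simpa using this
        omega
      obtain ⟨p', q', hInv'⟩ := extend S p q hInv hcard i j hi hj hij
      have hc' : (insert j S)ᶜ.ncard = n := by
        have hins : (insert j S)ᶜ = Sᶜ \ {j} := by
          ext v
          simp only [Set.mem_compl_iff, Set.mem_insert_iff, Set.mem_diff,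
            Set.mem_singleton_iff, not_or]
          tauto
        rw [hins, Set.ncard_diff_singleton_of_mem (show j ∈ Sᶜ from hj), hc]
        omega
      exact ih (insert j S) p' q' hc' ⟨j, Set.mem_insert _ _⟩ hInv'
  -- Base case: a single rung.
  have hnonempty : Nonempty (Fin t) := hT.isConnected.nonempty
  obtain ⟨r⟩ := hnonempty
  obtain ⟨e, he⟩ := hne
  induction e using Sym2.ind with
  | _ x0 y0 =>
  rw [SimpleGraph.mem_edgeSet] at he
  have hbase : EmbInv G T {r} (fun _ => x0) (fun _ => y0) := by
    refine ⟨?_, ?_, ?_, ?_, ?_, ?_⟩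
    · intro i _; exact he
    · rintro i rfl j rfl hij; exact absurd hij T.irrefl
    · rintro i rfl j rfl _; rfl
    · rintro i rfl j rfl _; rfl
    · rintro i rfl j rfl; exact he.ne
    · rintro a rfl b rfl; exact ⟨SimpleGraph.Walk.nil, by simp⟩
  obtain ⟨p, q, h1, h2, h3, h4, h5, _⟩ :=
    key ({r} : Set (Fin t))ᶜ.ncard {r} _ _ rfl ⟨r, rfl⟩ hbase
  -- Assemble the embedding.
  refine ⟨fun ai => if ai.1 = 0 then p ai.2 else q ai.2, ?_, ?_⟩
  · rintro ⟨a, i⟩ ⟨b, j⟩ hab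
    fin_cases a <;> fin_cases b
    · exact congrArg (Prod.mk _) (h3 i (Set.mem_univ _) j (Set.mem_univ _) hab)
    · exact absurd hab (h5 i (Set.mem_univ _) j (Set.mem_univ _))
    · exact absurd hab (fun hh => h5 j (Set.mem_univ _) i (Set.mem_univ _) hh.symm)
    · exact congrArg (Prod.mk _) (h4 i (Set.mem_univ _) j (Set.mem_univ _) hab)
  · rintro ⟨a, i⟩ ⟨b, j⟩ hab
    rw [SimpleGraph.boxProd_adj] at hab
    rcases hab with ⟨hadj, rfl⟩ | ⟨hadj, rfl⟩
    · rw [SimpleGraph.top_adj] at hadj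
      fin_cases a <;> fin_cases b
      · exact absurd rfl hadj
      · exact h1 i (Set.mem_univ _)
      · exact (h1 i (Set.mem_univ _)).symm
      · exact absurd rfl hadj
    · fin_cases a
      · exact (h2 i (Set.mem_univ _) j (Set.mem_univ _) hadj).1
      · exact (h2 i (Set.mem_univ _) j (Set.mem_univ _) hadj).2
end

section
/- Let t be a positive integer and set s = ⌊(t+1)/2⌋. Let G₁ be a graph containing no subgraph isomorphic to the 4-cycle C_4, and let G = G₁(s) be the s-blow-up of G₁. Then G contains no subgraph isomorphic to B_t. -/
open SimpleGraph

/-- The `s`-blow-up of a graph: each vertex is replaced by an independent set of size `s`,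
and each edge by a complete bipartite graph between the corresponding sets. -/
def blowup {α : Type*} (G : SimpleGraph α) (s : ℕ) : SimpleGraph (α × Fin s) where
  Adj x y := G.Adj x.1 y.1
  symm := ⟨fun _ _ h => G.adj_symm h⟩
  loopless := ⟨fun x h => G.irrefl h⟩

theorem blowup_Bt_free (t : ℕ) (ht : 1 ≤ t) {α : Type*} (G₁ : SimpleGraph α)
    (hfree : ¬ ContainsCopy (cycleGraph 4) G₁) :
    ¬ ContainsCopy (Bgraph t) (blowup G₁ ((t + 1) / 2)) := by
  set s := (t + 1) / 2 with hs
  rintro ⟨f, hinj, hadj⟩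
  -- key adjacencies in Bgraph t
  have e1 : ∀ j : Fin t, (Bgraph t).Adj (0, Sum.inr j) (1, Sum.inr j) := by
    intro j
    simp [Bgraph, boxProd_adj]
  have e2 : (Bgraph t).Adj (0, Sum.inl 0) (1, Sum.inl 0) := by
    simp [Bgraph, boxProd_adj]
  have e3 : ∀ j : Fin t, (Bgraph t).Adj (0, Sum.inl 0) (0, Sum.inr j) := by
    intro j
    simp [Bgraph, boxProd_adj]
  have e4 : ∀ j : Fin t, (Bgraph t).Adj (1, Sum.inl 0) (1, Sum.inr j) := by
    intro j
    simp [Bgraph, boxProd_adj]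
  set a : α := (f (0, Sum.inl 0)).1 with ha
  set b : α := (f (1, Sum.inl 0)).1 with hb
  set x : Fin t → α := fun j => (f (0, Sum.inr j)).1 with hx
  set y : Fin t → α := fun j => (f (1, Sum.inr j)).1 with hy
  have hab : G₁.Adj a b := hadj e2
  have hax : ∀ j, G₁.Adj a (x j) := fun j => hadj (e3 j)
  have hby : ∀ j, G₁.Adj b (y j) := fun j => hadj (e4 j)
  have hxy : ∀ j, G₁.Adj (x j) (y j) := fun j => hadj (e1 j)
  -- each leaf collapses
  have key : ∀ j : Fin t, x j = b ∨ y j = a := by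
    intro j
    by_contra h
    push_neg at h
    obtain ⟨h4, h5⟩ := h
    have h1 : a ≠ x j := (hax j).ne
    have h2 : x j ≠ y j := (hxy j).ne
    have h3 : b ≠ y j := (hby j).ne
    have h6 : a ≠ b := hab.ne
    apply hfree
    refine ⟨![a, x j, y j, b], ?_, ?_⟩
    · intro i k hik
      fin_cases i <;> fin_cases k <;>
        first
        | rfl
        | exact absurd hik h1
        | exact absurd hik h1.symm
        | exact absurd hik h2
        | exact absurd hik h2.symm
        | exact absurd hik h3
        | exact absurd hik h3.symm
        | exact absurd hik h4
        | exact absurd hik h4.symm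
        | exact absurd hik h5
        | exact absurd hik h5.symm
        | exact absurd hik h6
        | exact absurd hik h6.symm
    · intro i k hik
      fin_cases i <;> fin_cases k <;>
        first
        | exact absurd hik (by decide)
        | exact hab
        | exact hab.symm
        | exact hax j
        | exact (hax j).symm
        | exact hby j
        | exact (hby j).symm
        | exact hxy j
        | exact (hxy j).symm
  classical
  set A : Finset (Fin t) := Finset.univ.filter (fun j => x j = b) with hA
  set B : Finset (Fin t) := Finset.univ.filter (fun j => y j = a) with hB
  have hcover : t ≤ A.card + B.card := by
    have : (Finset.univ : Finset (Fin t)) ⊆ A ∪ B := by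
      intro j _
      rcases key j with h | h
      · exact Finset.mem_union_left _ (Finset.mem_filter.2 ⟨Finset.mem_univ _, h⟩)
      · exact Finset.mem_union_right _ (Finset.mem_filter.2 ⟨Finset.mem_univ _, h⟩)
    calc t = (Finset.univ : Finset (Fin t)).card := (Finset.card_fin t).symm
      _ ≤ (A ∪ B).card := Finset.card_le_card this
      _ ≤ A.card + B.card := Finset.card_union_le _ _
  have hs1 : 1 ≤ s := by omega
  have hAcard : A.card ≤ s - 1 := by
    have := Finset.card_le_card_of_injOn (fun j => (f (0, Sum.inr j)).2)
      (s := A) (t := (Finset.univ : Finset (Fin s)).erase (f (1, Sum.inl 0)).2)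
      (fun j hj => by
        refine Finset.mem_erase.2 ⟨?_, Finset.mem_univ _⟩
        intro hsnd
        have hfst : (f (0, Sum.inr j)).1 = (f (1, Sum.inl 0)).1 :=
          (Finset.mem_filter.1 hj).2
        have : f (0, Sum.inr j) = f (1, Sum.inl 0) := Prod.ext hfst hsnd
        have := hinj this
        simp at this)
      (fun j hj k hk hjk => by
        have hj' : x j = b := (Finset.mem_filter.1 hj).2
        have hk' : x k = b := (Finset.mem_filter.1 hk).2
        have : f (0, Sum.inr j) = f (0, Sum.inr k) :=
          Prod.ext (hj'.trans hk'.symm) hjk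
        have := hinj this
        simpa using this)
    simpa using this
  have hBcard : B.card ≤ s - 1 := by
    have := Finset.card_le_card_of_injOn (fun j => (f (1, Sum.inr j)).2)
      (s := B) (t := (Finset.univ : Finset (Fin s)).erase (f (0, Sum.inl 0)).2)
      (fun j hj => by
        refine Finset.mem_erase.2 ⟨?_, Finset.mem_univ _⟩
        intro hsnd
        have hfst : (f (1, Sum.inr j)).1 = (f (0, Sum.inl 0)).1 :=
          (Finset.mem_filter.1 hj).2
        have : f (1, Sum.inr j) = f (0, Sum.inl 0) := Prod.ext hfst hsnd
        have := hinj this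
        simp at this)
      (fun j hj k hk hjk => by
        have hj' : y j = a := (Finset.mem_filter.1 hj).2
        have hk' : y k = a := (Finset.mem_filter.1 hk).2
        have : f (1, Sum.inr j) = f (1, Sum.inr k) :=
          Prod.ext (hj'.trans hk'.symm) hjk
        have := hinj this
        simpa using this)
    simpa using this
  omega
end

section
/- Let t be a positive integer, a = ⌊(t+1)/2⌋ and b = ⌈(t+1)/2⌉. Let G₁ be a bipartite graph with parts X and Y containing no subgraph isomorphic to the 4-cycle C_4, and let G = G₁(a, b) be the (a, b)-blow-up of G₁. Then G is a bipartite graph containing no subgraph isomorphic to B_t. -/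
open SimpleGraph

/-- The `(a, b)`-blow-up of a bipartite graph on `α ⊕ β`: each left vertex is replaced by an
independent set of size `a`, each right vertex by one of size `b`, and each edge by a complete
bipartite graph between the corresponding sets. -/
def bipBlowup {α β : Type*} (G : SimpleGraph (α ⊕ β)) (a b : ℕ) :
    SimpleGraph ((α × Fin a) ⊕ (β × Fin b)) where
  Adj x y := G.Adj (Sum.map Prod.fst Prod.fst x) (Sum.map Prod.fst Prod.fst y)
  symm := ⟨fun _ _ h => G.adj_symm h⟩
  loopless := ⟨fun _ h => G.irrefl h⟩

lemma containsC4 {V : Type*} (G : SimpleGraph V) {a b c d : V}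
    (hab : G.Adj a b) (hbc : G.Adj b c) (hcd : G.Adj c d) (hda : G.Adj d a)
    (hac : a ≠ c) (hbd : b ≠ d) : ContainsCopy (cycleGraph 4) G := by
  have h1 := hab.ne; have h2 := hbc.ne; have h3 := hcd.ne; have h4 := hda.ne
  have hba := hab.symm; have hcb := hbc.symm; have hdc := hcd.symm; have had := hda.symm
  refine ⟨![a, b, c, d], ?_, ?_⟩
  · intro i j hij
    fin_cases i <;> fin_cases j <;> simp_all
  · intro i j hij
    rw [cycleGraph_adj] at hij
    fin_cases i <;> fin_cases j <;> first | exact absurd hij (by decide) | simp_all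

theorem bipBlowup_Bt_free (t : ℕ) (ht : 1 ≤ t) {α β : Type*} (G₁ : SimpleGraph (α ⊕ β))
    (hbip : ∀ ⦃u v : α ⊕ β⦄, G₁.Adj u v →
      (u.isLeft ∧ v.isRight) ∨ (u.isRight ∧ v.isLeft))
    (hfree : ¬ ContainsCopy (cycleGraph 4) G₁) :
    (∀ ⦃x y : (α × Fin ((t + 1) / 2)) ⊕ (β × Fin ((t + 2) / 2))⦄,
        (bipBlowup G₁ ((t + 1) / 2) ((t + 2) / 2)).Adj x y →
        (x.isLeft ∧ y.isRight) ∨ (x.isRight ∧ y.isLeft)) ∧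
    ¬ ContainsCopy (Bgraph t) (bipBlowup G₁ ((t + 1) / 2) ((t + 2) / 2)) := by
  set a := (t + 1) / 2 with ha
  set b := (t + 2) / 2 with hb
  set π : (α × Fin a) ⊕ (β × Fin b) → α ⊕ β := Sum.map Prod.fst Prod.fst with hπ
  have hadj_def : ∀ x y, (bipBlowup G₁ a b).Adj x y ↔ G₁.Adj (π x) (π y) := fun _ _ => Iff.rfl
  constructor
  · intro x y h
    have h' := hbip ((hadj_def x y).1 h)
    rcases x with ⟨x, _⟩ | ⟨x, _⟩ <;> rcases y with ⟨y, _⟩ | ⟨y, _⟩ <;>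
      simp only [hπ, Sum.map_inl, Sum.map_inr, Sum.isLeft_inl, Sum.isRight_inl,
        Sum.isLeft_inr, Sum.isRight_inr] at h' ⊢ <;> tauto
  · rintro ⟨f, hinj, hadj⟩
    classical
    -- named vertices
    set c0 := f (0, Sum.inl 0) with hc0
    set c1 := f (1, Sum.inl 0) with hc1
    set u : Fin t → _ := fun i => f (0, Sum.inr i) with hu
    set v : Fin t → _ := fun i => f (1, Sum.inr i) with hv
    -- adjacencies in Bgraph
    have bA : (Bgraph t).Adj (0, Sum.inl 0) (1, Sum.inl 0) := by
      simp [Bgraph, boxProd_adj]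
    have bu : ∀ i : Fin t, (Bgraph t).Adj (0, Sum.inl 0) (0, Sum.inr i) := by
      intro i; simp [Bgraph, boxProd_adj]
    have bv : ∀ i : Fin t, (Bgraph t).Adj (1, Sum.inl 0) (1, Sum.inr i) := by
      intro i; simp [Bgraph, boxProd_adj]
    have buv : ∀ i : Fin t, (Bgraph t).Adj (0, Sum.inr i) (1, Sum.inr i) := by
      intro i; simp [Bgraph, boxProd_adj]
    set p0 := π c0 with hp0
    set p1 := π c1 with hp1
    have h01 : G₁.Adj p0 p1 := hadj bA
    have hu' : ∀ i, G₁.Adj p0 (π (u i)) := fun i => hadj (bu i)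
    have hv' : ∀ i, G₁.Adj p1 (π (v i)) := fun i => hadj (bv i)
    have huv' : ∀ i, G₁.Adj (π (u i)) (π (v i)) := fun i => hadj (buv i)
    -- key claim
    have key : ∀ i : Fin t, π (u i) = p1 ∨ π (v i) = p0 := by
      intro i
      by_contra hcon
      push_neg at hcon
      exact hfree (containsC4 G₁ (hu' i) (huv' i) (hv' i).symm h01.symm
        (Ne.symm hcon.2) hcon.1)
    -- sides
    have hside := hbip h01
    -- the selection
    set h : Fin t → (α × Fin a) ⊕ (β × Fin b) :=
      fun i => if π (u i) = p1 then u i else v i with hh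
    have hhπ : ∀ i, π (h i) = p0 ∨ π (h i) = p1 := by
      intro i
      by_cases hc : π (u i) = p1
      · right; simp [hh, hc]
      · left
        have := (key i).resolve_left hc
        simp [hh, hc, this]
    have hhinj : Function.Injective h := by
      intro i j hij
      simp only [hh] at hij
      split_ifs at hij <;>
        simpa [hu, hv, Prod.ext_iff] using hinj hij
    have hhc0 : ∀ i, h i ≠ c0 := by
      intro i heq
      simp only [hh] at heq
      split_ifs at heq <;> simpa [hu, hv, hc0, Prod.ext_iff] using hinj heq
    have hhc1 : ∀ i, h i ≠ c1 := by
      intro i heq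
      simp only [hh] at heq
      split_ifs at heq <;> simpa [hu, hv, hc1, Prod.ext_iff] using hinj heq
    have hc01 : c0 ≠ c1 := by
      intro heq
      simpa [hc0, hc1, Prod.ext_iff] using hinj heq
    -- projection to indices
    set q : (α × Fin a) ⊕ (β × Fin b) → Fin a ⊕ Fin b := Sum.map Prod.snd Prod.snd with hq
    have qkey : ∀ w w' : (α × Fin a) ⊕ (β × Fin b),
        (π w = p0 ∨ π w = p1) → (π w' = p0 ∨ π w' = p1) → q w = q w' → w = w' := by
      intro w w' hw hw' hqw
      rcases w with ⟨x, j⟩ | ⟨x, j⟩ <;> rcases w' with ⟨x', j'⟩ | ⟨x', j'⟩ <;>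
        simp only [hq, hπ, Sum.map_inl, Sum.map_inr, Sum.inl.injEq, Sum.inr.injEq] at hw hw' hqw ⊢
      · rcases hside with ⟨hL0, hR1⟩ | ⟨hR0, hL1⟩
        · have e1 : Sum.inl x = p0 :=
            hw.resolve_right (fun h => by rw [← h] at hR1; simp at hR1)
          have e2 : Sum.inl x' = p0 :=
            hw'.resolve_right (fun h => by rw [← h] at hR1; simp at hR1)
          have := Sum.inl_injective (e1.trans e2.symm)
          simp [this, hqw]
        · have e1 : Sum.inl x = p1 :=
            hw.resolve_left (fun h => by rw [← h] at hR0; simp at hR0)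
          have e2 : Sum.inl x' = p1 :=
            hw'.resolve_left (fun h => by rw [← h] at hR0; simp at hR0)
          have := Sum.inl_injective (e1.trans e2.symm)
          simp [this, hqw]
      · exact absurd hqw (by simp)
      · exact absurd hqw (by simp)
      · rcases hside with ⟨hL0, hR1⟩ | ⟨hR0, hL1⟩
        · have e1 : Sum.inr x = p1 :=
            hw.resolve_left (fun h => by rw [← h] at hL0; simp at hL0)
          have e2 : Sum.inr x' = p1 :=
            hw'.resolve_left (fun h => by rw [← h] at hL0; simp at hL0)
          have := Sum.inr_injective (e1.trans e2.symm)
          simp [this, hqw]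
        · have e1 : Sum.inr x = p0 :=
            hw.resolve_right (fun h => by rw [← h] at hL1; simp at hL1)
          have e2 : Sum.inr x' = p0 :=
            hw'.resolve_right (fun h => by rw [← h] at hL1; simp at hL1)
          have := Sum.inr_injective (e1.trans e2.symm)
          simp [this, hqw]
    -- big injection
    set e : Fin t ⊕ Bool → (α × Fin a) ⊕ (β × Fin b) :=
      fun z => Sum.elim h (fun s => if s then c1 else c0) z with he
    have heπ : ∀ z, π (e z) = p0 ∨ π (e z) = p1 := by
      rintro (i | s)
      · exact hhπ i
      · cases s
        · left; simp [he, hp0]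
        · right; simp [he, hp1]
    have heinj : Function.Injective e := by
      rintro (i | s) (j | s') heq
      · exact congrArg Sum.inl (hhinj heq)
      · cases s' <;> simp only [he, Sum.elim_inl, Sum.elim_inr, if_true, if_false] at heq
        · exact absurd heq (hhc0 i)
        · exact absurd heq (hhc1 i)
      · cases s <;> simp only [he, Sum.elim_inl, Sum.elim_inr, if_true, if_false] at heq
        · exact absurd heq.symm (hhc0 j)
        · exact absurd heq.symm (hhc1 j)
      · cases s <;> cases s' <;>
          simp only [he, Sum.elim_inr, if_true, if_false] at heq <;>
          first | rfl | exact absurd heq hc01 | exact absurd heq.symm hc01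
    have hqe : Function.Injective (q ∘ e) := by
      intro z z' heq
      exact heinj (qkey _ _ (heπ z) (heπ z') heq)
    have hcard := Fintype.card_le_of_injective _ hqe
    simp only [Fintype.card_sum, Fintype.card_fin, Fintype.card_bool] at hcard
    omega
end
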